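/- arXiv:1806.02506 — 6 statements merged into one kernel-verified Lean document; each statement's English description precedes it below -/
import Mathlib

section
/- In ℤ⟦q⟧ one has the identity F(q) − F(−q) = 8 q ∏_{k≥1} (1 + q^{4k})⁴ (1 + q^{2k})⁴, the infinite product converging coefficientwise. -/
open PowerSeries Finset

namespace Stmt4

/-- Coefficientwise convergence of an infinite product of formal power series over ℤ. -/
def CoeffwiseProd (f : ℕ → PowerSeries ℤ) (g : PowerSeries ℤ) : Prop :=
  ∀ n : ℕ, ∀ᶠ N in Filter.atTop,
    PowerSeries.coeff (R := ℤ) n (∏ k ∈ Finset.range N, f k) = PowerSeries.coeff (R := ℤ) n g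

/-- The factor `(1+q^{2m-1})² (1-q^{2m-1})^{-2}` (indexed by `m ≥ 1`, here `m+1`). -/
noncomputable def Ffactor (m : ℕ) : PowerSeries ℤ :=
  (1 + X ^ (2 * m + 1)) ^ 2 * Ring.inverse ((1 - X ^ (2 * m + 1)) ^ 2)

abbrev Z := PowerSeries ℤ

/-- coefficientwise limit -/
def Lim (s : ℕ → Z) (L : Z) : Prop :=
  ∀ n : ℕ, ∀ᶠ N in Filter.atTop, coeff (R := ℤ) n (s N) = coeff (R := ℤ) n L

theorem Lim.unique {s : ℕ → Z} {L L' : Z} (h : Lim s L) (h' : Lim s L') : L = L' := by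
  ext n
  obtain ⟨N, hN⟩ := ((h n).and (h' n)).exists
  rw [← hN.1, hN.2]

theorem Lim.const (c : Z) : Lim (fun _ => c) c :=
  fun _ => Filter.Eventually.of_forall fun _ => rfl

theorem Lim.congr {s t : ℕ → Z} {L : Z} (h : Lim s L)
    (hst : ∀ᶠ N in Filter.atTop, s N = t N) : Lim t L := by
  intro n
  filter_upwards [h n, hst] with N h1 h2
  rw [← h2, h1]

theorem Lim.upTo {s : ℕ → Z} {L : Z} (h : Lim s L) (n : ℕ) :
    ∀ᶠ N in Filter.atTop, ∀ j ≤ n, coeff (R := ℤ) j (s N) = coeff (R := ℤ) j L := by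
  have h2 : ∀ᶠ N in Filter.atTop, ∀ j ∈ Finset.range (n+1),
      coeff (R := ℤ) j (s N) = coeff (R := ℤ) j L :=
    (Finset.range (n+1)).eventually_all.mpr (fun j _ => h j)
  filter_upwards [h2] with N hN j hj
  exact hN j (Finset.mem_range.mpr (Nat.lt_succ_of_le hj))

theorem Lim.mul {s t : ℕ → Z} {L M : Z} (hs : Lim s L) (ht : Lim t M) :
    Lim (fun N => s N * t N) (L * M) := by
  intro n
  filter_upwards [hs.upTo n, ht.upTo n] with N h1 h2
  rw [coeff_mul, coeff_mul]
  refine Finset.sum_congr rfl fun p hp => ?_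
  rw [Finset.HasAntidiagonal.mem_antidiagonal] at hp
  rw [h1 p.1 (by omega), h2 p.2 (by omega)]

theorem Lim.add {s t : ℕ → Z} {L M : Z} (hs : Lim s L) (ht : Lim t M) :
    Lim (fun N => s N + t N) (L + M) := by
  intro n
  filter_upwards [hs n, ht n] with N h1 h2
  rw [map_add, map_add, h1, h2]

theorem Lim.sub {s t : ℕ → Z} {L M : Z} (hs : Lim s L) (ht : Lim t M) :
    Lim (fun N => s N - t N) (L - M) := by
  intro n
  filter_upwards [hs n, ht n] with N h1 h2
  rw [map_sub, map_sub, h1, h2]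

theorem Lim.rescale {s : ℕ → Z} {L : Z} (a : ℤ) (h : Lim s L) :
    Lim (fun N => PowerSeries.rescale a (s N)) (PowerSeries.rescale a L) := by
  intro n
  filter_upwards [h n] with N h1
  rw [coeff_rescale, coeff_rescale, h1]

theorem Lim.comp {s : ℕ → Z} {L : Z} (h : Lim s L) {φ : ℕ → ℕ}
    (hφ : Filter.Tendsto φ Filter.atTop Filter.atTop) : Lim (fun N => s (φ N)) L :=
  fun n => hφ.eventually (h n)

theorem coeff_invOfUnit_congr (f g : Z) :
    ∀ n : ℕ, (∀ j ≤ n, coeff (R := ℤ) j f = coeff (R := ℤ) j g) →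
      coeff (R := ℤ) n (invOfUnit f 1) = coeff (R := ℤ) n (invOfUnit g 1) := by
  intro n
  induction n using Nat.strong_induction_on with
  | _ n ih =>
    intro h
    rw [coeff_invOfUnit, coeff_invOfUnit]
    rcases Nat.eq_zero_or_pos n with h0 | h0
    · simp [h0]
    · rw [if_neg (by omega), if_neg (by omega)]
      congr 1
      refine Finset.sum_congr rfl fun p hp => ?_
      rw [Finset.HasAntidiagonal.mem_antidiagonal] at hp
      by_cases hlt : p.2 < n
      · rw [if_pos hlt, if_pos hlt, h p.1 (by omega),
          ih p.2 hlt (fun j hj => h j (by omega))]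
      · rw [if_neg hlt, if_neg hlt]

theorem Lim.invOfUnit {s : ℕ → Z} {L : Z} (hs : Lim s L) :
    Lim (fun N => PowerSeries.invOfUnit (s N) 1) (PowerSeries.invOfUnit L 1) := by
  intro n
  filter_upwards [hs.upTo n] with N hN
  exact coeff_invOfUnit_congr _ _ n hN

/-! ### congruence to 1 modulo `X^c`, stabilization of products -/

def IsOne (g : Z) (c : ℕ) : Prop := ∀ j < c, coeff (R := ℤ) j g = coeff (R := ℤ) j (1 : Z)

theorem IsOne.one (c : ℕ) : IsOne 1 c := fun _ _ => rfl

theorem IsOne.mono {g : Z} {c c' : ℕ} (h : IsOne g c) (hc : c' ≤ c) : IsOne g c' :=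
  fun j hj => h j (lt_of_lt_of_le hj hc)

theorem coeff_mul_isOne (P g : Z) (n : ℕ) (hg : IsOne g (n+1)) :
    coeff (R := ℤ) n (P * g) = coeff (R := ℤ) n P := by
  have : coeff (R := ℤ) n (P * g) = coeff (R := ℤ) n (P * 1) := by
    rw [coeff_mul, coeff_mul]
    refine Finset.sum_congr rfl fun p hp => ?_
    rw [Finset.HasAntidiagonal.mem_antidiagonal] at hp
    rw [hg p.2 (by omega)]
  rw [this, mul_one]

theorem IsOne.mul {g h : Z} {c : ℕ} (hg : IsOne g c) (hh : IsOne h c) :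
    IsOne (g * h) c := by
  intro j hj
  have : coeff (R := ℤ) j (g * h) = coeff (R := ℤ) j (g * 1) := by
    rw [coeff_mul, coeff_mul]
    refine Finset.sum_congr rfl fun p hp => ?_
    rw [Finset.HasAntidiagonal.mem_antidiagonal] at hp
    rw [hh p.2 (by omega)]
  rw [this, mul_one]
  exact hg j hj

theorem IsOne.prod {ι : Type*} {f : ι → Z} {s : Finset ι} {c : ℕ}
    (h : ∀ i ∈ s, IsOne (f i) c) : IsOne (∏ i ∈ s, f i) c :=
  Finset.prod_induction f (fun g => IsOne g c) (fun _ _ ha hb => ha.mul hb)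
    (IsOne.one c) h

/-- stabilizing infinite product -/
noncomputable def plim (f : ℕ → Z) : Z := mk fun n => coeff (R := ℤ) n (∏ k ∈ range (n+1), f k)

def Tame (f : ℕ → Z) : Prop := ∀ k, IsOne (f k) (k+1)

theorem coeff_prod_stable {f : ℕ → Z} (hf : Tame f) {n M : ℕ} (hM : n+1 ≤ M) :
    coeff (R := ℤ) n (∏ k ∈ range M, f k) = coeff (R := ℤ) n (∏ k ∈ range (n+1), f k) := by
  induction M with
  | zero => omega
  | succ M ih =>
    rcases Nat.lt_or_ge (n+1) (M+1) with h | h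
    · have hM' : n+1 ≤ M := by omega
      rw [prod_range_succ, coeff_mul_isOne _ _ _ ((hf M).mono (by omega)), ih hM']
    · have : M + 1 = n + 1 := by omega
      rw [this]

theorem lim_plim {f : ℕ → Z} (hf : Tame f) :
    Lim (fun N => ∏ k ∈ range N, f k) (plim f) := by
  intro n
  refine Filter.eventually_atTop.mpr ⟨n+1, fun M hM => ?_⟩
  rw [coeff_prod_stable hf hM, plim, coeff_mk]

theorem constantCoeff_plim {f : ℕ → Z} (hf : Tame f) :
    constantCoeff (R := ℤ) (plim f) = 1 := by
  rw [← coeff_zero_eq_constantCoeff_apply, plim, coeff_mk]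
  rw [range_one, prod_singleton]
  rw [hf 0 0 (by omega)]
  simp

theorem ne_zero_of_constCoeff_one {f : Z} (h : constantCoeff (R := ℤ) f = 1) : f ≠ 0 := by
  intro h0
  rw [h0, map_zero] at h
  exact one_ne_zero h.symm



/-! ### units `1 - X^m` and the Euler products Φ -/

noncomputable def USub (m : ℕ) : Zˣ :=
  if h : m = 0 then 1 else
    Units.mkOfMulEqOne (1 - X^m) (invOfUnit (1 - X^m) 1)
      (mul_invOfUnit _ _ (by
        rw [map_sub, map_one, map_pow, constantCoeff_X, zero_pow h, sub_zero, Units.val_one]))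

lemma USub_val {m : ℕ} (h : m ≠ 0) : ((USub m : Zˣ) : Z) = 1 - X^m := by
  rw [USub, dif_neg h]; rfl

noncomputable def Phi (d t : ℕ) : Zˣ := ∏ j ∈ range t, USub (2*d*(j+1))

lemma Phi_zero (d : ℕ) : Phi d 0 = 1 := by simp [Phi]

lemma Phi_succ (d t : ℕ) : Phi d (t+1) = Phi d t * USub (2*d*(t+1)) :=
  prod_range_succ _ _

lemma Phi_val_succ {d : ℕ} (hd : d ≠ 0) (t : ℕ) :
    ((Phi d (t+1) : Zˣ) : Z) = (Phi d t : Z) * (1 - X^(2*d*(t+1))) := by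
  rw [Phi_succ, Units.val_mul, USub_val (by positivity)]

/-! ### Gaussian binomials via the Pascal recursion -/

noncomputable def B (d : ℕ) : ℕ → ℤ → Z
  | 0, k => if k = 0 then 1 else 0
  | a+1, k => B d a (k-1) + X^(2*d*k.toNat) * B d a k

lemma B_neg (d : ℕ) : ∀ (a : ℕ) (k : ℤ), k < 0 → B d a k = 0 := by
  intro a
  induction a with
  | zero => intro k hk; rw [B, if_neg (by omega)]
  | succ a ih =>
    intro k hk
    rw [B, ih (k-1) (by omega), ih k hk, mul_zero, add_zero]

lemma B_gt (d : ℕ) : ∀ (a : ℕ) (k : ℤ), (a:ℤ) < k → B d a k = 0 := by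
  intro a
  induction a with
  | zero => intro k hk; rw [B, if_neg (by omega)]
  | succ a ih =>
    intro k hk
    rw [B, ih (k-1) (by push_cast at hk ⊢; omega), ih k (by push_cast at hk ⊢; omega),
      mul_zero, add_zero]

lemma B_zero_right (d : ℕ) : ∀ a : ℕ, B d a 0 = 1 := by
  intro a
  induction a with
  | zero => rw [B, if_pos rfl]
  | succ a ih =>
    rw [B, B_neg d a (0-1) (by omega), ih]
    norm_num

lemma B_diag (d : ℕ) : ∀ a : ℕ, B d a (a:ℤ) = 1 := by
  intro a
  induction a with
  | zero => norm_num [B]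
  | succ a ih =>
    rw [B, show ((a+1:ℕ):ℤ) - 1 = (a:ℤ) by push_cast; ring,
      B_gt d a ((a+1:ℕ):ℤ) (by push_cast; omega), ih, mul_zero, add_zero]

/-- clearing denominators: `B d a k * Φ_k * Φ_{a-k} = Φ_a`. -/
lemma B_clear {d : ℕ} (hd : d ≠ 0) :
    ∀ a k : ℕ, k ≤ a → B d a (k:ℤ) * (Phi d k : Z) * (Phi d (a-k) : Z) = (Phi d a : Z) := by
  intro a
  induction a with
  | zero =>
    intro k hk
    interval_cases k
    simp [B_zero_right, Phi_zero]
  | succ a ih =>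
    intro k hk
    match k with
    | 0 =>
      simp only [Nat.cast_zero, B_zero_right, Phi_zero, Units.val_one, one_mul,
        Nat.sub_zero]
    | (K+1) =>
      have hKa : K ≤ a := by omega
      rcases Nat.lt_or_ge K a with hKlt | hKge
      · -- K+1 ≤ a
        obtain ⟨j, hj⟩ : ∃ j, a = K + 1 + j := ⟨a - (K+1), by omega⟩
        subst hj
        have e1 : K + 1 + j + 1 - (K + 1) = j + 1 := by omega
        have e2 : K + 1 + j - (K + 1) = j := by omega
        have e3 : K + 1 + j - K = j + 1 := by omega
        have c1 : ((K+1:ℕ):ℤ) - 1 = ((K:ℕ):ℤ) := by push_cast; ring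
        have c2 : (((K+1:ℕ):ℤ)).toNat = K+1 := by omega
        rw [e1, B, c1, c2]
        have ih1 := ih K (by omega)
        have ih2 := ih (K+1) (by omega)
        rw [e3] at ih1
        rw [e2] at ih2
        have hX : (X:Z)^(2*d*(K+1)) * X^(2*d*(j+1)) = X^(2*d*(K+1+j+1)) := by
          rw [← pow_add]; congr 1; ring
        rw [Phi_val_succ hd (K+1+j)]
        rw [Phi_val_succ hd K] at ih2 ⊢
        rw [Phi_val_succ hd j] at ih1 ⊢
        linear_combination (1 - (X:Z)^(2*d*(K+1))) * ih1 +
          ((X:Z)^(2*d*(K+1)) * (1 - (X:Z)^(2*d*(j+1)))) * ih2 -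
          ((Phi d (K+1+j) : Z)) * hX
      · -- K = a
        have : K = a := by omega
        subst this
        rw [show ((K+1 : ℕ) : ℤ) = (K:ℤ)+1 by push_cast; ring, B,
          B_gt d K ((K:ℤ)+1) (by omega),
          show (K:ℤ)+1-1 = ((K:ℕ):ℤ) by ring, B_diag, mul_zero, add_zero,
          Nat.sub_self, Phi_zero, Units.val_one, mul_one, one_mul]


lemma pascal1 {d : ℕ} (hd : d ≠ 0) (a : ℕ) (k : ℤ) :
    B d (a+1) k = B d a k + X^(2*d*((a:ℤ)+1-k).toNat) * B d a (k-1) := by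
  rcases lt_trichotomy k 0 with hk | hk | hk
  · rw [B_neg d (a+1) k hk, B_neg d a k hk, B_neg d a (k-1) (by omega), mul_zero, add_zero]
  · subst hk
    rw [B_zero_right, B_zero_right, B_neg d a (0-1) (by omega), mul_zero, add_zero]
  · rcases lt_trichotomy ((a:ℤ)+1) k with hak | hak | hak
    · rw [B_gt d (a+1) k (by push_cast; omega), B_gt d a k (by omega),
        B_gt d a (k-1) (by omega)]
      simp
    · -- k = a+1
      subst hak
      rw [show (a:ℤ)+1 = ((a+1:ℕ):ℤ) by push_cast; ring, B_diag,
        B_gt d a ((a+1:ℕ):ℤ) (by push_cast; omega),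
        show (((a+1:ℕ):ℤ)) - 1 = (a:ℤ) by push_cast; ring, B_diag,
        show ((((a+1:ℕ)):ℤ)-((a+1:ℕ):ℤ)).toNat = 0 by omega]
      norm_num
    · -- 1 ≤ k ≤ a : interior
      obtain ⟨i, hi⟩ : ∃ i : ℕ, k = (i:ℤ) + 1 := ⟨(k-1).toNat, by omega⟩
      obtain ⟨j, hj⟩ : ∃ j : ℕ, a = (i+1) + j := ⟨a - (i+1), by omega⟩
      subst hi hj
      have h1 := B_clear hd (i+1+j+1) (i+1) (by omega)
      have h2 := B_clear hd (i+1+j) (i+1) (by omega)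
      have h3 := B_clear hd (i+1+j) i (by omega)
      rw [show i+1+j+1 - (i+1) = j+1 by omega] at h1
      rw [show i+1+j - (i+1) = j by omega] at h2
      rw [show i+1+j - i = j+1 by omega] at h3
      have ha1 : ((i+1+j:ℕ):ℤ) + 1 - ((i:ℤ)+1) = (j:ℤ)+1 := by push_cast; ring
      rw [ha1, show ((j:ℤ)+1).toNat = j+1 by omega,
        show (i:ℤ)+1-1 = (i:ℤ) by ring,
        show (i:ℤ)+1 = ((i+1:ℕ):ℤ) by push_cast; ring]
      have hne : ((Phi d (i+1) : Z) * (Phi d (j+1) : Z)) ≠ 0 :=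
        mul_ne_zero (Units.ne_zero _) (Units.ne_zero _)
      apply mul_right_cancel₀ hne
      rw [Phi_val_succ hd (i+1+j)] at h1
      rw [Phi_val_succ hd i] at h1 h2 ⊢
      rw [Phi_val_succ hd j] at h1 h3 ⊢
      linear_combination h1 - (1 - (X:Z)^(2*d*(j+1))) * h2 -
        ((X:Z)^(2*d*(j+1)) * (1 - (X:Z)^(2*d*(i+1)))) * h3

lemma Brec {d : ℕ} (hd : d ≠ 0) (a : ℕ) (k : ℤ) :
    B d (a+2) k = (1 + X^(2*d*(a+1))) * B d a (k-1) + X^(2*d*k.toNat) * B d a k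
      + X^(2*d*((a:ℤ)+2-k).toNat) * B d a (k-2) := by
  have step1 : B d (a+2) k = B d (a+1) k + X^(2*d*((a:ℤ)+2-k).toNat) * B d (a+1) (k-1) := by
    have := pascal1 hd (a+1) k
    rwa [show ((a+1:ℕ):ℤ)+1-k = (a:ℤ)+2-k by push_cast; ring] at this
  rw [step1, B, B, show k-1-1 = k-2 by ring]
  have key : X^(2*d*((a:ℤ)+2-k).toNat) * (X^(2*d*(k-1).toNat) * B d a (k-1))
      = X^(2*d*(a+1)) * B d a (k-1) := by
    rcases lt_trichotomy k 1 with hk | hk | hk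
    · rw [B_neg d a (k-1) (by omega), mul_zero, mul_zero, mul_zero]
    · subst_eqs
      rw [show (1:ℤ)-1 = 0 by ring] at *
      rw [show ((0:ℤ).toNat) = 0 by omega]
      rw [show ((a:ℤ)+2-1).toNat = a+1 by omega]
      ring
    · rcases le_or_gt k ((a:ℤ)+1) with hka | hka
      · rw [← mul_assoc, ← pow_add, ← Nat.mul_add,
          show ((a:ℤ)+2-k).toNat + (k-1).toNat = a+1 by omega]
      · rw [B_gt d a (k-1) (by omega), mul_zero, mul_zero, mul_zero]
  rw [mul_add, key]
  ring
lemma coeff_X_pow_mul_lt (f : Z) {e t : ℕ} (h : t < e) : coeff (R := ℤ) t (X^e * f) = 0 := by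
  rw [mul_comm, coeff_mul_X_pow', if_neg (by omega)]

lemma moveA {d : ℕ} (hd : d ≠ 0) {a : ℕ} {k : ℤ} {t : ℕ}
    (h : t < 2*d*(((a:ℤ)+1-k).toNat)) :
    coeff (R := ℤ) t (B d (a+1) k) = coeff (R := ℤ) t (B d a k) := by
  rw [pascal1 hd, map_add, coeff_X_pow_mul_lt _ h, add_zero]

lemma moveB {d : ℕ} {a : ℕ} {k : ℤ} {t : ℕ} (h : t < 2*d*k.toNat) :
    coeff (R := ℤ) t (B d (a+1) k) = coeff (R := ℤ) t (B d a (k-1)) := by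
  rw [B, map_add, coeff_X_pow_mul_lt _ h, add_zero]

lemma two_le_helper {d : ℕ} (hd : d ≠ 0) (x : ℕ) : 2*x ≤ 2*d*x := by
  have h2 : 2 ≤ 2*d := by omega
  exact Nat.mul_le_mul_right x h2

lemma chainA {d : ℕ} (hd : d ≠ 0) {t a k : ℕ} (hk : k ≤ a) (h : t < 2*d*(a+1-k)) :
    ∀ i : ℕ, coeff (R := ℤ) t (B d (a+i) (k:ℤ)) = coeff (R := ℤ) t (B d a (k:ℤ)) := by
  intro i
  induction i with
  | zero => rfl
  | succ i ih =>
    rw [show a+(i+1) = (a+i)+1 by omega, moveA hd, ih]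
    have e1 : (((a+i:ℕ):ℤ)+1-(k:ℤ)).toNat = a+i+1-k := by omega
    rw [e1]
    calc t < 2*d*(a+1-k) := h
    _ ≤ 2*d*(a+i+1-k) := Nat.mul_le_mul_left (2*d) (by omega)

lemma chainB {d : ℕ} (hd : d ≠ 0) {t a k : ℕ} (h : t < 2*d*(k+1)) :
    ∀ i : ℕ, coeff (R := ℤ) t (B d (a+i) ((k:ℤ)+i)) = coeff (R := ℤ) t (B d a (k:ℤ)) := by
  intro i
  induction i with
  | zero => simp
  | succ i ih =>
    rw [show a+(i+1) = (a+i)+1 by omega,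
      show (k:ℤ)+(i+1:ℕ) = ((k:ℤ)+(i:ℕ))+1 by push_cast; ring, moveB,
      show (k:ℤ)+(i:ℕ)+1-1 = (k:ℤ)+(i:ℕ) by ring, ih]
    have e1 : (((k:ℤ)+(i:ℕ))+1).toNat = k+i+1 := by omega
    rw [e1]
    calc t < 2*d*(k+1) := h
    _ ≤ 2*d*(k+i+1) := Nat.mul_le_mul_left (2*d) (by omega)

lemma claim_move {d : ℕ} (hd : d ≠ 0) {t a k : ℕ} (hk : k ≤ a)
    (h1 : t < 2*d*(k+1)) (h2 : t < 2*d*(a+1-k)) (i j : ℕ) :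
    coeff (R := ℤ) t (B d (a+i+j) ((k+i : ℕ):ℤ)) = coeff (R := ℤ) t (B d a (k:ℤ)) := by
  have step1 : coeff (R := ℤ) t (B d ((a+i)+j) ((k+i:ℕ):ℤ)) = coeff (R := ℤ) t (B d (a+i) ((k+i:ℕ):ℤ)) := by
    apply chainA hd (by omega)
    calc t < 2*d*(a+1-k) := h2
    _ ≤ 2*d*(a+i+1-(k+i)) := Nat.mul_le_mul_left (2*d) (by omega)
  rw [show a+i+j = (a+i)+j by omega, step1, show ((k+i:ℕ):ℤ) = (k:ℤ)+(i:ℕ) by push_cast; ring,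
    chainB hd h1 i]

lemma B_coeff_eq {d : ℕ} (hd : d ≠ 0) {t a1 k1 a2 k2 : ℕ} (hk1 : k1 ≤ a1) (hk2 : k2 ≤ a2)
    (h1 : t < 2*d*(k1+1)) (h2 : t < 2*d*(k2+1))
    (h3 : t < 2*d*(a1+1-k1)) (h4 : t < 2*d*(a2+1-k2)) :
    coeff (R := ℤ) t (B d a1 (k1:ℤ)) = coeff (R := ℤ) t (B d a2 (k2:ℤ)) := by
  have e1 := claim_move hd hk1 h1 h3 k2 (a2-k2)
  have e2 := claim_move hd hk2 h2 h4 k1 (a1-k1)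
  rw [show a1+k2+(a2-k2) = a1+a2 by omega] at e1
  rw [show a2+k1+(a1-k1) = a1+a2 by omega, show k2+k1 = k1+k2 by omega] at e2
  rw [← e1, ← e2]

/-- the limit of the Gaussian binomial central/near-central coefficients -/
noncomputable def CC (d : ℕ) : Z := mk fun t => coeff (R := ℤ) t (B d (2*(t+1)) ((t+1 : ℕ) : ℤ))

lemma coeff_CC (d t : ℕ) : coeff (R := ℤ) t (CC d) = coeff (R := ℤ) t (B d (2*(t+1)) ((t+1 : ℕ) : ℤ)) := by
  rw [CC, coeff_mk]

lemma coeff_B_eq_CC {d : ℕ} (hd : d ≠ 0) {t M : ℕ} (n : ℤ) (hM : t + n.natAbs + 2 ≤ M) :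
    coeff (R := ℤ) t (B d (2*M) ((M:ℤ)+n)) = coeff (R := ℤ) t (CC d) := by
  set k : ℕ := ((M:ℤ)+n).toNat with hkdef
  have hk : ((k:ℕ):ℤ) = (M:ℤ)+n := by
    rw [hkdef]; omega
  rw [← hk, coeff_CC]
  apply B_coeff_eq hd (t := t) (by omega) (by omega)
  · exact lt_of_lt_of_le (by omega) (two_le_helper hd (k+1))
  · exact lt_of_lt_of_le (by omega) (two_le_helper hd (t+1+1))
  · exact lt_of_lt_of_le (by omega : t < 2*(2*M+1-k)) (two_le_helper hd (2*M+1-k))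
  · exact lt_of_lt_of_le (by omega : t < 2*(2*(t+1)+1-(t+1))) (two_le_helper hd _)

/-- evenness -/
lemma rescale_neg_one_X_pow (n : ℕ) :
    PowerSeries.rescale (-1 : ℤ) ((X : Z)^n) = PowerSeries.C (R := ℤ) ((-1)^n) * X^n := by
  ext m
  rw [coeff_rescale, coeff_C_mul, coeff_X_pow]
  by_cases h : m = n
  · subst h; simp
  · simp [h]

lemma B_even (d : ℕ) : ∀ (a : ℕ) (k : ℤ), PowerSeries.rescale (-1:ℤ) (B d a k) = B d a k := by
  intro a
  induction a with
  | zero =>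
    intro k
    rw [B]
    split_ifs
    · exact map_one _
    · exact map_zero _
  | succ a ih =>
    intro k
    rw [B, map_add, map_mul, ih, ih, rescale_neg_one_X_pow,
      show 2*d*k.toNat = 2*(d*k.toNat) by ring]
    simp [pow_mul]
def sqe (n : ℤ) : ℕ := (n*n).toNat
def trie (n : ℤ) : ℕ := (n*n+n).toNat

lemma sqe_cast (n : ℤ) : ((sqe n : ℕ) : ℤ) = n*n := Int.toNat_of_nonneg (mul_self_nonneg n)

lemma trie_nonneg (n : ℤ) : 0 ≤ n*n+n := by
  have h2 : n*n+n = n*(n+1) := by ring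
  rw [h2]
  rcases le_or_gt 0 n with h | h
  · exact mul_nonneg h (by omega)
  · nlinarith

lemma trie_cast (n : ℤ) : ((trie n : ℕ) : ℤ) = n*n+n := Int.toNat_of_nonneg (trie_nonneg n)

lemma sum_Icc_shift (F : ℤ → Z) (lo hi c : ℤ) :
    ∑ k ∈ Icc (lo+c) (hi+c), F (k-c) = ∑ k ∈ Icc lo hi, F k := by
  rw [← Finset.map_add_right_Icc, Finset.sum_map]
  simp [addRightEmbedding]

lemma sum_shift' {β : Type*} [AddCommMonoid β] (F G : ℤ → β) (lo hi lo' hi' c : ℤ)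
    (h1 : lo' = lo + c) (h2 : hi' = hi + c)
    (h3 : ∀ k ∈ Icc lo' hi', G k = F (k - c)) :
    ∑ k ∈ Icc lo' hi', G k = ∑ k ∈ Icc lo hi, F k := by
  subst h1 h2
  rw [Finset.sum_congr rfl h3, ← Finset.map_add_right_Icc, Finset.sum_map]
  simp [addRightEmbedding]

noncomputable def rhsF (d : ℕ) (e : ℤ → ℕ) (M : ℕ) : Z :=
  ∑ k ∈ Icc (0:ℤ) (2*M), B d (2*M) k * X^(d * e (k - M))

noncomputable def lhsS (d M : ℕ) : Z := ∏ m ∈ range M, (1 + X^(d*(2*m+1)))^2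

theorem jtpS {d : ℕ} (hd : d ≠ 0) (M : ℕ) : lhsS d M = rhsF d sqe M := by
  induction M with
  | zero =>
    rw [lhsS, rhsF]
    norm_num
    rw [B]
    norm_num [sqe]
  | succ M ih =>
    have key : rhsF d sqe (M+1) = (1 + X^(2*d*(2*M+1))) * rhsF d sqe M
        + X^(d*(2*M+1)) * rhsF d sqe M + X^(d*(2*M+1)) * rhsF d sqe M := by
      rw [rhsF, show 2*(M+1) = 2*M+2 by ring,
        show (2*((M+1:ℕ):ℤ)) = 2*(M:ℤ)+2 by push_cast; ring]
      have expand : ∀ k ∈ Icc (0:ℤ) (2*M+2),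
          B d (2*M+2) k * X^(d * sqe (k - ((M+1:ℕ):ℤ)))
          = (1 + X^(2*d*(2*M+1))) * B d (2*M) (k-1) * X^(d * sqe (k - (M+1:ℕ)))
            + X^(2*d*k.toNat) * B d (2*M) k * X^(d * sqe (k - (M+1:ℕ)))
            + X^(2*d*(((2*M:ℕ):ℤ)+2-k).toNat) * B d (2*M) (k-2) * X^(d * sqe (k - (M+1:ℕ))) := by
        intro k _
        rw [Brec hd (2*M) k]
        ring
      rw [Finset.sum_congr rfl expand, Finset.sum_add_distrib, Finset.sum_add_distrib]
      congr 1
      · congr 1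
        · -- S1
          refine (sum_shift' (fun j => (1 + X^(2*d*(2*M+1))) * B d (2*M) j * X^(d * sqe (j - (M:ℕ))))
            _ (-1) (2*(M:ℤ)+1) 0 (2*(M:ℤ)+2) 1 (by ring) (by ring) ?_).trans ?_
          · intro k _
            rw [show k - 1 - ((M:ℕ):ℤ) = k - (M+1:ℕ) by push_cast; ring]
          rw [← Finset.sum_subset (Finset.Icc_subset_Icc (by omega) (by omega) :
              Icc (0:ℤ) (2*M) ⊆ Icc (-1) (2*(M:ℤ)+1)) ?_]
          · rw [rhsF, Finset.mul_sum]
            refine Finset.sum_congr rfl fun k _ => by ring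
          · intro k hk hnk
            simp only [mem_Icc] at hk hnk
            rcases (by omega : k = -1 ∨ k = 2*(M:ℤ)+1) with h | h
            · rw [h, B_neg d (2*M) (-1) (by omega)]; ring
            · rw [h, B_gt d (2*M) (2*(M:ℤ)+1) (by push_cast; omega)]; ring
        · -- S2
          rw [← Finset.sum_subset (Finset.Icc_subset_Icc (by omega) (by omega) :
              Icc (0:ℤ) (2*M) ⊆ Icc 0 (2*M+2)) ?_]
          · rw [rhsF, Finset.mul_sum]
            refine Finset.sum_congr rfl fun k hk => ?_
            rw [mem_Icc] at hk
            have hexp : 2*d*k.toNat + d * sqe (k - ((M+1:ℕ):ℤ)) = d*(2*M+1) + d * sqe (k - (M:ℕ)) := by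
              have c1 : ((k.toNat:ℕ):ℤ) = k := by omega
              have : (↑(2*d*k.toNat + d * sqe (k - ((M+1:ℕ):ℤ))) : ℤ)
                  = (↑(d*(2*M+1) + d * sqe (k - (M:ℕ))) : ℤ) := by
                push_cast [sqe_cast, c1]
                ring
              exact_mod_cast this
            calc X^(2*d*k.toNat) * B d (2*M) k * X^(d * sqe (k - (M+1:ℕ)))
                = B d (2*M) k * X^(2*d*k.toNat + d * sqe (k - (M+1:ℕ))) := by
                  rw [pow_add]; ring
              _ = B d (2*M) k * X^(d*(2*M+1) + d * sqe (k - (M:ℕ))) := by rw [hexp]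
              _ = X^(d*(2*M+1)) * (B d (2*M) k * X^(d * sqe (k - (M:ℕ)))) := by
                  rw [pow_add]; ring
          · intro k hk hnk
            simp only [mem_Icc] at hk hnk
            rw [B_gt d (2*M) k (by push_cast; omega)]
            ring
        -- S3 handled below
      · -- S3
        refine (sum_shift' (fun j => X^(2*d*(((2*M:ℕ):ℤ)-j).toNat) * B d (2*M) j * X^(d * sqe (j + 1 - (M:ℕ))))
          _ (-2) (2*(M:ℤ)) 0 (2*(M:ℤ)+2) 2 (by ring) (by ring) ?_).trans ?_
        · intro k _
          rw [show ((2*M:ℕ):ℤ)-(k-2) = ((2*M:ℕ):ℤ)+2-k by ring,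
            show k - 2 + 1 - ((M:ℕ):ℤ) = k - (M+1:ℕ) by push_cast; ring]
        rw [← Finset.sum_subset (Finset.Icc_subset_Icc (by omega) (by omega) :
            Icc (0:ℤ) (2*M) ⊆ Icc (-2) (2*(M:ℤ))) ?_]
        · rw [rhsF, Finset.mul_sum]
          refine Finset.sum_congr rfl fun k hk => ?_
          rw [mem_Icc] at hk
          have hexp : 2*d*(((2*M:ℕ):ℤ)-k).toNat + d * sqe (k + 1 - (M:ℕ))
              = d*(2*M+1) + d * sqe (k - (M:ℕ)) := by
            obtain ⟨T, hT⟩ : ∃ T:ℕ, ((2*M:ℕ):ℤ)-k = (T:ℤ) := ⟨(((2*M:ℕ):ℤ)-k).toNat, by omega⟩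
            rw [hT, Int.toNat_natCast]
            have hT' : (T:ℤ) = 2*(M:ℤ) - k := by omega
            have : (↑(2*d*T + d * sqe (k + 1 - (M:ℕ))) : ℤ)
                = (↑(d*(2*M+1) + d * sqe (k - (M:ℕ))) : ℤ) := by
              push_cast [sqe_cast]
              linear_combination (2*(d:ℤ))*hT'
            exact_mod_cast this
          calc X^(2*d*(((2*M:ℕ):ℤ)-k).toNat) * B d (2*M) k * X^(d * sqe (k + 1 - (M:ℕ)))
              = B d (2*M) k * X^(2*d*(((2*M:ℕ):ℤ)-k).toNat + d * sqe (k + 1 - (M:ℕ))) := by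
                rw [pow_add]; ring
            _ = B d (2*M) k * X^(d*(2*M+1) + d * sqe (k - (M:ℕ))) := by rw [hexp]
            _ = X^(d*(2*M+1)) * (B d (2*M) k * X^(d * sqe (k - (M:ℕ)))) := by
                rw [pow_add]; ring
        · intro k hk hnk
          simp only [mem_Icc] at hk hnk
          rcases (by omega : k = -1 ∨ k = -2) with h | h <;>
            · rw [h, B_neg d (2*M) _ (by omega)]; ring
    rw [lhsS, prod_range_succ, ← lhsS, ih, key]
    ring

noncomputable def lhsT (d M : ℕ) : Z := ∏ m ∈ range M, ((1 + X^(d*(2*m+2))) * (1 + X^(d*(2*m))))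

theorem jtpT {d : ℕ} (hd : d ≠ 0) (M : ℕ) : lhsT d M = rhsF d trie M := by
  induction M with
  | zero =>
    rw [lhsT, rhsF]
    norm_num
    rw [B]
    norm_num [trie]
  | succ M ih =>
    have key : rhsF d trie (M+1) = (1 + X^(2*d*(2*M+1))) * rhsF d trie M
        + X^(d*(2*M)) * rhsF d trie M + X^(d*(2*M+2)) * rhsF d trie M := by
      rw [rhsF, show 2*(M+1) = 2*M+2 by ring,
        show (2*((M+1:ℕ):ℤ)) = 2*(M:ℤ)+2 by push_cast; ring]
      have expand : ∀ k ∈ Icc (0:ℤ) (2*M+2),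
          B d (2*M+2) k * X^(d * trie (k - ((M+1:ℕ):ℤ)))
          = (1 + X^(2*d*(2*M+1))) * B d (2*M) (k-1) * X^(d * trie (k - (M+1:ℕ)))
            + X^(2*d*k.toNat) * B d (2*M) k * X^(d * trie (k - (M+1:ℕ)))
            + X^(2*d*(((2*M:ℕ):ℤ)+2-k).toNat) * B d (2*M) (k-2) * X^(d * trie (k - (M+1:ℕ))) := by
        intro k _
        rw [Brec hd (2*M) k]
        ring
      rw [Finset.sum_congr rfl expand, Finset.sum_add_distrib, Finset.sum_add_distrib]
      congr 1
      · congr 1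
        · -- S1
          refine (sum_shift' (fun j => (1 + X^(2*d*(2*M+1))) * B d (2*M) j * X^(d * trie (j - (M:ℕ))))
            _ (-1) (2*(M:ℤ)+1) 0 (2*(M:ℤ)+2) 1 (by ring) (by ring) ?_).trans ?_
          · intro k _
            rw [show k - 1 - ((M:ℕ):ℤ) = k - (M+1:ℕ) by push_cast; ring]
          rw [← Finset.sum_subset (Finset.Icc_subset_Icc (by omega) (by omega) :
              Icc (0:ℤ) (2*M) ⊆ Icc (-1) (2*(M:ℤ)+1)) ?_]
          · rw [rhsF, Finset.mul_sum]
            refine Finset.sum_congr rfl fun k _ => by ring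
          · intro k hk hnk
            simp only [mem_Icc] at hk hnk
            rcases (by omega : k = -1 ∨ k = 2*(M:ℤ)+1) with h | h
            · rw [h, B_neg d (2*M) (-1) (by omega)]; ring
            · rw [h, B_gt d (2*M) (2*(M:ℤ)+1) (by push_cast; omega)]; ring
        · -- S2
          rw [← Finset.sum_subset (Finset.Icc_subset_Icc (by omega) (by omega) :
              Icc (0:ℤ) (2*M) ⊆ Icc 0 (2*M+2)) ?_]
          · rw [rhsF, Finset.mul_sum]
            refine Finset.sum_congr rfl fun k hk => ?_
            rw [mem_Icc] at hk
            have hexp : 2*d*k.toNat + d * trie (k - ((M+1:ℕ):ℤ)) = d*(2*M) + d * trie (k - (M:ℕ)) := by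
              have c1 : ((k.toNat:ℕ):ℤ) = k := by omega
              have : (↑(2*d*k.toNat + d * trie (k - ((M+1:ℕ):ℤ))) : ℤ)
                  = (↑(d*(2*M) + d * trie (k - (M:ℕ))) : ℤ) := by
                push_cast [trie_cast, c1]
                ring
              exact_mod_cast this
            calc X^(2*d*k.toNat) * B d (2*M) k * X^(d * trie (k - (M+1:ℕ)))
                = B d (2*M) k * X^(2*d*k.toNat + d * trie (k - (M+1:ℕ))) := by
                  rw [pow_add]; ring
              _ = B d (2*M) k * X^(d*(2*M) + d * trie (k - (M:ℕ))) := by rw [hexp]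
              _ = X^(d*(2*M)) * (B d (2*M) k * X^(d * trie (k - (M:ℕ)))) := by
                  rw [pow_add]; ring
          · intro k hk hnk
            simp only [mem_Icc] at hk hnk
            rw [B_gt d (2*M) k (by push_cast; omega)]
            ring
      · -- S3
        refine (sum_shift' (fun j => X^(2*d*(((2*M:ℕ):ℤ)-j).toNat) * B d (2*M) j * X^(d * trie (j + 1 - (M:ℕ))))
          _ (-2) (2*(M:ℤ)) 0 (2*(M:ℤ)+2) 2 (by ring) (by ring) ?_).trans ?_
        · intro k _
          rw [show ((2*M:ℕ):ℤ)-(k-2) = ((2*M:ℕ):ℤ)+2-k by ring,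
            show k - 2 + 1 - ((M:ℕ):ℤ) = k - (M+1:ℕ) by push_cast; ring]
        rw [← Finset.sum_subset (Finset.Icc_subset_Icc (by omega) (by omega) :
            Icc (0:ℤ) (2*M) ⊆ Icc (-2) (2*(M:ℤ))) ?_]
        · rw [rhsF, Finset.mul_sum]
          refine Finset.sum_congr rfl fun k hk => ?_
          rw [mem_Icc] at hk
          have hexp : 2*d*(((2*M:ℕ):ℤ)-k).toNat + d * trie (k + 1 - (M:ℕ))
              = d*(2*M+2) + d * trie (k - (M:ℕ)) := by
            obtain ⟨T, hT⟩ : ∃ T:ℕ, ((2*M:ℕ):ℤ)-k = (T:ℤ) := ⟨(((2*M:ℕ):ℤ)-k).toNat, by omega⟩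
            rw [hT, Int.toNat_natCast]
            have hT' : (T:ℤ) = 2*(M:ℤ) - k := by omega
            have : (↑(2*d*T + d * trie (k + 1 - (M:ℕ))) : ℤ)
                = (↑(d*(2*M+2) + d * trie (k - (M:ℕ))) : ℤ) := by
              push_cast [trie_cast]
              linear_combination (2*(d:ℤ))*hT'
            exact_mod_cast this
          calc X^(2*d*(((2*M:ℕ):ℤ)-k).toNat) * B d (2*M) k * X^(d * trie (k + 1 - (M:ℕ)))
              = B d (2*M) k * X^(2*d*(((2*M:ℕ):ℤ)-k).toNat + d * trie (k + 1 - (M:ℕ))) := by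
                rw [pow_add]; ring
            _ = B d (2*M) k * X^(d*(2*M+2) + d * trie (k - (M:ℕ))) := by rw [hexp]
            _ = X^(d*(2*M+2)) * (B d (2*M) k * X^(d * trie (k - (M:ℕ)))) := by
                rw [pow_add]; ring
        · intro k hk hnk
          simp only [mem_Icc] at hk hnk
          rcases (by omega : k = -1 ∨ k = -2) with h | h <;>
            · rw [h, B_neg d (2*M) _ (by omega)]; ring
    rw [lhsT, prod_range_succ, ← lhsT, ih, key]
    ring

-- new content
def Grow (e : ℤ → ℕ) : Prop := ∀ k : ℤ, k.natAbs ≤ e k + 1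

lemma grow_sqe : Grow sqe := by
  intro k
  have h : (k.natAbs:ℤ) ≤ (sqe k:ℤ) + 1 := by
    rw [sqe_cast, Int.natCast_natAbs]
    nlinarith [abs_mul_abs_self k, abs_nonneg k]
  exact_mod_cast h

lemma grow_trie : Grow trie := by
  intro k
  have h : (k.natAbs:ℤ) ≤ (trie k:ℤ) + 1 := by
    rw [trie_cast, Int.natCast_natAbs]
    rcases abs_cases k with ⟨h1, _⟩ | ⟨h1, h2⟩
    · nlinarith [mul_self_nonneg k]
    · nlinarith [mul_self_nonneg (k+1)]
  exact_mod_cast h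

noncomputable def thetaPartial (d : ℕ) (e : ℤ → ℕ) (K : ℕ) : Z :=
  ∑ k ∈ Icc (-(K:ℤ)) K, X^(d * e k)

noncomputable def Th (d : ℕ) (e : ℤ → ℕ) : Z := mk fun t => coeff (R := ℤ) t (thetaPartial d e (t+1))

lemma grow_big {d : ℕ} (hd : d ≠ 0) {e : ℤ → ℕ} (he : Grow e) {t : ℕ} {k : ℤ}
    (hk : t + 2 ≤ k.natAbs) : t < d * e k := by
  have h1 := he k
  have h2 : e k ≤ d * e k := Nat.le_mul_of_pos_left _ (by omega)
  omega

lemma coeff_thetaPartial_stable {d : ℕ} (hd : d ≠ 0) {e : ℤ → ℕ} (he : Grow e)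
    {t K : ℕ} (hK : t+1 ≤ K) :
    coeff (R := ℤ) t (thetaPartial d e K) = coeff (R := ℤ) t (thetaPartial d e (t+1)) := by
  rw [thetaPartial, thetaPartial, map_sum, map_sum]
  refine (Finset.sum_subset (Finset.Icc_subset_Icc (by omega) (by omega)) ?_).symm
  intro k hk hnk
  simp only [mem_Icc] at hk hnk
  have habs : t + 2 ≤ k.natAbs := by omega
  rw [coeff_X_pow, if_neg (by have := grow_big hd he habs; omega)]

lemma coeff_Th {d : ℕ} {e : ℤ → ℕ} (t : ℕ) :
    coeff (R := ℤ) t (Th d e) = coeff (R := ℤ) t (thetaPartial d e (t+1)) := by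
  rw [Th, coeff_mk]

lemma lim_thetaPartial {d : ℕ} (hd : d ≠ 0) {e : ℤ → ℕ} (he : Grow e) :
    Lim (thetaPartial d e) (Th d e) := by
  intro t
  refine Filter.eventually_atTop.mpr ⟨t+1, fun K hK => ?_⟩
  rw [coeff_thetaPartial_stable hd he hK, coeff_Th]

lemma coeff_CC_mul_Th {d : ℕ} (hd : d ≠ 0) {e : ℤ → ℕ} (he : Grow e) (t : ℕ) :
    coeff (R := ℤ) t (CC d * Th d e)
      = ∑ n ∈ Icc (-((t:ℤ)+1)) ((t:ℤ)+1),
          (if d * e n ≤ t then coeff (R := ℤ) (t - d*e n) (CC d) else 0) := by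
  have step1 : coeff (R := ℤ) t (CC d * Th d e) = coeff (R := ℤ) t (CC d * thetaPartial d e (t+1)) := by
    rw [coeff_mul, coeff_mul]
    refine Finset.sum_congr rfl fun p hp => ?_
    rw [Finset.HasAntidiagonal.mem_antidiagonal] at hp
    congr 1
    rw [coeff_Th, coeff_thetaPartial_stable hd he (by omega : p.2+1 ≤ t+1)]
  rw [step1, thetaPartial, Finset.mul_sum, map_sum]
  refine Finset.sum_congr (by congr 1 <;> push_cast <;> ring) fun n _ => ?_
  rw [coeff_mul_X_pow']

lemma lim_rhsF {d : ℕ} (hd : d ≠ 0) {e : ℤ → ℕ} (he : Grow e) :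
    Lim (rhsF d e) (CC d * Th d e) := by
  intro t
  refine Filter.eventually_atTop.mpr ⟨2*t+5, fun M hM => ?_⟩
  rw [coeff_CC_mul_Th hd he t, rhsF, map_sum]
  have step1 : ∑ k ∈ Icc (0:ℤ) (2*M), coeff (R := ℤ) t (B d (2*M) k * X^(d * e (k - M)))
      = ∑ n ∈ Icc (-(M:ℤ)) M, coeff (R := ℤ) t (B d (2*M) (n + M) * X^(d * e n)) := by
    refine sum_shift' (fun n => coeff (R := ℤ) t (B d (2*M) (n + M) * X^(d * e n)))
      _ (-(M:ℤ)) (M:ℤ) 0 (2*(M:ℤ)) (M:ℤ) (by ring) (by ring) ?_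
    intro k _
    rw [show k - (M:ℤ) + (M:ℤ) = k by ring]
  rw [step1]
  rw [← Finset.sum_subset (Finset.Icc_subset_Icc (by omega) (by omega) :
      Icc (-((t:ℤ)+1)) ((t:ℤ)+1) ⊆ Icc (-(M:ℤ)) M) ?_]
  · refine Finset.sum_congr rfl fun n hn => ?_
    rw [mem_Icc] at hn
    rw [coeff_mul_X_pow']
    by_cases hcase : d * e n ≤ t
    · rw [if_pos hcase, if_pos hcase,
        show n + (M:ℤ) = (M:ℤ) + n by ring,
        coeff_B_eq_CC hd n (by
          have : n.natAbs ≤ t+1 := by omega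
          omega)]
    · rw [if_neg hcase, if_neg hcase]
  · intro n hn hnn
    simp only [mem_Icc] at hn hnn
    have habs : t + 2 ≤ n.natAbs := by omega
    rw [coeff_mul_X_pow', if_neg (by have := grow_big hd he habs; omega)]

lemma lim_B_diag {d : ℕ} (hd : d ≠ 0) : Lim (fun M => B d (2*M) ((M:ℤ))) (CC d) := by
  intro t
  refine Filter.eventually_atTop.mpr ⟨2*t+5, fun M hM => ?_⟩
  have := coeff_B_eq_CC (t := t) (M := M) hd 0 (by simp; omega)
  rwa [add_zero] at this
noncomputable def countSet (d : ℕ) (e : ℤ → ℕ) (t K : ℕ) : Finset (ℤ × ℤ) :=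
  (Icc (-(K:ℤ)) K ×ˢ Icc (-(K:ℤ)) K).filter (fun p => t = d * e p.1 + d * e p.2)

lemma coeff_theta_mul (d : ℕ) (e : ℤ → ℕ) (t K : ℕ) :
    coeff (R := ℤ) t (thetaPartial d e K * thetaPartial d e K) = (countSet d e t K).card := by
  rw [thetaPartial, Finset.sum_mul_sum, map_sum]
  have h1 : ∀ i ∈ Icc (-(K:ℤ)) K, coeff (R := ℤ) t (∑ j ∈ Icc (-(K:ℤ)) K, X^(d * e i) * X^(d * e j))
      = ∑ j ∈ Icc (-(K:ℤ)) K, (if t = d * e i + d * e j then 1 else 0) := by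
    intro i _
    rw [map_sum]
    refine Finset.sum_congr rfl fun j _ => ?_
    rw [← pow_add, coeff_X_pow]
  rw [Finset.sum_congr rfl h1, countSet, Finset.card_filter, ← Finset.sum_product']
  push_cast
  rfl

lemma coeff_theta_mul_rescale (t K : ℕ) :
    coeff (R := ℤ) t (PowerSeries.rescale (-1) (thetaPartial 1 sqe K)
      * PowerSeries.rescale (-1) (thetaPartial 1 sqe K)) = (-1)^t * (countSet 1 sqe t K).card := by
  rw [thetaPartial, map_sum]
  have e1 : ∀ k ∈ Icc (-(K:ℤ)) K, PowerSeries.rescale (-1) ((X:Z)^(1 * sqe k))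
      = PowerSeries.C (R := ℤ) ((-1)^(1 * sqe k)) * X^(1 * sqe k) := fun k _ => rescale_neg_one_X_pow _
  rw [Finset.sum_congr rfl e1, Finset.sum_mul_sum, map_sum]
  have h1 : ∀ i ∈ Icc (-(K:ℤ)) K, coeff (R := ℤ) t (∑ j ∈ Icc (-(K:ℤ)) K,
        (PowerSeries.C (R := ℤ) ((-1)^(1 * sqe i)) * X^(1 * sqe i)) * (PowerSeries.C (R := ℤ) ((-1)^(1 * sqe j)) * X^(1 * sqe j)))
      = ∑ j ∈ Icc (-(K:ℤ)) K, (if t = 1 * sqe i + 1 * sqe j then (-1:ℤ)^t else 0) := by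
    intro i _
    rw [map_sum]
    refine Finset.sum_congr rfl fun j _ => ?_
    have e2 : (PowerSeries.C (R := ℤ) ((-1:ℤ)^(1 * sqe i)) * X^(1 * sqe i)) * (PowerSeries.C (R := ℤ) ((-1)^(1 * sqe j)) * X^(1 * sqe j))
        = PowerSeries.C (R := ℤ) ((-1)^(1 * sqe i + 1 * sqe j)) * X^(1 * sqe i + 1 * sqe j) := by
      rw [pow_add, pow_add, map_mul]
      ring
    rw [e2, coeff_C_mul, coeff_X_pow]
    by_cases h : t = 1 * sqe i + 1 * sqe j
    · rw [if_pos h, if_pos h, ← h, mul_one]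
    · rw [if_neg h, if_neg h, mul_zero]
  rw [Finset.sum_congr rfl h1, ← Finset.sum_product']
  have h2 : ∀ p ∈ Icc (-(K:ℤ)) K ×ˢ Icc (-(K:ℤ)) K,
      (if t = 1 * sqe p.1 + 1 * sqe p.2 then ((-1:ℤ))^t else 0)
      = (-1)^t * (if t = 1 * sqe p.1 + 1 * sqe p.2 then 1 else 0) := by
    intro p _
    by_cases h : t = 1 * sqe p.1 + 1 * sqe p.2 <;> simp [h]
  rw [Finset.sum_congr rfl h2, ← Finset.mul_sum, countSet, Finset.card_filter]
  push_cast
  rfl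

lemma coeff_two_mul (t : ℕ) (f : Z) : coeff (R := ℤ) t (2 * f) = 2 * coeff (R := ℤ) t f := by
  rw [two_mul, map_add, ← two_mul]

lemma coeff_rhs_theta (t K : ℕ) (ht : 1 ≤ t) :
    coeff (R := ℤ) t (2 * X * (thetaPartial 2 trie K * thetaPartial 2 trie K))
      = 2 * (countSet 2 trie (t-1) K).card := by
  have e0 : (2 * X * (thetaPartial 2 trie K * thetaPartial 2 trie K) : Z)
      = 2 * ((thetaPartial 2 trie K * thetaPartial 2 trie K) * X^1) := by ring
  rw [e0, coeff_two_mul, coeff_mul_X_pow', if_pos ht, coeff_theta_mul]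

lemma quad_nonneg (v : ℤ) : 0 ≤ v*v + v := by
  rcases le_or_gt 0 v with h | h
  · nlinarith
  · nlinarith

lemma abs_le_of_quad {u c : ℤ} (h : u*u + u ≤ c) : -(c+1) ≤ u ∧ u ≤ c+1 := by
  constructor <;> nlinarith [sq_nonneg (u+1), sq_nonneg u]

lemma abs_le_of_sq {a c : ℤ} (h : a*a ≤ c) : -(c+1) ≤ a ∧ a ≤ c+1 := by
  constructor <;> nlinarith [sq_nonneg (a+1), sq_nonneg (a-1), sq_nonneg a]

lemma sq_parity (a : ℤ) : ∃ x:ℤ, a*a = a + 2*x := by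
  obtain ⟨y, hy⟩ := Int.even_mul_succ_self (a-1)
  exact ⟨y, by linear_combination hy⟩

lemma card_bij_theta (t K : ℕ) (ht : ¬ Even t) (hK : t+1 ≤ K) :
    (countSet 1 sqe t K).card = (countSet 2 trie (t-1) K).card := by
  have ht1 : 1 ≤ t := Nat.pos_of_ne_zero (by rintro rfl; exact ht (Even.zero))
  have htmod : t % 2 = 1 := Nat.odd_iff.mp (Nat.not_even_iff_odd.mp ht)
  refine Finset.card_bij' (fun p _ => ((p.1+p.2-1)/2, (p.1-p.2-1)/2))
    (fun q _ => (q.1+q.2+1, q.1-q.2)) ?_ ?_ ?_ ?_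
  · -- forward membership
    rintro ⟨a, b⟩ hp
    simp only [countSet, Finset.mem_filter, Finset.mem_product, Finset.mem_Icc] at hp ⊢
    obtain ⟨⟨⟨ha1, ha2⟩, hb1, hb2⟩, heq⟩ := hp
    have hteq : (t:ℤ) = a*a + b*b := by
      have := congrArg (Nat.cast : ℕ → ℤ) heq
      push_cast [sqe_cast] at this
      linarith
    obtain ⟨x, hx⟩ := sq_parity a
    obtain ⟨y, hy⟩ := sq_parity b
    have hab : 2*((a+b-1)/2) = a+b-1 ∧ 2*((a-b-1)/2) = a-b-1 := by
      constructor <;> omega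
    set u := (a+b-1)/2 with hu
    set v := (a-b-1)/2 with hv
    have ha' : a = u+v+1 := by omega
    have hb' : b = u-v := by omega
    rw [ha', hb'] at hteq
    have hcond : ((t-1:ℕ):ℤ) = 2*(u*u+u) + 2*(v*v+v) := by
      push_cast [Nat.cast_sub ht1]
      linear_combination hteq
    refine ⟨⟨?_, ?_⟩, ?_⟩
    · -- u bounds
      have h1 : u*u+u ≤ (t:ℤ) := by
        have := quad_nonneg v
        omega
      have := abs_le_of_quad h1
      constructor <;> [omega; omega]
    · have h1 : v*v+v ≤ (t:ℤ) := by
        have := quad_nonneg u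
        omega
      have := abs_le_of_quad h1
      constructor <;> [omega; omega]
    · -- the count condition
      have : ((t-1:ℕ):ℤ) = ((2 * trie u + 2 * trie v : ℕ) : ℤ) := by
        push_cast [trie_cast]
        linarith [hcond]
      exact_mod_cast this
  · -- backward membership
    rintro ⟨u, v⟩ hq
    simp only [countSet, Finset.mem_filter, Finset.mem_product, Finset.mem_Icc] at hq ⊢
    obtain ⟨⟨⟨hu1, hu2⟩, hv1, hv2⟩, heq⟩ := hq
    have hteq : ((t:ℤ)) - 1 = 2*(u*u+u) + 2*(v*v+v) := by
      have := congrArg (Nat.cast : ℕ → ℤ) heq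
      push_cast [trie_cast, Nat.cast_sub ht1] at this
      linarith
    have hcond : (t:ℤ) = (u+v+1)*(u+v+1) + (u-v)*(u-v) := by linear_combination hteq
    refine ⟨⟨?_, ?_⟩, ?_⟩
    · have h1 : (u+v+1)*(u+v+1) ≤ (t:ℤ) := by nlinarith [sq_nonneg (u-v)]
      have := abs_le_of_sq h1
      constructor <;> omega
    · have h1 : (u-v)*(u-v) ≤ (t:ℤ) := by nlinarith [sq_nonneg (u+v+1)]
      have := abs_le_of_sq h1
      constructor <;> omega
    · have : ((t:ℕ):ℤ) = ((1 * sqe (u+v+1) + 1 * sqe (u-v) : ℕ) : ℤ) := by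
        push_cast [sqe_cast]
        linarith [hcond]
      exact_mod_cast this
  · -- left inverse
    rintro ⟨a, b⟩ hp
    simp only [countSet, Finset.mem_filter, Finset.mem_product, Finset.mem_Icc] at hp
    obtain ⟨-, heq⟩ := hp
    have hteq : (t:ℤ) = a*a + b*b := by
      have := congrArg (Nat.cast : ℕ → ℤ) heq
      push_cast [sqe_cast] at this
      linarith
    obtain ⟨x, hx⟩ := sq_parity a
    obtain ⟨y, hy⟩ := sq_parity b
    have : (a+b-1)/2 + (a-b-1)/2 + 1 = a ∧ (a+b-1)/2 - (a-b-1)/2 = b := by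
      constructor <;> omega
    exact Prod.ext this.1 this.2
  · rintro ⟨u, v⟩ _
    have : (u+v+1 + (u-v) - 1)/2 = u ∧ (u+v+1 - (u-v) - 1)/2 = v := by
      constructor <;> omega
    exact Prod.ext this.1 this.2

lemma counting_coeff (t K : ℕ) (hK : t+1 ≤ K) :
    coeff (R := ℤ) t (thetaPartial 1 sqe K * thetaPartial 1 sqe K
      - PowerSeries.rescale (-1) (thetaPartial 1 sqe K)
        * PowerSeries.rescale (-1) (thetaPartial 1 sqe K))
    = coeff (R := ℤ) t (2 * X * (thetaPartial 2 trie K * thetaPartial 2 trie K)) := by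
  rw [map_sub, coeff_theta_mul, coeff_theta_mul_rescale]
  by_cases ht : Even t
  · rw [ht.neg_one_pow, one_mul, sub_self]
    rcases Nat.eq_zero_or_pos t with h0 | h0
    · subst h0
      have e0 : (2 * X * (thetaPartial 2 trie K * thetaPartial 2 trie K) : Z)
          = 2 * ((thetaPartial 2 trie K * thetaPartial 2 trie K) * X^1) := by ring
      rw [e0, coeff_two_mul, coeff_mul_X_pow', if_neg (by omega)]
      ring
    · rw [coeff_rhs_theta t K h0]
      have : countSet 2 trie (t-1) K = ∅ := by
        rw [countSet, Finset.filter_eq_empty_iff]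
        intro p _
        intro hcon
        obtain ⟨w, hw⟩ := ht
        omega
      rw [this]
      simp
  · rw [(Nat.not_even_iff_odd.mp ht).neg_one_pow, coeff_rhs_theta t K (Nat.pos_of_ne_zero (by rintro rfl; exact ht (Even.zero))),
      card_bij_theta t K ht hK]
    ring
/-! ### Euler products and their limits -/

noncomputable def fP (m : ℕ) : Z := 1 + X^(2*m+1)
noncomputable def fM (m : ℕ) : Z := 1 - X^(2*m+1)
noncomputable def fE (m : ℕ) : Z := 1 + X^(2*m+2)
noncomputable def fA (m : ℕ) : Z := 1 + X^(4*m+4)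
noncomputable def fQ (m : ℕ) : Z := 1 + X^(m+1)
noncomputable def fF1 (m : ℕ) : Z := 1 - X^(m+1)
noncomputable def fF2 (m : ℕ) : Z := 1 - X^(2*m+2)
noncomputable def fF4 (m : ℕ) : Z := 1 - X^(4*m+4)

lemma isOne_add_X_pow {c e : ℕ} (h : c ≤ e) : IsOne (1 + X^e) c := by
  intro j hj
  rw [map_add, coeff_X_pow, if_neg (by omega), add_zero]

lemma isOne_sub_X_pow {c e : ℕ} (h : c ≤ e) : IsOne (1 - X^e) c := by
  intro j hj
  rw [map_sub, coeff_X_pow, if_neg (by omega), sub_zero]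

lemma tame_fP : Tame fP := fun k => isOne_add_X_pow (by omega)
lemma tame_fM : Tame fM := fun k => isOne_sub_X_pow (by omega)
lemma tame_fE : Tame fE := fun k => isOne_add_X_pow (by omega)
lemma tame_fA : Tame fA := fun k => isOne_add_X_pow (by omega)
lemma tame_fQ : Tame fQ := fun k => isOne_add_X_pow (by omega)
lemma tame_fF1 : Tame fF1 := fun k => isOne_sub_X_pow (by omega)
lemma tame_fF2 : Tame fF2 := fun k => isOne_sub_X_pow (by omega)
lemma tame_fF4 : Tame fF4 := fun k => isOne_sub_X_pow (by omega)

noncomputable def Pl : Z := plim fP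
noncomputable def Ml : Z := plim fM
noncomputable def El : Z := plim fE
noncomputable def Al : Z := plim fA
noncomputable def Ql : Z := plim fQ
noncomputable def F1l : Z := plim fF1
noncomputable def F2l : Z := plim fF2
noncomputable def F4l : Z := plim fF4

lemma limP : Lim (fun N => ∏ k ∈ range N, fP k) Pl := lim_plim tame_fP
lemma limM : Lim (fun N => ∏ k ∈ range N, fM k) Ml := lim_plim tame_fM
lemma limE : Lim (fun N => ∏ k ∈ range N, fE k) El := lim_plim tame_fE
lemma limA : Lim (fun N => ∏ k ∈ range N, fA k) Al := lim_plim tame_fA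
lemma limQ : Lim (fun N => ∏ k ∈ range N, fQ k) Ql := lim_plim tame_fQ
lemma limF1 : Lim (fun N => ∏ k ∈ range N, fF1 k) F1l := lim_plim tame_fF1
lemma limF2 : Lim (fun N => ∏ k ∈ range N, fF2 k) F2l := lim_plim tame_fF2
lemma limF4 : Lim (fun N => ∏ k ∈ range N, fF4 k) F4l := lim_plim tame_fF4

lemma tendsto_double : Filter.Tendsto (fun N : ℕ => 2*N) Filter.atTop Filter.atTop :=
  Filter.tendsto_atTop_mono (fun n => by simp only [id_eq]; omega) Filter.tendsto_id

/-- split a product over `range (2N)` into odd and even indexed parts -/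
lemma prod_split (f : ℕ → Z) (N : ℕ) :
    ∏ m ∈ range (2*N), f m = (∏ m ∈ range N, f (2*m)) * (∏ m ∈ range N, f (2*m+1)) := by
  induction N with
  | zero => simp
  | succ N ih =>
    rw [show 2*(N+1) = (2*N+1)+1 by ring, prod_range_succ, prod_range_succ,
      prod_range_succ, prod_range_succ, ih]
    ring

lemma eul1 (N : ℕ) : ∏ m ∈ range (2*N), fQ m = (∏ m ∈ range N, fP m) * (∏ m ∈ range N, fE m) := by
  rw [prod_split]
  congr 1

lemma eul2 (N : ℕ) : ∏ m ∈ range (2*N), fF1 m = (∏ m ∈ range N, fM m) * (∏ m ∈ range N, fF2 m) := by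
  rw [prod_split]
  congr 1

lemma eul3 (N : ℕ) : (∏ m ∈ range N, fQ m) * (∏ m ∈ range N, fF1 m) = ∏ m ∈ range N, fF2 m := by
  rw [← Finset.prod_mul_distrib]
  refine Finset.prod_congr rfl fun m _ => ?_
  rw [fQ, fF1, fF2]
  have : (X:Z)^(m+1) * X^(m+1) = X^(2*m+2) := by rw [← pow_add]; congr 1; ring
  linear_combination -this

lemma eul4 (N : ℕ) : (∏ m ∈ range N, fE m) * (∏ m ∈ range N, fF2 m) = ∏ m ∈ range N, fF4 m := by
  rw [← Finset.prod_mul_distrib]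
  refine Finset.prod_congr rfl fun m _ => ?_
  rw [fE, fF2, fF4]
  have : (X:Z)^(2*m+2) * X^(2*m+2) = X^(4*m+4) := by rw [← pow_add]; congr 1; ring
  linear_combination -this

lemma hQ_eq : Ql = Pl * El := by
  have h1 : Lim (fun N => ∏ m ∈ range (2*N), fQ m) Ql := limQ.comp tendsto_double
  have h2 : Lim (fun N => ∏ m ∈ range (2*N), fQ m) (Pl * El) :=
    (limP.mul limE).congr (Filter.Eventually.of_forall fun N => (eul1 N).symm)
  exact h2.unique h1 |>.symm

lemma hF1_eq : F1l = Ml * F2l := by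
  have h1 : Lim (fun N => ∏ m ∈ range (2*N), fF1 m) F1l := limF1.comp tendsto_double
  have h2 : Lim (fun N => ∏ m ∈ range (2*N), fF1 m) (Ml * F2l) :=
    (limM.mul limF2).congr (Filter.Eventually.of_forall fun N => (eul2 N).symm)
  exact h2.unique h1 |>.symm

lemma hQF1 : Ql * F1l = F2l := by
  have h2 : Lim (fun N => ∏ m ∈ range N, fF2 m) (Ql * F1l) :=
    (limQ.mul limF1).congr (Filter.Eventually.of_forall fun N => eul3 N)
  exact h2.unique limF2

lemma hEF2 : El * F2l = F4l := by
  have h2 : Lim (fun N => ∏ m ∈ range N, fF4 m) (El * F2l) :=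
    (limE.mul limF2).congr (Filter.Eventually.of_forall fun N => eul4 N)
  exact h2.unique limF4

/-! ### more limit helpers -/

theorem Lim.pow {s : ℕ → Z} {L : Z} (h : Lim s L) (n : ℕ) :
    Lim (fun N => (s N)^n) (L^n) := by
  induction n with
  | zero => simpa using Lim.const 1
  | succ n ih =>
    simp only [pow_succ]
    exact ih.mul h

theorem Lim.of_shift {s : ℕ → Z} {L : Z} (h : Lim (fun N => s (N+1)) L) : Lim s L := by
  intro t
  obtain ⟨N₀, hN₀⟩ := Filter.eventually_atTop.mp (h t)
  refine Filter.eventually_atTop.mpr ⟨N₀+1, fun N hN => ?_⟩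
  have := hN₀ (N-1) (by omega)
  simpa [show N-1+1 = N by omega] using this

/-! ### values of Phi and the CC relations -/

lemma Phi_one_val (N : ℕ) : ((Phi 1 N : Zˣ) : Z) = ∏ m ∈ range N, fF2 m := by
  induction N with
  | zero => rw [Phi_zero]; simp
  | succ N ih =>
    rw [Phi_val_succ one_ne_zero, ih, prod_range_succ, fF2,
      show 2*1*(N+1) = 2*N+2 by ring]

lemma Phi_two_val (N : ℕ) : ((Phi 2 N : Zˣ) : Z) = ∏ m ∈ range N, fF4 m := by
  induction N with
  | zero => rw [Phi_zero]; simp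
  | succ N ih =>
    rw [Phi_val_succ two_ne_zero, ih, prod_range_succ, fF4,
      show 2*2*(N+1) = 4*N+4 by ring]

lemma F2ne : F2l ≠ 0 := ne_zero_of_constCoeff_one (constantCoeff_plim tame_fF2)
lemma F4ne : F4l ≠ 0 := ne_zero_of_constCoeff_one (constantCoeff_plim tame_fF4)
lemma Elne : El ≠ 0 := ne_zero_of_constCoeff_one (constantCoeff_plim tame_fE)
lemma Plne : Pl ≠ 0 := ne_zero_of_constCoeff_one (constantCoeff_plim tame_fP)
lemma Mlne : Ml ≠ 0 := ne_zero_of_constCoeff_one (constantCoeff_plim tame_fM)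

lemma hC1F2 : CC 1 * F2l = 1 := by
  have hfun : ∀ M : ℕ, B 1 (2*M) ((M:ℕ):ℤ) * (∏ m ∈ range M, fF2 m) * (∏ m ∈ range M, fF2 m)
      = ∏ m ∈ range (2*M), fF2 m := by
    intro M
    have := B_clear one_ne_zero (2*M) M (by omega)
    rw [show 2*M - M = M by omega, Phi_one_val, Phi_one_val] at this
    exact this
  have h1 : Lim (fun M => B 1 (2*M) ((M:ℕ):ℤ) * (∏ m ∈ range M, fF2 m) * (∏ m ∈ range M, fF2 m))
      (CC 1 * F2l * F2l) := ((lim_B_diag one_ne_zero).mul limF2).mul limF2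
  have h2 : Lim (fun M => ∏ m ∈ range (2*M), fF2 m) F2l := limF2.comp tendsto_double
  have key : CC 1 * F2l * F2l = F2l :=
    (h1.congr (Filter.Eventually.of_forall hfun)).unique h2
  have : (CC 1 * F2l) * F2l = 1 * F2l := by rw [one_mul]; exact key
  exact mul_right_cancel₀ F2ne this

lemma hC2F4 : CC 2 * F4l = 1 := by
  have hfun : ∀ M : ℕ, B 2 (2*M) ((M:ℕ):ℤ) * (∏ m ∈ range M, fF4 m) * (∏ m ∈ range M, fF4 m)
      = ∏ m ∈ range (2*M), fF4 m := by
    intro M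
    have := B_clear two_ne_zero (2*M) M (by omega)
    rw [show 2*M - M = M by omega, Phi_two_val, Phi_two_val] at this
    exact this
  have h1 : Lim (fun M => B 2 (2*M) ((M:ℕ):ℤ) * (∏ m ∈ range M, fF4 m) * (∏ m ∈ range M, fF4 m))
      (CC 2 * F4l * F4l) := ((lim_B_diag two_ne_zero).mul limF4).mul limF4
  have h2 : Lim (fun M => ∏ m ∈ range (2*M), fF4 m) F4l := limF4.comp tendsto_double
  have key : CC 2 * F4l * F4l = F4l :=
    (h1.congr (Filter.Eventually.of_forall hfun)).unique h2
  have : (CC 2 * F4l) * F4l = 1 * F4l := by rw [one_mul]; exact key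
  exact mul_right_cancel₀ F4ne this

/-! ### JTP consequences -/

lemma lhsS_one_eq (M : ℕ) : (∏ k ∈ range M, fP k) * (∏ k ∈ range M, fP k) = lhsS 1 M := by
  rw [lhsS]
  have : ∀ m ∈ range M, (1 + (X:Z)^(1*(2*m+1)))^2 = fP m ^ 2 := by
    intro m _
    rw [fP, one_mul]
  rw [Finset.prod_congr rfl this, Finset.prod_pow]
  ring

lemma h7 : Pl * Pl = CC 1 * Th 1 sqe := by
  have h1 : Lim (lhsS 1) (Pl * Pl) :=
    (limP.mul limP).congr (Filter.Eventually.of_forall lhsS_one_eq)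
  have h2 : Lim (lhsS 1) (CC 1 * Th 1 sqe) :=
    (lim_rhsF one_ne_zero grow_sqe).congr
      (Filter.Eventually.of_forall fun M => (jtpS one_ne_zero M).symm)
  exact h1.unique h2

lemma limS2 : Lim (fun M => ∏ m ∈ range M, (1 + (X:Z)^(2*(2*m)))) (2 * Al) := by
  apply Lim.of_shift
  refine ((Lim.const 2).mul limA).congr (Filter.Eventually.of_forall fun N => ?_)
  rw [prod_range_succ']
  have h0 : (1 + (X:Z)^(2*(2*0))) = 2 := by norm_num
  rw [h0]
  have : ∀ m ∈ range N, (1 + (X:Z)^(2*(2*(m+1)))) = fA m := by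
    intro m _
    rw [fA, show 2*(2*(m+1)) = 4*m+4 by ring]
  rw [Finset.prod_congr rfl this]
  ring

lemma lhsT_two_eq (M : ℕ) :
    (∏ k ∈ range M, fA k) * (∏ m ∈ range M, (1 + (X:Z)^(2*(2*m)))) = lhsT 2 M := by
  rw [lhsT, Finset.prod_mul_distrib]
  congr 1
  refine Finset.prod_congr rfl fun m _ => ?_
  rw [fA, show 2*(2*m+2) = 4*m+4 by ring]

lemma h8 : Al * (2 * Al) = CC 2 * Th 2 trie := by
  have h1 : Lim (lhsT 2) (Al * (2 * Al)) :=
    (limA.mul limS2).congr (Filter.Eventually.of_forall lhsT_two_eq)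
  have h2 : Lim (lhsT 2) (CC 2 * Th 2 trie) :=
    (lim_rhsF two_ne_zero grow_trie).congr
      (Filter.Eventually.of_forall fun M => (jtpT two_ne_zero M).symm)
  exact h1.unique h2

/-! ### rescale facts -/

lemma rescale_fP (m : ℕ) : PowerSeries.rescale (-1 : ℤ) (fP m) = fM m := by
  rw [fP, fM, map_add, map_one, rescale_neg_one_X_pow,
    (Odd.neg_one_pow ⟨m, by ring⟩ : ((-1:ℤ))^(2*m+1) = -1)]
  simp only [map_neg, map_one]
  ring

lemma hMb : Ml = PowerSeries.rescale (-1 : ℤ) Pl := by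
  have h1 : Lim (fun N => PowerSeries.rescale (-1:ℤ) (∏ k ∈ range N, fP k))
      (PowerSeries.rescale (-1) Pl) := limP.rescale (-1)
  have h2 : Lim (fun N => PowerSeries.rescale (-1:ℤ) (∏ k ∈ range N, fP k)) Ml := by
    refine limM.congr (Filter.Eventually.of_forall fun N => ?_)
    rw [map_prod]
    exact (Finset.prod_congr rfl fun m _ => (rescale_fP m).symm)
  exact h2.unique h1

lemma hC1even : PowerSeries.rescale (-1:ℤ) (CC 1) = CC 1 := by
  have h1 : Lim (fun M => PowerSeries.rescale (-1:ℤ) (B 1 (2*M) ((M:ℕ):ℤ)))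
      (PowerSeries.rescale (-1) (CC 1)) := (lim_B_diag one_ne_zero).rescale (-1)
  have h2 : Lim (fun M => PowerSeries.rescale (-1:ℤ) (B 1 (2*M) ((M:ℕ):ℤ))) (CC 1) :=
    (lim_B_diag one_ne_zero).congr (Filter.Eventually.of_forall fun M => (B_even 1 (2*M) M).symm)
  exact h1.unique h2

lemma h9 : Ml * Ml = CC 1 * (PowerSeries.rescale (-1) (Th 1 sqe)) := by
  rw [hMb, ← map_mul, h7, map_mul, hC1even]

/-! ### the theta identity in the limit -/

lemma main_theta : Th 1 sqe * Th 1 sqe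
    - PowerSeries.rescale (-1) (Th 1 sqe) * PowerSeries.rescale (-1) (Th 1 sqe)
    = 2 * X * (Th 2 trie * Th 2 trie) := by
  have limTh1 := lim_thetaPartial one_ne_zero grow_sqe
  have limTh2 := lim_thetaPartial two_ne_zero grow_trie
  have hs : Lim (fun K => thetaPartial 1 sqe K * thetaPartial 1 sqe K
      - PowerSeries.rescale (-1) (thetaPartial 1 sqe K)
        * PowerSeries.rescale (-1) (thetaPartial 1 sqe K))
      (Th 1 sqe * Th 1 sqe
        - PowerSeries.rescale (-1) (Th 1 sqe) * PowerSeries.rescale (-1) (Th 1 sqe)) :=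
    (limTh1.mul limTh1).sub ((limTh1.rescale (-1)).mul (limTh1.rescale (-1)))
  have hR : Lim (fun K => 2 * X * (thetaPartial 2 trie K * thetaPartial 2 trie K))
      (2 * X * (Th 2 trie * Th 2 trie)) := (Lim.const (2*X)).mul (limTh2.mul limTh2)
  have hs2 : Lim (fun K => thetaPartial 1 sqe K * thetaPartial 1 sqe K
      - PowerSeries.rescale (-1) (thetaPartial 1 sqe K)
        * PowerSeries.rescale (-1) (thetaPartial 1 sqe K))
      (2 * X * (Th 2 trie * Th 2 trie)) := by
    intro t
    filter_upwards [hR t, Filter.eventually_ge_atTop (t+1)] with K h1 h2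
    rw [counting_coeff t K h2, h1]
  exact hs.unique hs2

/-! ### inverse bookkeeping -/

lemma inv_unique {a x y : Z} (hx : a*x = 1) (hy : a*y = 1) : x = y := by
  calc x = x * (a*y) := by rw [hy, mul_one]
  _ = y * (a*x) := by ring
  _ = y := by rw [hx, mul_one]

lemma mul_invOfUnit_one {f : Z} (h : constantCoeff (R := ℤ) f = 1) : f * invOfUnit f 1 = 1 :=
  mul_invOfUnit f 1 (by rw [h, Units.val_one])

lemma ringInverse_eq {f : Z} (h : constantCoeff (R := ℤ) f = 1) :
    Ring.inverse f = invOfUnit f 1 :=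
  inv_unique (Ring.mul_inverse_cancel f (isUnit_iff_constantCoeff.mpr (by rw [h]; exact isUnit_one)))
    (mul_invOfUnit_one h)

lemma constCoeff_one_add {e : ℕ} (h : e ≠ 0) : constantCoeff (R := ℤ) ((1 + X^e : Z)) = 1 := by
  rw [map_add, map_one, map_pow, constantCoeff_X, zero_pow h, add_zero]

lemma constCoeff_one_sub {e : ℕ} (h : e ≠ 0) : constantCoeff (R := ℤ) ((1 - X^e : Z)) = 1 := by
  rw [map_sub, map_one, map_pow, constantCoeff_X, zero_pow h, sub_zero]

lemma constCoeff_prod_fM (N : ℕ) : constantCoeff (R := ℤ) (∏ k ∈ range N, fM k) = 1 := by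
  rw [map_prod]
  exact Finset.prod_eq_one fun k _ => by rw [fM]; exact constCoeff_one_sub (by omega)

lemma Ffactor_partial (N : ℕ) : ∏ k ∈ range N, Ffactor k
    = (∏ k ∈ range N, fP k)^2 * Ring.inverse ((∏ k ∈ range N, fM k)^2) := by
  induction N with
  | zero => simp [Ring.inverse_one]
  | succ N ih =>
    rw [prod_range_succ, ih, prod_range_succ, prod_range_succ, Ffactor, fP, fM,
      mul_pow, mul_pow, Ring.mul_inverse_rev]
    ring

lemma hcMM : constantCoeff (R := ℤ) (Ml * Ml) = 1 := by
  have h : constantCoeff (R := ℤ) Ml = 1 := constantCoeff_plim tame_fM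
  rw [map_mul, h, mul_one]

lemma hcPP : constantCoeff (R := ℤ) (Pl * Pl) = 1 := by
  have h : constantCoeff (R := ℤ) Pl = 1 := constantCoeff_plim tame_fP
  rw [map_mul, h, mul_one]

lemma limFfactor : Lim (fun N => ∏ k ∈ range N, Ffactor k)
    ((Pl * Pl) * invOfUnit (Ml * Ml) 1) := by
  refine ((limP.mul limP).mul ((limM.mul limM).invOfUnit)).congr
    (Filter.Eventually.of_forall fun N => ?_)
  rw [Ffactor_partial]
  have hc : constantCoeff (R := ℤ) ((∏ k ∈ range N, fM k) * (∏ k ∈ range N, fM k)) = 1 := by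
    rw [map_mul, constCoeff_prod_fM, mul_one]
  rw [show ((∏ k ∈ range N, fM k)^2 : Z) = (∏ k ∈ range N, fM k) * (∏ k ∈ range N, fM k) by ring,
    ringInverse_eq hc]
  ring

lemma limGfactor : Lim (fun N => ∏ k ∈ range N,
    ((1 + X^(4*(k+1)))^4 * (1 + X^(2*(k+1)))^4 : Z)) (Al^4 * El^4) := by
  refine ((limA.pow 4).mul (limE.pow 4)).congr (Filter.Eventually.of_forall fun N => ?_)
  rw [Finset.prod_mul_distrib, ← Finset.prod_pow, ← Finset.prod_pow]
  rfl

/-! ### final assembly -/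

lemma h11 : Pl * El * Ml = 1 := by
  have key : (Pl * El * Ml) * F2l = 1 * F2l := by
    rw [one_mul]
    calc (Pl * El * Ml) * F2l = Ql * F1l := by rw [hQ_eq, hF1_eq]; ring
    _ = F2l := hQF1
  exact mul_right_cancel₀ F2ne key

lemma h12 : CC 1 = CC 2 * El := by
  calc CC 1 = CC 1 * (CC 2 * F4l) := by rw [hC2F4, mul_one]
  _ = (CC 2 * El) * (CC 1 * F2l) := by rw [← hEF2]; ring
  _ = CC 2 * El := by rw [hC1F2, mul_one]

lemma core : ((Pl*Pl)*(Pl*Pl) - (Ml*Ml)*(Ml*Ml))*(El*El)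
    = (8*X*(Al^4*El^4)) * ((Pl*Pl)*(Ml*Ml)*(El*El)) := by
  calc ((Pl*Pl)*(Pl*Pl) - (Ml*Ml)*(Ml*Ml))*(El*El)
      = ((CC 1 * Th 1 sqe)*(CC 1 * Th 1 sqe)
        - (CC 1 * (PowerSeries.rescale (-1) (Th 1 sqe)))*(CC 1 * (PowerSeries.rescale (-1) (Th 1 sqe))))*(El*El) := by
        rw [h7, h9]
    _ = (CC 1*(CC 1*(Th 1 sqe * Th 1 sqe
        - PowerSeries.rescale (-1) (Th 1 sqe) * PowerSeries.rescale (-1) (Th 1 sqe))))*(El*El) := by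
        ring
    _ = (CC 1*(CC 1*(2*X*(Th 2 trie * Th 2 trie))))*(El*El) := by rw [main_theta]
    _ = ((CC 2*El)*((CC 2*El)*(2*X*(Th 2 trie * Th 2 trie))))*(El*El) := by rw [← h12]
    _ = 2*X*((CC 2 * Th 2 trie)*(CC 2 * Th 2 trie))*(El*El*(El*El)) := by ring
    _ = 2*X*((Al*(2*Al))*(Al*(2*Al)))*(El*El*(El*El)) := by rw [← h8]
    _ = (8*X*(Al^4*El^4)) * 1 := by ring
    _ = (8*X*(Al^4*El^4)) * ((Pl*El*Ml)*(Pl*El*Ml)) := by rw [h11]; ring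
    _ = (8*X*(Al^4*El^4)) * ((Pl*Pl)*(Ml*Ml)*(El*El)) := by ring

theorem stmt4 :
    ∃ F g : PowerSeries ℤ,
      CoeffwiseProd Ffactor F ∧
      CoeffwiseProd (fun k : ℕ =>
        (1 + X ^ (4 * (k + 1))) ^ 4 * (1 + X ^ (2 * (k + 1))) ^ 4) g ∧
      F - PowerSeries.rescale (-1 : ℤ) F = 8 * X * g := by
  refine ⟨(Pl * Pl) * invOfUnit (Ml * Ml) 1, Al^4 * El^4, limFfactor, limGfactor, ?_⟩
  have hiM : (Ml*Ml) * invOfUnit (Ml*Ml) 1 = 1 := mul_invOfUnit_one hcMM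
  have hiP : (Pl*Pl) * invOfUnit (Pl*Pl) 1 = 1 := mul_invOfUnit_one hcPP
  have hresPP : PowerSeries.rescale (-1:ℤ) (Pl*Pl) = Ml*Ml := by rw [map_mul, ← hMb]
  have hresMM : PowerSeries.rescale (-1:ℤ) (Ml*Ml) = Pl*Pl := by
    rw [map_mul, hMb, rescale_rescale, show ((-1:ℤ)*(-1)) = 1 by ring, rescale_one]
    rfl
  have hresInv : PowerSeries.rescale (-1:ℤ) (invOfUnit (Ml*Ml) 1) = invOfUnit (Pl*Pl) 1 := by
    refine inv_unique (a := Pl*Pl) ?_ hiP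
    rw [← hresMM, ← map_mul, hiM, map_one]
  have hres : PowerSeries.rescale (-1:ℤ) ((Pl*Pl) * invOfUnit (Ml*Ml) 1)
      = (Ml*Ml) * invOfUnit (Pl*Pl) 1 := by rw [map_mul, hresPP, hresInv]
  rw [hres]
  have hne : ((Pl*Pl)*(Ml*Ml)*(El*El)) ≠ 0 :=
    mul_ne_zero (mul_ne_zero (mul_ne_zero Plne Plne) (mul_ne_zero Mlne Mlne))
      (mul_ne_zero Elne Elne)
  apply mul_right_cancel₀ hne
  linear_combination core + ((Pl*Pl)*(Pl*Pl)*(El*El))*hiM - ((Ml*Ml)*(Ml*Ml)*(El*El))*hiP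

end Stmt4
end

section
/- For a partition μ of n with exactly s distinct part sizes having multiplicities m_1, …, m_s, set N_μ = 4^s·∏_{i=1}^s m_i (with N_μ = 1 for the empty partition). Then ∑_{μ ⊢ n} N_μ = [x^n] ∏_{s≥1} (1+x^s)² (1−x^s)^{−2}. -/
/-!
Statement 7: ∑_{μ ⊢ n} N_μ = [x^n] ∏_{s≥1} (1+x^s)² (1−x^s)^{−2}, where
N_μ = 4^s · ∏ m_i over the distinct part sizes of μ with multiplicities m_i.
-/

open scoped Classical
open PowerSeries

namespace Stmt7

/-- Coefficientwise convergence of an infinite product of formal power series over ℚ. -/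
def CoeffwiseProd (f : ℕ → PowerSeries ℚ) (g : PowerSeries ℚ) : Prop :=
  ∀ n : ℕ, ∀ᶠ N in Filter.atTop,
    PowerSeries.coeff n (∏ k ∈ Finset.range N, f k) = PowerSeries.coeff n g

/-- `N_μ = 4^s · ∏_{i=1}^s m_i`, where `s` is the number of distinct part sizes of `μ`
and `m_1, …, m_s` their multiplicities. -/
noncomputable def NN {n : ℕ} (c : Nat.Partition n) : ℕ :=
  4 ^ c.parts.toFinset.card * ∏ ℓ ∈ c.parts.toFinset, c.parts.count ℓ

/-! ### Auxiliary definitions and lemmas -/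

noncomputable def w : ℕ → ℚ := fun m => if m = 0 then 1 else 4 * m

noncomputable def F (k : ℕ) : PowerSeries ℚ :=
  PowerSeries.mk fun j => if (k + 1) ∣ j then w (j / (k + 1)) else 0

lemma coeff_F (k j : ℕ) :
    coeff j (F k) = if (k + 1) ∣ j then w (j / (k + 1)) else 0 := coeff_mk _ _

set_option linter.unnecessarySeqFocus false in
lemma F_mul (k : ℕ) : F k * (1 - X ^ (k + 1)) ^ 2 = (1 + X ^ (k + 1)) ^ 2 := by
  have ha0 : 0 < k + 1 := Nat.succ_pos k
  ext j
  rw [show F k * (1 - (X : PowerSeries ℚ) ^ (k+1)) ^ 2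
      = F k - (F k * X ^ (k+1)) - (F k * X ^ (k+1)) + F k * X ^ ((k+1) + (k+1)) by ring,
    show (1 + (X : PowerSeries ℚ) ^ (k+1)) ^ 2 = 1 + X ^ (k+1) + X ^ (k+1) + X ^ ((k+1) + (k+1)) by ring]
  simp only [map_add, map_sub, coeff_mul_X_pow', coeff_X_pow, coeff_one, coeff_F]
  by_cases h : (k+1) ∣ j
  · obtain ⟨m, rfl⟩ := h
    have key : ∀ m : ℕ, w m - (if 1 ≤ m then w (m - 1) else 0)
        - (if 1 ≤ m then w (m - 1) else 0) + (if 2 ≤ m then w (m - 2) else 0)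
        = ((if m = 0 then (1:ℚ) else 0) + (if m = 1 then 1 else 0))
          + (if m = 1 then 1 else 0) + (if m = 2 then 1 else 0) := by
      intro m
      match m with
      | 0 => simp [w]
      | 1 => norm_num [w]
      | 2 => norm_num [w]
      | (m+3) => simp only [w]; norm_num; push_cast; ring
    have e1 : (k+1) ≤ (k+1) * m ↔ 1 ≤ m := by
      constructor
      · intro hle; by_contra hm; push_neg at hm; interval_cases m <;> omega
      · intro hm; have := Nat.mul_le_mul_left (k+1) hm; omega
    have e2 : (k+1) + (k+1) ≤ (k+1) * m ↔ 2 ≤ m := by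
      constructor
      · intro hle; by_contra hm; push_neg at hm; interval_cases m <;> omega
      · intro hm; have := Nat.mul_le_mul_left (k+1) hm; omega
    have d1 : (k+1) * m - (k+1) = (k+1) * (m - 1) := (Nat.mul_sub_one _ m) ▸ rfl
    have d2 : (k+1) * m - ((k+1) + (k+1)) = (k+1) * (m - 2) := by
      rw [Nat.mul_sub_left_distrib]; ring_nf
    have dv : (k+1) ∣ (k+1) * m := Dvd.intro m rfl
    have dv1 : (k+1) ∣ (k+1) * (m - 1) := Dvd.intro _ rfl
    have dv2 : (k+1) ∣ (k+1) * (m - 2) := Dvd.intro _ rfl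
    have q0 : (k+1) * m / (k+1) = m := Nat.mul_div_cancel_left m ha0
    have q1 : (k+1) * (m - 1) / (k+1) = m - 1 := Nat.mul_div_cancel_left _ ha0
    have q2 : (k+1) * (m - 2) / (k+1) = m - 2 := Nat.mul_div_cancel_left _ ha0
    have em0 : (k+1) * m = 0 ↔ m = 0 := by
      constructor
      · intro h0; rcases Nat.mul_eq_zero.mp h0 with h|h; · omega
        · exact h
      · rintro rfl; ring
    have em1 : (k+1) * m = (k+1) ↔ m = 1 := by
      constructor
      · intro h0; exact Nat.eq_of_mul_eq_mul_left ha0 (by omega)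
      · rintro rfl; ring
    have em2 : (k+1) * m = (k+1) + (k+1) ↔ m = 2 := by
      rw [show (k+1) + (k+1) = (k+1) * 2 by ring]
      constructor
      · intro h0; exact Nat.eq_of_mul_eq_mul_left ha0 h0
      · rintro rfl; rfl
    simp only [d1, d2, if_pos dv, if_pos dv1, if_pos dv2, q0, q1, q2]
    simp only [e1, e2, em0, em1, em2]
    exact key m
  · have h1 : ¬ ((k+1) ≤ j ∧ (k+1) ∣ j - (k+1)) := by
      rintro ⟨hle, hd⟩
      exact h (by simpa [Nat.sub_add_cancel hle] using Dvd.dvd.add hd (dvd_refl (k+1)))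
    have h2 : ¬ ((k+1) + (k+1) ≤ j ∧ (k+1) ∣ j - ((k+1) + (k+1))) := by
      rintro ⟨hle, hd⟩
      refine h ?_
      have : (k+1) ∣ (j - ((k+1)+(k+1))) + ((k+1)+(k+1)) :=
        Dvd.dvd.add hd (by exact Dvd.intro 2 (by ring))
      simpa [Nat.sub_add_cancel hle] using this
    have hj0 : j ≠ 0 := fun h0 => h (h0 ▸ dvd_zero _)
    have hj1 : j ≠ k + 1 := fun h0 => h (h0 ▸ dvd_refl _)
    have hj2 : j ≠ (k+1) + (k+1) := fun h0 => h (h0 ▸ Dvd.intro 2 (by ring))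
    rw [if_neg h, if_neg hj0, if_neg hj1, if_neg hj2]
    by_cases hle : (k+1) ≤ j
    · have : ¬ (k+1) ∣ j - (k+1) := fun hd => h1 ⟨hle, hd⟩
      rw [if_pos hle, if_neg this]
      by_cases hle2 : (k+1)+(k+1) ≤ j
      · have : ¬ (k+1) ∣ j - ((k+1)+(k+1)) := fun hd => h2 ⟨hle2, hd⟩
        rw [if_pos hle2, if_neg this]; ring
      · rw [if_neg hle2]; ring
    · have hle2 : ¬ (k+1)+(k+1) ≤ j := by omega
      rw [if_neg hle, if_neg hle2]; ring

lemma F_eq (k : ℕ) :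
    (1 + X ^ (k + 1)) ^ 2 * ((1 - X ^ (k + 1) : PowerSeries ℚ)⁻¹) ^ 2 = F k := by
  have hc : constantCoeff (1 - X ^ (k + 1) : PowerSeries ℚ) ≠ 0 := by
    simp
  have hinv : (1 - X ^ (k + 1) : PowerSeries ℚ) * (1 - X ^ (k + 1))⁻¹ = 1 :=
    PowerSeries.mul_inv_cancel _ hc
  calc (1 + X ^ (k + 1)) ^ 2 * ((1 - X ^ (k + 1) : PowerSeries ℚ)⁻¹) ^ 2
      = (F k * (1 - X ^ (k + 1)) ^ 2) * ((1 - X ^ (k + 1))⁻¹) ^ 2 := by rw [F_mul]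
    _ = F k * ((1 - X ^ (k + 1)) * (1 - X ^ (k + 1))⁻¹) ^ 2 := by ring
    _ = F k := by rw [hinv]; ring

lemma count_repl (N : ℕ) (f : ℕ → ℕ) (j : ℕ) :
    Multiset.count j (∑ k ∈ Finset.range N, Multiset.replicate (f k) (k + 1))
      = if 1 ≤ j ∧ j ≤ N then f (j - 1) else 0 := by
  rw [Multiset.count_sum']
  cases j with
  | zero => simp [Multiset.count_replicate]
  | succ j =>
    simp only [Multiset.count_replicate]
    have h : ∀ k, (if (k + 1 : ℕ) = j + 1 then f k else 0) = (if k = j then f k else 0) := by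
      intro k; split_ifs <;> omega
    simp_rw [h]
    rw [Finset.sum_ite_eq' (Finset.range N) j f]
    simp only [Finset.mem_range]
    split_ifs <;> first | rfl | omega

lemma part_le {n : ℕ} (c : Nat.Partition n) {ℓ : ℕ} (h : ℓ ∈ c.parts) : ℓ ≤ n := by
  have := Multiset.single_le_sum (fun x _ => Nat.zero_le x) ℓ h
  rwa [c.parts_sum] at this

lemma NN_eq {n : ℕ} (N : ℕ) (hn : n ≤ N) (c : Nat.Partition n) :
    (NN c : ℚ) = ∏ k ∈ Finset.range N, w (c.parts.count (k + 1)) := by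
  have hinj : ∀ x ∈ Finset.range N, ∀ y ∈ Finset.range N, x + 1 = y + 1 → x = y :=
    fun a _ b _ h => by omega
  rw [show (∏ k ∈ Finset.range N, w (c.parts.count (k + 1)))
      = ∏ ℓ ∈ (Finset.range N).image (· + 1), w (c.parts.count ℓ) from
    (Finset.prod_image (f := fun ℓ => w (c.parts.count ℓ)) hinj).symm]
  have hsub : c.parts.toFinset ⊆ (Finset.range N).image (· + 1) := by
    intro ℓ hℓ
    rw [Multiset.mem_toFinset] at hℓ
    have h1 : 0 < ℓ := c.parts_pos hℓ
    have h2 : ℓ ≤ n := part_le c hℓ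
    simp only [Finset.mem_image, Finset.mem_range]
    exact ⟨ℓ - 1, by omega, by omega⟩
  rw [← Finset.prod_subset hsub (fun x _ hx => by
    rw [Multiset.count_eq_zero_of_notMem (by simpa [Multiset.mem_toFinset] using hx)]
    simp [w])]
  have : ∀ ℓ ∈ c.parts.toFinset, w (c.parts.count ℓ) = ((4 * c.parts.count ℓ : ℕ) : ℚ) := by
    intro ℓ hℓ
    have : c.parts.count ℓ ≠ 0 := by
      simpa [Multiset.count_eq_zero] using Multiset.mem_toFinset.mp hℓ
    simp [w, this]
  rw [Finset.prod_congr rfl this, ← Nat.cast_prod]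
  congr 1
  rw [NN, Finset.prod_mul_distrib, Finset.prod_const]

noncomputable def toL {n : ℕ} (N : ℕ) (c : Nat.Partition n) : ℕ →₀ ℕ :=
  Finsupp.onFinset (Finset.range N)
    (fun k => if k < N then (k + 1) * c.parts.count (k + 1) else 0)
    (fun k h => by rw [Finset.mem_range]; by_contra hc; exact h (by simp [hc]))

lemma toL_apply {n : ℕ} (N : ℕ) (c : Nat.Partition n) {k : ℕ} (h : k < N) :
    toL N c k = (k + 1) * c.parts.count (k + 1) := by simp [toL, h]

lemma toL_apply_ge {n : ℕ} (N : ℕ) (c : Nat.Partition n) {k : ℕ} (h : ¬ k < N) :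
    toL N c k = 0 := by simp [toL, h]

lemma count_zero_of_gt {n : ℕ} (N : ℕ) (hn : n ≤ N) (c : Nat.Partition n) {j : ℕ}
    (h : ¬ (1 ≤ j ∧ j ≤ N)) : c.parts.count j = 0 := by
  rw [Multiset.count_eq_zero]
  intro hmem
  exact h ⟨c.parts_pos hmem, le_trans (part_le c hmem) hn⟩

lemma parts_decomp {n : ℕ} (N : ℕ) (hn : n ≤ N) (c : Nat.Partition n) :
    c.parts = ∑ k ∈ Finset.range N, Multiset.replicate (c.parts.count (k + 1)) (k + 1) := by
  rw [Multiset.ext]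
  intro j
  rw [count_repl]
  split_ifs with h
  · congr 1; omega
  · exact count_zero_of_gt N hn c h

lemma msum_sum (s : Finset ℕ) (M : ℕ → Multiset ℕ) :
    (∑ k ∈ s, M k).sum = ∑ k ∈ s, (M k).sum := map_sum Multiset.sumAddMonoidHom M s

lemma toL_sum {n : ℕ} (N : ℕ) (hn : n ≤ N) (c : Nat.Partition n) :
    ∑ k ∈ Finset.range N, toL N c k = n := by
  have h1 : c.parts.sum = n := c.parts_sum
  rw [parts_decomp N hn c] at h1
  rw [msum_sum] at h1
  simp only [Multiset.sum_replicate, smul_eq_mul] at h1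
  refine Eq.trans (Finset.sum_congr rfl fun k hk => ?_) h1
  rw [toL_apply N c (Finset.mem_range.mp hk), mul_comm]

lemma key (n N : ℕ) (hn : n ≤ N) :
    coeff n (∏ k ∈ Finset.range N, F k) = ∑ c : Nat.Partition n, (NN c : ℚ) := by
  rw [PowerSeries.coeff_prod]
  simp only [coeff_F]
  rw [Finset.sum_congr rfl fun l _ => Finset.prod_ite_zero, Finset.sum_ite,
    Finset.sum_const_zero, add_zero]
  simp_rw [NN_eq N hn]
  refine Finset.sum_bij' (i := fun l hl => ?_) (j := fun c _ => toL N c) ?_ ?_ ?_ ?_ ?_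
  · -- construct partition from l
    have hl1 := (Finset.mem_filter.mp hl).1
    have hl2 := (Finset.mem_filter.mp hl).2
    rw [Finset.mem_finsuppAntidiag] at hl1
    refine ⟨∑ k ∈ Finset.range N, Multiset.replicate (l k / (k + 1)) (k + 1), ?_, ?_⟩
    · intro i hi
      rw [Multiset.mem_sum] at hi
      obtain ⟨k, _, hk⟩ := hi
      rw [Multiset.eq_of_mem_replicate hk]
      omega
    · rw [msum_sum]
      simp only [Multiset.sum_replicate, smul_eq_mul]
      rw [← hl1.1]
      refine Finset.sum_congr rfl fun k hk => ?_
      exact Nat.div_mul_cancel (hl2 k hk)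
  · intro l hl; exact Finset.mem_univ _
  · -- toL c ∈ filter set
    intro c _
    rw [Finset.mem_filter, Finset.mem_finsuppAntidiag]
    refine ⟨⟨toL_sum N hn c, Finsupp.support_onFinset_subset⟩, fun k hk => ?_⟩
    rw [toL_apply N c (Finset.mem_range.mp hk)]
    exact dvd_mul_right _ _
  · -- left_inv : toL (fromL l) = l
    intro l hl
    have hl1 := (Finset.mem_filter.mp hl).1
    have hl2 := (Finset.mem_filter.mp hl).2
    rw [Finset.mem_finsuppAntidiag] at hl1
    ext k
    by_cases hk : k < N
    · rw [toL_apply _ _ hk]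
      simp only
      rw [count_repl]
      rw [if_pos ⟨Nat.succ_le_succ (Nat.zero_le k), hk⟩]
      simp only [Nat.add_sub_cancel]
      exact Nat.mul_div_cancel' (hl2 k (Finset.mem_range.mpr hk))
    · rw [toL_apply_ge _ _ hk]
      symm
      by_contra h0
      exact hk (Finset.mem_range.mp (hl1.2 (Finsupp.mem_support_iff.mpr h0)))
  · -- right_inv : fromL (toL c) = c
    intro c _
    ext1
    simp only
    rw [Finset.sum_congr rfl fun k hk => by
      rw [toL_apply N c (Finset.mem_range.mp hk),
        Nat.mul_div_cancel_left _ (Nat.succ_pos k)]]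
    exact (parts_decomp N hn c).symm
  · -- values agree
    intro l hl
    have hl2 := (Finset.mem_filter.mp hl).2
    refine Finset.prod_congr rfl fun k hk => ?_
    congr 1
    simp only
    rw [count_repl, if_pos ⟨Nat.succ_le_succ (Nat.zero_le k), Finset.mem_range.mp hk⟩,
      Nat.add_sub_cancel]

theorem stmt7 (n : ℕ) :
    ∃ g : PowerSeries ℚ,
      CoeffwiseProd (fun s : ℕ =>
        (1 + X ^ (s + 1)) ^ 2 * ((1 - X ^ (s + 1))⁻¹) ^ 2) g ∧
      ((∑ c : Nat.Partition n, NN c : ℕ) : ℚ) = PowerSeries.coeff n g := by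
  refine ⟨PowerSeries.mk fun m => ∑ c : Nat.Partition m, (NN c : ℚ), ?_, ?_⟩
  · intro m
    filter_upwards [Filter.eventually_ge_atTop m] with N hN
    simp_rw [F_eq]
    rw [key m N hN, coeff_mk]
  · rw [coeff_mk, Nat.cast_sum]

end Stmt7
end

section
/- Let p(n,k) denote the number of partitions of n whose parts have exactly k distinct sizes. Then for every n ≥ 0, ∑_{k≥0} p(n,k)·2^k = [x^n] ∏_{s≥1} (1+x^s)(1−x^s)^{−1}. -/
/-!
Statement 8: ∑_{k≥0} p(n,k)·2^k = [x^n] ∏_{s≥1} (1+x^s)(1−x^s)^{−1}, where p(n,k) is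
the number of partitions of n whose parts have exactly k distinct sizes.
-/

open scoped Classical
open PowerSeries

namespace Stmt8

/-- Coefficientwise convergence of an infinite product of formal power series over ℚ. -/
def CoeffwiseProd (f : ℕ → PowerSeries ℚ) (g : PowerSeries ℚ) : Prop :=
  ∀ n : ℕ, ∀ᶠ N in Filter.atTop,
    PowerSeries.coeff n (∏ k ∈ Finset.range N, f k) = PowerSeries.coeff n g

/-- `p n k` : the number of partitions of `n` with exactly `k` distinct part sizes. -/
noncomputable def p (n k : ℕ) : ℕ :=
  (Finset.univ.filter fun c : Nat.Partition n => c.parts.toFinset.card = k).card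

open Finset

/-- Indicator series of a set of naturals. -/
noncomputable def indicatorSeries (s : Set ℕ) : PowerSeries ℚ :=
  PowerSeries.mk fun n => if n ∈ s then 1 else 0

theorem coeff_indicator (s : Set ℕ) (n : ℕ) :
    coeff n (indicatorSeries s) = if n ∈ s then 1 else 0 :=
  coeff_mk _ _

theorem constantCoeff_indicator (s : Set ℕ) :
    constantCoeff (indicatorSeries s) = if 0 ∈ s then 1 else 0 :=
  rfl

theorem num_series' (i : ℕ) :
    (1 - (X : PowerSeries ℚ) ^ (i + 1))⁻¹ = indicatorSeries {k | i + 1 ∣ k} := by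
  rw [PowerSeries.inv_eq_iff_mul_eq_one]
  · ext n
    cases n with
    | zero => simp [mul_sub, zero_pow, constantCoeff_indicator]
    | succ n =>
      simp only [coeff_one, if_false, mul_sub, mul_one, coeff_indicator,
        LinearMap.map_sub, reduceCtorEq]
      simp_rw [coeff_mul, coeff_X_pow, coeff_indicator, @boole_mul _ _ _ _]
      erw [@sum_ite _ _ _ _ _ (fun _ => Classical.propDecidable _), sum_ite]
      simp_rw [@filter_filter _ _ _ _ _, sum_const_zero, add_zero, sum_const, nsmul_eq_mul, mul_one,
        sub_eq_iff_eq_add, zero_add]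
      symm
      split_ifs with h
      · suffices #{a ∈ antidiagonal (n + 1) | i + 1 ∣ a.fst ∧ a.snd = i + 1} = 1 by
          simp only [Set.mem_setOf_eq]
          convert congr_arg ((↑) : ℕ → ℚ) this
          norm_num
        rw [card_eq_one]
        cases' h with p hp
        refine ⟨((i + 1) * (p - 1), i + 1), ?_⟩
        ext ⟨a₁, a₂⟩
        simp only [mem_filter, Prod.mk_inj, HasAntidiagonal.mem_antidiagonal, mem_singleton]
        constructor
        · rintro ⟨a_left, ⟨a, rfl⟩, rfl⟩
          refine ⟨?_, rfl⟩
          rw [Nat.mul_sub_left_distrib, ← hp, ← a_left, mul_one, Nat.add_sub_cancel]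
        · rintro ⟨rfl, rfl⟩
          match p with
          | 0 => rw [mul_zero] at hp; cases hp
          | p + 1 => rw [hp]; simp [mul_add]
      · suffices #{a ∈ antidiagonal (n + 1) | i + 1 ∣ a.fst ∧ a.snd = i + 1} = 0 by
          simp only [Set.mem_setOf_eq]
          convert congr_arg ((↑) : ℕ → ℚ) this
          norm_num
        rw [card_eq_zero]
        apply eq_empty_of_forall_notMem
        simp only [Prod.forall, mem_filter, not_and, HasAntidiagonal.mem_antidiagonal]
        rintro _ h₁ h₂ ⟨a, rfl⟩ rfl
        apply h
        simp [← h₂]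
  · simp [zero_pow]

/-- The series `1 + 2 x^i + 2 x^{2i} + ⋯`. -/
noncomputable def G (i : ℕ) : PowerSeries ℚ :=
  PowerSeries.mk fun d => if d = 0 then 1 else if i ∣ d then 2 else 0

theorem coeff_G (i d : ℕ) :
    coeff d (G i) = if d = 0 then 1 else if i ∣ d then 2 else 0 :=
  coeff_mk _ _

theorem G_eq (i : ℕ) :
    (1 + (X : PowerSeries ℚ) ^ (i + 1)) * (1 - X ^ (i + 1))⁻¹ = G (i + 1) := by
  rw [num_series', add_mul, one_mul]
  ext d
  rw [map_add, coeff_indicator, coeff_X_pow_mul', coeff_G]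
  simp only [Set.mem_setOf_eq, coeff_indicator]
  rcases Nat.eq_zero_or_pos d with rfl | hd0
  · simp
  rw [if_neg hd0.ne']
  by_cases hle : i + 1 ≤ d
  · rw [if_pos hle]
    by_cases h : i + 1 ∣ d
    · rw [if_pos h, if_pos (Nat.dvd_sub h (dvd_refl _)), if_pos h]
      norm_num
    · have h2 : ¬ i + 1 ∣ d - (i + 1) := by
        intro h2
        exact h (by simpa [Nat.sub_add_cancel hle] using Nat.dvd_add h2 (dvd_refl (i + 1)))
      rw [if_neg h, if_neg h2, if_neg h]
      norm_num
  · have h : ¬ i + 1 ∣ d := fun h => hle (Nat.le_of_dvd hd0 h)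
    rw [if_neg hle, if_neg h, if_neg h, add_zero]

open Finset.HasAntidiagonal

/-- Weighted version of the partition generating-function workhorse. -/
theorem mainGF_prop (n : ℕ) (s : Finset ℕ) (hs : ∀ i ∈ s, 0 < i) :
    (∑ P ∈ Finset.univ.filter (fun P : Nat.Partition n => ∀ j ∈ P.parts, j ∈ s),
        (2 : ℚ) ^ P.parts.toFinset.card)
      = coeff n (∏ i ∈ s, G i) := by
  rw [coeff_prod]
  simp_rw [coeff_G]
  rw [← Finset.sum_filter_of_ne (p := fun f : ℕ →₀ ℕ => ∀ i ∈ s, i ∣ f i)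
    (by
      intro f hf hne i hi
      by_contra hdvd
      apply hne
      refine Finset.prod_eq_zero hi ?_
      rw [if_neg, if_neg hdvd]
      intro h0
      exact hdvd (by rw [h0]; exact dvd_zero i))]
  have key : ∀ f ∈ (finsuppAntidiag s n).filter (fun f : ℕ →₀ ℕ => ∀ i ∈ s, i ∣ f i),
      (∏ i ∈ s, if f i = 0 then (1 : ℚ) else if i ∣ f i then 2 else 0)
        = 2 ^ f.support.card := by
    intro f hf
    rw [mem_filter, mem_finsuppAntidiag] at hf
    have hsupp : f.support ⊆ s := hf.1.2
    calc (∏ i ∈ s, if f i = 0 then (1 : ℚ) else if i ∣ f i then 2 else 0)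
        = ∏ i ∈ s, if f i = 0 then (1 : ℚ) else 2 := by
          refine Finset.prod_congr rfl fun i hi => ?_
          by_cases h : f i = 0
          · simp [h]
          · rw [if_neg h, if_neg h, if_pos (hf.2 i hi)]
      _ = ∏ i ∈ s.filter (fun i => ¬ f i = 0), (2 : ℚ) := by
          rw [Finset.prod_filter]
          refine Finset.prod_congr rfl fun i _ => ?_
          by_cases h : f i = 0 <;> simp [h]
      _ = 2 ^ f.support.card := by
          rw [Finset.prod_const]
          congr 1
          congr 1
          ext i
          simp only [mem_filter, Finsupp.mem_support_iff, ne_eq]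
          exact ⟨fun h => h.2, fun h => ⟨hsupp (Finsupp.mem_support_iff.mpr h), h⟩⟩
  rw [Finset.sum_congr rfl key]
  set φ : (a : Nat.Partition n) →
    a ∈ filter (fun P : Nat.Partition n => ∀ j ∈ P.parts, j ∈ s) univ → (ℕ →₀ ℕ) :=
    fun P _ => {
      toFun := fun i => Multiset.count i P.parts • i
      support := Finset.filter (fun i => i ≠ 0) P.parts.toFinset
      mem_support_toFun := fun a => by
        simp only [smul_eq_mul, ne_eq, mul_eq_zero, Multiset.count_eq_zero]
        rw [not_or, not_not]
        simp only [Multiset.mem_toFinset, not_not, mem_filter] } with hφ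
  refine Finset.sum_bij φ ?_ ?_ ?_ ?_
  · intro a ha
    simp only [φ, mem_filter]
    rw [mem_finsuppAntidiag]
    dsimp only [ne_eq, smul_eq_mul, id_eq, eq_mpr_eq_cast, le_eq_subset, Finsupp.coe_mk]
    simp only [mem_univ, forall_true_left, mem_filter, true_and] at ha
    refine ⟨⟨?_, fun i ↦ ?_⟩, fun i _ ↦ dvd_mul_left i _⟩
    · conv_rhs => simp [← a.parts_sum]
      rw [sum_multiset_count_of_subset _ s]
      · simp only [smul_eq_mul]
      · intro i
        simp only [Multiset.mem_toFinset, not_not, mem_filter]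
        apply ha
    · simp only [ne_eq, Multiset.mem_toFinset, not_not, mem_filter, and_imp]
      exact fun hi _ ↦ ha i hi
  · intro p₁ hp₁ p₂ hp₂ h
    apply Nat.Partition.ext
    simp only [mem_univ, mem_filter, true_and] at hp₁ hp₂
    ext i
    simp only [φ, ne_eq, Multiset.mem_toFinset, not_not, smul_eq_mul, Finsupp.mk.injEq] at h
    by_cases hi : i = 0
    · rw [hi]
      rw [Multiset.count_eq_zero_of_notMem]
      · rw [Multiset.count_eq_zero_of_notMem]
        intro a; exact Nat.lt_irrefl 0 (hs 0 (hp₂ 0 a))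
      intro a; exact Nat.lt_irrefl 0 (hs 0 (hp₁ 0 a))
    · rw [← mul_left_inj' hi]
      rw [funext_iff] at h
      exact h.2 i
  · simp only [φ, mem_filter, mem_finsuppAntidiag, mem_univ, exists_prop, true_and, and_assoc]
    rintro f ⟨hf, hf₃, hf₄⟩
    have hf' : f ∈ finsuppAntidiag s n := mem_finsuppAntidiag.mpr ⟨hf, hf₃⟩
    simp only [mem_finsuppAntidiag] at hf'
    refine ⟨⟨∑ i ∈ s, Multiset.replicate (f i / i) i, ?_, ?_⟩, ?_, ?_⟩
    · intro i hi
      simp only [exists_prop, Multiset.mem_sum, mem_map, Function.Embedding.coeFn_mk] at hi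
      rcases hi with ⟨t, ht, z⟩
      apply hs
      rwa [Multiset.eq_of_mem_replicate z]
    · simp_rw [Multiset.sum_sum, Multiset.sum_replicate, Nat.nsmul_eq_mul]
      rw [← hf'.1]
      refine sum_congr rfl fun i hi => Nat.div_mul_cancel (hf₄ i hi)
    · intro i hi
      rw [Multiset.mem_sum] at hi
      rcases hi with ⟨j, hj₁, hj₂⟩
      rwa [Multiset.eq_of_mem_replicate hj₂]
    · ext i
      simp_rw [Multiset.count_sum', Multiset.count_replicate, sum_ite_eq']
      simp only [ne_eq, Multiset.mem_toFinset, not_not, smul_eq_mul, ite_mul,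
        zero_mul, Finsupp.coe_mk]
      split_ifs with h
      · exact Nat.div_mul_cancel (hf₄ i h)
      · apply symm
        rw [← Finsupp.notMem_support_iff]
        exact notMem_mono hf'.2 h
  · intro a ha
    simp only [mem_univ, mem_filter, true_and] at ha
    congr 1
    simp only [φ]
    rw [Finset.filter_true_of_mem]
    intro i hi
    rw [Multiset.mem_toFinset] at hi
    exact (hs i (ha i hi)).ne'

theorem multiset_card_le_sum (m : Multiset ℕ) (h : ∀ x ∈ m, 0 < x) :
    Multiset.card m ≤ m.sum := by
  revert h
  refine Multiset.induction_on m (by simp) ?_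
  intro a t ih h
  simp only [Multiset.card_cons, Multiset.sum_cons]
  have h1 := h a (Multiset.mem_cons_self a t)
  have h2 := ih fun x hx => h x (Multiset.mem_cons_of_mem hx)
  omega

/-- For every partition of `n`, the number of distinct part sizes is at most `n`. -/
theorem toFinset_card_le (n : ℕ) (P : Nat.Partition n) : P.parts.toFinset.card ≤ n := by
  calc P.parts.toFinset.card ≤ Multiset.card P.parts := Multiset.toFinset_card_le _
    _ ≤ P.parts.sum := multiset_card_le_sum _ fun x hx => P.parts_pos hx
    _ = n := P.parts_sum

theorem sum_over_partitions (n : ℕ) :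
    ((∑ᶠ k : ℕ, p n k * 2 ^ k : ℕ) : ℚ)
      = ∑ P : Nat.Partition n, (2 : ℚ) ^ P.parts.toFinset.card := by
  have hsupp : (Function.support fun k => p n k * 2 ^ k) ⊆ ↑(Finset.range (n + 1)) := by
    intro k hk
    simp only [Function.mem_support] at hk
    have hp : p n k ≠ 0 := by intro h; apply hk; rw [h, zero_mul]
    obtain ⟨P, hP⟩ := Finset.card_pos.mp (Nat.pos_of_ne_zero hp)
    rw [Finset.mem_filter] at hP
    simp only [Finset.coe_range, Set.mem_Iio]
    exact Nat.lt_succ_of_le (hP.2 ▸ toFinset_card_le n P)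
  rw [finsum_eq_finset_sum_of_support_subset _ hsupp]
  push_cast
  rw [← Finset.sum_fiberwise_of_maps_to (g := fun P : Nat.Partition n => P.parts.toFinset.card)
    (t := Finset.range (n + 1)) (fun P _ => Finset.mem_range.mpr (Nat.lt_succ_of_le
      (toFinset_card_le n P)))]
  refine Finset.sum_congr rfl fun k _ => ?_
  rw [p, Finset.card_eq_sum_ones, Nat.cast_sum, Finset.sum_mul]
  refine Finset.sum_congr rfl fun P hP => ?_
  rw [Finset.mem_filter] at hP
  rw [hP.2]
  norm_num

theorem stmt8 (n : ℕ) :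
    ∃ g : PowerSeries ℚ,
      CoeffwiseProd (fun s : ℕ => (1 + X ^ (s + 1)) * (1 - X ^ (s + 1))⁻¹) g ∧
      ((∑ᶠ k : ℕ, p n k * 2 ^ k : ℕ) : ℚ) = PowerSeries.coeff n g := by
  use PowerSeries.mk fun m => ∑ P : Nat.Partition m, (2 : ℚ) ^ P.parts.toFinset.card
  have main : ∀ m N : ℕ, m ≤ N →
      coeff m (∏ k ∈ Finset.range N, (1 + (X : PowerSeries ℚ) ^ (k + 1)) * (1 - X ^ (k + 1))⁻¹)
        = ∑ P : Nat.Partition m, (2 : ℚ) ^ P.parts.toFinset.card := by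
    intro m N hmN
    have hprod : (∏ k ∈ Finset.range N,
          (1 + (X : PowerSeries ℚ) ^ (k + 1)) * (1 - X ^ (k + 1))⁻¹)
        = ∏ i ∈ (Finset.range N).map ⟨Nat.succ, Nat.succ_injective⟩, G i := by
      rw [Finset.prod_map]
      exact Finset.prod_congr rfl fun k _ => G_eq k
    rw [hprod, ← mainGF_prop m _ (by
      simp only [mem_map, Function.Embedding.coeFn_mk]
      rintro i ⟨a, -, rfl⟩; exact Nat.succ_pos _)]
    rw [Finset.filter_true_of_mem]
    intro P _ j hj
    have hj1 : 0 < j := P.parts_pos hj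
    have hjm : j ≤ m := by
      have := Multiset.single_le_sum (fun _ _ => Nat.zero_le _) _ hj
      simpa [P.parts_sum] using this
    simp only [mem_map, mem_range, Function.Embedding.coeFn_mk]
    exact ⟨j - 1, by omega, Nat.succ_pred_eq_of_pos hj1⟩
  constructor
  · intro m
    rw [Filter.eventually_atTop]
    exact ⟨m, fun N hN => by rw [main m N hN, coeff_mk]⟩
  · rw [coeff_mk, sum_over_partitions]

end Stmt8
end

section
/- The number of signed Young diagrams with 2n boxes in total such that m(ℓ,+) = m(ℓ,−) for every odd ℓ, and m(ℓ,+) and m(ℓ,−) are both even for every even ℓ, equals [x^n] ∏_{s≥1} (1+x^s)(1−x^{2s})^{−2}. (Any such diagram automatically has signature (n,n); this count is the number of nilpotent GL(n)-orbits on the odd part of so(2n).) -/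
/-!
Statement 9: the number of signed Young diagrams with 2n boxes in total satisfying
m(ℓ,+) = m(ℓ,−) for every odd ℓ and m(ℓ,+), m(ℓ,−) both even for every even ℓ equals
[x^n] ∏_{s≥1} (1+x^s)(1−x^{2s})^{−2}.
-/

open PowerSeries

namespace Stmt9

/-- The number of `+` boxes in a row of length `ℓ` whose leftmost box has sign `b`. -/
def rowPlus (ℓ : ℕ) (b : Bool) : ℕ := if b then (ℓ + 1) / 2 else ℓ / 2

def sigPlus (m : (ℕ × Bool) →₀ ℕ) : ℕ := m.sum fun p k => k * rowPlus p.1 p.2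

def sigMinus (m : (ℕ × Bool) →₀ ℕ) : ℕ := m.sum fun p k => k * rowPlus p.1 (!p.2)

/-- Rows have positive length. -/
def IsSYD (m : (ℕ × Bool) →₀ ℕ) : Prop := ∀ b, m (0, b) = 0

/-- Coefficientwise convergence of an infinite product of formal power series over ℚ. -/
def CoeffwiseProd (f : ℕ → PowerSeries ℚ) (g : PowerSeries ℚ) : Prop :=
  ∀ n : ℕ, ∀ᶠ N in Filter.atTop,
    PowerSeries.coeff n (∏ k ∈ Finset.range N, f k) = PowerSeries.coeff n g

noncomputable section
open Finset
open scoped Classical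

/-! ### Indicator series machinery (adapted from the Mathlib archive). -/

def indicatorSeries (α : Type*) [Semiring α] (s : Set ℕ) : PowerSeries α :=
  PowerSeries.mk fun n => if n ∈ s then 1 else 0

theorem coeff_indicator (s : Set ℕ) {α : Type*} [Semiring α] (n : ℕ) :
    coeff n (indicatorSeries α s) = if n ∈ s then 1 else 0 :=
  coeff_mk _ _

theorem constantCoeff_indicator (s : Set ℕ) {α : Type*} [Semiring α] :
    constantCoeff (indicatorSeries α s) = if 0 ∈ s then 1 else 0 :=
  rfl

theorem num_series' {α : Type*} [Field α] (i : ℕ) :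
    (1 - (X : PowerSeries α) ^ (i + 1))⁻¹ = indicatorSeries α {k | i + 1 ∣ k} := by
  rw [PowerSeries.inv_eq_iff_mul_eq_one]
  · ext n
    cases n with
    | zero => simp [mul_sub, zero_pow, constantCoeff_indicator]
    | succ n =>
      simp only [coeff_one, if_false, mul_sub, mul_one, coeff_indicator,
        LinearMap.map_sub, reduceCtorEq]
      simp_rw [coeff_mul, coeff_X_pow, coeff_indicator, @boole_mul _ _ _ _]
      erw [@sum_ite _ _ _ _ _ (fun _ => Classical.propDecidable _), sum_ite]
      simp_rw [@filter_filter _ _ _ _ _, sum_const_zero, add_zero, sum_const, nsmul_eq_mul, mul_one,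
        sub_eq_iff_eq_add, zero_add]
      symm
      split_ifs with h
      · suffices #{a ∈ antidiagonal (n + 1) | i + 1 ∣ a.fst ∧ a.snd = i + 1} = 1 by
          simp only [Set.mem_setOf_eq]; convert congr_arg ((↑) : ℕ → α) this; norm_cast
        rw [card_eq_one]
        cases' h with p hp
        refine ⟨((i + 1) * (p - 1), i + 1), ?_⟩
        ext ⟨a₁, a₂⟩
        simp only [mem_filter, Prod.mk.injEq, HasAntidiagonal.mem_antidiagonal, mem_singleton]
        constructor
        · rintro ⟨a_left, ⟨a, rfl⟩, rfl⟩
          refine ⟨?_, rfl⟩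
          rw [Nat.mul_sub_left_distrib, ← hp, ← a_left, mul_one, Nat.add_sub_cancel]
        · rintro ⟨rfl, rfl⟩
          match p with
          | 0 => rw [mul_zero] at hp; cases hp
          | p + 1 => rw [hp]; simp [mul_add]
      · suffices #{a ∈ antidiagonal (n + 1) | i + 1 ∣ a.fst ∧ a.snd = i + 1} = 0 by
          simp only [Set.mem_setOf_eq]; convert congr_arg ((↑) : ℕ → α) this; norm_cast
        rw [card_eq_zero]
        apply eq_empty_of_forall_notMem
        simp only [Prod.forall, mem_filter, not_and, HasAntidiagonal.mem_antidiagonal]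
        rintro _ h₁ h₂ ⟨a, rfl⟩ rfl
        apply h
        simp [← h₂]
  · simp [zero_pow]

/-- The factorization `(1+X^a) (1-X^{2a})^{-2} = (1-X^a)^{-1} (1-X^{2a})^{-1}`. -/
theorem factor (s : ℕ) :
    (1 + X ^ (s + 1)) * ((1 - (X : PowerSeries ℚ) ^ (2 * (s + 1)))⁻¹) ^ 2 =
      indicatorSeries ℚ {k | (s + 1) ∣ k} * indicatorSeries ℚ {k | 2 * (s + 1) ∣ k} := by
  have h2 : 2 * (s + 1) = (2 * s + 1) + 1 := by ring
  have hb : (1 - (X : PowerSeries ℚ) ^ (s+1)) * (1 - X ^ (s+1))⁻¹ = 1 := by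
    apply PowerSeries.mul_inv_cancel
    simp [zero_pow]
  have h2b : (1 - (X : PowerSeries ℚ) ^ (2*(s+1))) * (1 - X ^ (2*(s+1)))⁻¹ = 1 := by
    apply PowerSeries.mul_inv_cancel
    simp [zero_pow]
  rw [← num_series', h2, ← num_series', ← h2]
  apply mul_right_cancel₀ (b := (1 - (X:PowerSeries ℚ) ^ (s+1)) * (1 - X ^ (2*(s+1))))
  · intro hzero
    rcases mul_eq_zero.1 hzero with h | h
    · have := congrArg (constantCoeff) h
      simp [zero_pow] at this
    · have := congrArg (constantCoeff) h
      simp [zero_pow] at this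
  · have key : (1 + (X:PowerSeries ℚ) ^ (s+1)) * (1 - X ^ (s+1)) = 1 - X ^ (2*(s+1)) := by
      ring_nf
    calc (1 + (X:PowerSeries ℚ) ^ (s + 1)) * ((1 - X ^ (2 * (s + 1)))⁻¹) ^ 2 *
          ((1 - X ^ (s+1)) * (1 - X ^ (2*(s+1))))
        = ((1 + X ^ (s+1)) * (1 - X ^ (s+1))) * ((1 - X ^ (2*(s+1))) * (1 - X ^ (2*(s+1)))⁻¹) *
            (1 - X ^ (2*(s+1)))⁻¹ := by ring
      _ = (1 - X ^ (2*(s+1))) * (1 - X ^ (2*(s+1)))⁻¹ := by rw [key, h2b, mul_one]; exact h2b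
      _ = 1 := h2b
      _ = ((1 - X ^ (s+1)) * (1 - X ^ (s+1))⁻¹) * ((1 - X ^ (2*(s+1))) * (1 - X ^ (2*(s+1)))⁻¹) := by
          rw [hb, h2b, one_mul]
      _ = (1 - X ^ (s+1))⁻¹ * (1 - X ^ (2*(s+1)))⁻¹ * ((1 - X ^ (s+1)) * (1 - X ^ (2*(s+1)))) := by
          ring

/-! ### Stability of coefficients of the partial products. -/

theorem coeff_factor_small {k j : ℕ} (hjk : j ≤ k) :
    coeff j ((1 + X ^ (k + 1)) * ((1 - (X : PowerSeries ℚ) ^ (2 * (k + 1)))⁻¹) ^ 2) =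
      if j = 0 then 1 else 0 := by
  rw [factor, coeff_mul]
  rcases eq_or_ne j 0 with rfl | hj
  · simp [coeff_indicator]
  · rw [if_neg hj]
    apply Finset.sum_eq_zero
    rintro ⟨x, y⟩ hxy
    rw [Finset.HasAntidiagonal.mem_antidiagonal] at hxy
    rw [coeff_indicator, coeff_indicator]
    simp only [Set.mem_setOf_eq]
    by_cases h1 : (k + 1) ∣ x
    · by_cases h2 : 2 * (k + 1) ∣ y
      · exfalso
        have hx0 : x = 0 := by
          rcases Nat.eq_zero_or_pos x with h | h
          · exact h
          · exact absurd (Nat.le_of_dvd h h1) (by omega)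
        have hy0 : y = 0 := by
          rcases Nat.eq_zero_or_pos y with h | h
          · exact h
          · exact absurd (Nat.le_of_dvd h h2) (by omega)
        omega
      · rw [if_neg h2, mul_zero]
    · rw [if_neg h1, zero_mul]

theorem coeff_stable {n N : ℕ} (h : n + 1 ≤ N) :
    coeff (R := ℚ) n (∏ k ∈ range N, (1 + X ^ (k + 1)) * ((1 - X ^ (2 * (k + 1)))⁻¹) ^ 2) =
      coeff (R := ℚ) n (∏ k ∈ range (n + 1), (1 + X ^ (k + 1)) * ((1 - X ^ (2 * (k + 1)))⁻¹) ^ 2) := by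
  induction N with
  | zero => omega
  | succ N ih =>
    rcases eq_or_lt_of_le h with heq | hlt
    · rw [heq]
    · have hN : n + 1 ≤ N := by omega
      rw [prod_range_succ, coeff_mul, Finset.sum_eq_single (n, 0)]
      · rw [coeff_factor_small (by omega), if_pos rfl, mul_one, ih hN]
      · rintro ⟨x, y⟩ hxy hne
        rw [Finset.HasAntidiagonal.mem_antidiagonal] at hxy
        have hy : y ≠ 0 := fun h0 => hne (by simp [h0, ← hxy])
        rw [coeff_factor_small (by omega), if_neg hy, mul_zero]
      · intro hmem
        exact absurd (Finset.HasAntidiagonal.mem_antidiagonal.2 (by omega)) hmem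

/-! ### Counting: coefficient of a product of indicator series. -/

theorem coeff_prod_indicator {ι : Type*} [DecidableEq ι] (F : Finset ι) (c : ι → Set ℕ) (n : ℕ) :
    coeff n (∏ i ∈ F, indicatorSeries ℚ (c i)) =
      #((F.finsuppAntidiag n).filter fun l => ∀ i ∈ F, l i ∈ c i) := by
  simp_rw [coeff_prod, coeff_indicator, prod_boole, sum_boole]


/-! ### The combinatorial data. -/

def uu (m : (ℕ × Bool) →₀ ℕ) (s : ℕ) : ℕ :=
  if Odd (s + 1) then m (s + 1, true) else m (s + 1, true) / 2

def vv (m : (ℕ × Bool) →₀ ℕ) (s : ℕ) : ℕ := m (2 * (s + 1), false) / 2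

theorem sig_sum (m : (ℕ × Bool) →₀ ℕ) :
    sigPlus m + sigMinus m = m.sum fun p k => k * p.1 := by
  rw [sigPlus, sigMinus, Finsupp.sum, Finsupp.sum, Finsupp.sum, ← Finset.sum_add_distrib]
  refine Finset.sum_congr rfl fun p _ => ?_
  rcases p with ⟨ℓ, b⟩
  rw [← Nat.mul_add]
  congr 1
  cases b <;> simp [rowPlus] <;> omega

theorem small_of {n : ℕ} (m : (ℕ × Bool) →₀ ℕ)
    (hodd : ∀ ℓ, Odd ℓ → m (ℓ, true) = m (ℓ, false))
    (heven : ∀ ℓ, Even ℓ → Even (m (ℓ, true)) ∧ Even (m (ℓ, false)))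
    (hsum : sigPlus m + sigMinus m = 2 * n) :
    ∀ p, m p ≠ 0 → p.1 ≤ n := by
  have htot : (m.sum fun p k => k * p.1) = 2 * n := by rw [← sig_sum m]; exact hsum
  rintro ⟨ℓ, b⟩ hne
  have hpair : m (ℓ, true) * ℓ + m (ℓ, false) * ℓ ≤ 2 * n := by
    have hsub : m.support ⊆ insert (ℓ, true) (insert (ℓ, false) m.support) :=
      (Finset.subset_insert _ _).trans (Finset.subset_insert _ _)
    have h1 : (m.sum fun p k => k * p.1) =
        ∑ p ∈ insert (ℓ, true) (insert (ℓ, false) m.support), m p * p.1 := by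
      rw [Finsupp.sum]
      refine Finset.sum_subset hsub fun x _ hx => ?_
      rw [Finsupp.notMem_support_iff.mp hx, zero_mul]
    have h2 : ({(ℓ, true), (ℓ, false)} : Finset (ℕ × Bool)) ⊆
        insert (ℓ, true) (insert (ℓ, false) m.support) := by
      intro x hx
      simp only [Finset.mem_insert, Finset.mem_singleton] at hx ⊢
      tauto
    have h3 := Finset.sum_le_sum_of_subset (f := fun p => m p * p.1) h2
    rw [Finset.sum_pair (by simp)] at h3
    rw [h1] at htot
    dsimp only at h3
    omega
  rcases Nat.even_or_odd ℓ with he | ho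
  · have hev := heven ℓ he
    have hb : m (ℓ, b) * ℓ ≤ 2 * n := by
      cases b
      · omega
      · omega
    have h2 : 2 ≤ m (ℓ, b) := by
      have : Even (m (ℓ, b)) := by cases b <;> [exact hev.2; exact hev.1]
      rcases this with ⟨w, hw⟩
      omega
    have : 2 * ℓ ≤ m (ℓ, b) * ℓ := Nat.mul_le_mul_right ℓ h2
    omega
  · have heq := hodd ℓ ho
    have hne' : m (ℓ, true) ≠ 0 := by cases b <;> omega
    have h1 : 1 ≤ m (ℓ, true) := Nat.one_le_iff_ne_zero.mpr hne'
    have h4 : 1 * ℓ ≤ m (ℓ, true) * ℓ := Nat.mul_le_mul_right ℓ h1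
    have h5 : m (ℓ, true) * ℓ = m (ℓ, false) * ℓ := by rw [heq]
    omega

theorem sum_eq {n : ℕ} (m : (ℕ × Bool) →₀ ℕ)
    (hodd : ∀ ℓ, Odd ℓ → m (ℓ, true) = m (ℓ, false))
    (heven : ∀ ℓ, Even ℓ → Even (m (ℓ, true)) ∧ Even (m (ℓ, false)))
    (hsmall : ∀ p, m p ≠ 0 → p.1 ≤ n) :
    (m.sum fun p k => k * p.1) =
      2 * ∑ s ∈ range (n + 1), ((s + 1) * uu m s + 2 * (s + 1) * vv m s) := by
  have hzero : ∀ ℓ, n < ℓ → ∀ b, m (ℓ, b) = 0 := by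
    intro ℓ hℓ b
    by_contra hne
    exact absurd (hsmall (ℓ, b) hne) (by omega)
  have hsub : m.support ⊆ range (n + 1) ×ˢ (Finset.univ : Finset Bool) := by
    rintro ⟨ℓ, b⟩ hp
    rw [Finsupp.mem_support_iff] at hp
    simp only [Finset.mem_product, Finset.mem_range, Finset.mem_univ, and_true]
    exact lt_of_le_of_lt (hsmall _ hp) (Nat.lt_succ_self n)
  rw [Finsupp.sum_of_support_subset m hsub (fun p k => k * p.1) (fun i _ => zero_mul _)]
  rw [Finset.sum_product]
  simp only [Fintype.sum_bool]
  have hA : ∑ s ∈ range (n + 1), 2 * ((s + 1) * uu m s) =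
      ∑ ℓ ∈ range (n + 1),
        (m (ℓ, true) * ℓ + if Odd ℓ then m (ℓ, false) * ℓ else 0) := by
    rw [Finset.sum_range_succ' (fun ℓ => m (ℓ, true) * ℓ + if Odd ℓ then m (ℓ, false) * ℓ else 0) n]
    rw [Finset.sum_range_succ]
    have hlast : 2 * ((n + 1) * uu m n) = 0 := by
      have h0 : m (n + 1, true) = 0 := hzero (n + 1) (by omega) true
      rw [uu]
      split_ifs <;> simp [h0]
    rw [hlast, add_zero]
    have h00 : (m (0, true) * 0 + if Odd 0 then m (0, false) * 0 else 0) = 0 := by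
      split_ifs <;> simp
    rw [h00, add_zero]
    refine Finset.sum_congr rfl fun i _ => ?_
    rcases Nat.even_or_odd (i + 1) with he | ho
    · have hne : ¬ Odd (i + 1) := by simp [Nat.not_odd_iff_even.mpr he]
      rw [uu, if_neg hne, if_neg hne, add_zero]
      rcases (heven (i + 1) he).1 with ⟨w, hw⟩
      have : m (i + 1, true) / 2 = w := by omega
      rw [this, hw]
      ring
    · rw [uu, if_pos ho, if_pos ho, ← hodd (i + 1) ho]
      ring
  have hB : ∑ s ∈ range (n + 1), 2 * (2 * (s + 1) * vv m s) =
      ∑ ℓ ∈ range (n + 1), (if Even ℓ ∧ ℓ ≠ 0 then m (ℓ, false) * ℓ else 0) := by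
    rw [← Finset.sum_filter_ne_zero (s := range (n + 1))
      (f := fun s => 2 * (2 * (s + 1) * vv m s)),
      ← Finset.sum_filter_ne_zero (s := range (n + 1))
      (f := fun ℓ => if Even ℓ ∧ ℓ ≠ 0 then m (ℓ, false) * ℓ else 0)]
    refine Finset.sum_nbij' (fun s => 2 * (s + 1)) (fun ℓ => ℓ / 2 - 1) ?_ ?_ ?_ ?_ ?_
    · intro s hs
      simp only [Finset.mem_filter, Finset.mem_range] at hs ⊢
      obtain ⟨hsr, hne⟩ := hs
      have hv : vv m s ≠ 0 := by
        intro h0; rw [h0] at hne; simp at hne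
      have hm : m (2 * (s + 1), false) ≠ 0 := by
        intro h0; rw [vv, h0] at hv; simp at hv
      have hle : 2 * (s + 1) ≤ n := hsmall _ hm
      rcases (heven (2 * (s + 1)) ⟨s + 1, by ring⟩).2 with ⟨w, hw⟩
      refine ⟨by omega, ?_⟩
      rw [if_pos ⟨⟨s + 1, by ring⟩, by omega⟩]
      have hwne : w ≠ 0 := by omega
      positivity
    · intro ℓ hl
      simp only [Finset.mem_filter, Finset.mem_range] at hl ⊢
      obtain ⟨hlr, hne⟩ := hl
      have hcond : Even ℓ ∧ ℓ ≠ 0 := by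
        by_contra hc
        rw [if_neg hc] at hne; exact hne rfl
      rw [if_pos hcond] at hne
      obtain ⟨⟨t, ht⟩, h0⟩ := hcond
      have hm : m (ℓ, false) ≠ 0 := by intro h0'; rw [h0'] at hne; simp at hne
      have hle : ℓ ≤ n := hsmall _ hm
      refine ⟨by omega, ?_⟩
      have h2 : 2 * (ℓ / 2 - 1 + 1) = ℓ := by omega
      rw [vv, h2]
      rcases (heven ℓ ⟨t, ht⟩).2 with ⟨w, hw⟩
      have hww : m (ℓ, false) / 2 = w := by omega
      rw [hww]
      have : w ≠ 0 := by omega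
      positivity
    · intro s hs; omega
    · intro ℓ hl
      simp only [Finset.mem_filter, Finset.mem_range] at hl
      obtain ⟨hlr, hne⟩ := hl
      have hcond : Even ℓ ∧ ℓ ≠ 0 := by
        by_contra hc
        rw [if_neg hc] at hne; exact hne rfl
      obtain ⟨⟨t, ht⟩, h0⟩ := hcond
      omega
    · intro s hs
      simp only [Finset.mem_filter, Finset.mem_range] at hs
      have hev : Even (2 * (s + 1)) := ⟨s + 1, by ring⟩
      rw [if_pos ⟨hev, by omega⟩]
      rcases (heven (2 * (s + 1)) hev).2 with ⟨w, hw⟩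
      rw [vv, hw]
      have : (w + w) / 2 = w := by omega
      rw [this]
      ring
  have hfinal : ∑ s ∈ range (n + 1), 2 * ((s + 1) * uu m s + 2 * (s + 1) * vv m s) =
      (∑ s ∈ range (n + 1), 2 * ((s + 1) * uu m s)) +
        ∑ s ∈ range (n + 1), 2 * (2 * (s + 1) * vv m s) := by
    rw [← Finset.sum_add_distrib]
    exact Finset.sum_congr rfl fun s _ => by ring
  rw [Finset.mul_sum, hfinal, hA, hB, ← Finset.sum_add_distrib]
  refine Finset.sum_congr rfl fun ℓ _ => ?_
  rcases Nat.even_or_odd ℓ with he | ho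
  · rcases eq_or_ne ℓ 0 with rfl | h0
    · simp
    · rw [if_neg (by simp [Nat.not_odd_iff_even.mpr he]), if_pos ⟨he, h0⟩]
      omega
  · have hc : ¬(Even ℓ ∧ ℓ ≠ 0) := fun hc => (Nat.not_even_iff_odd.mpr ho) hc.1
    rw [if_pos ho, if_neg hc]
    omega

/-! ### The bijection. -/

def lval (m : (ℕ × Bool) →₀ ℕ) : ℕ × Bool → ℕ
  | (s, true) => (s + 1) * uu m s
  | (s, false) => 2 * (s + 1) * vv m s

def toL (m : (ℕ × Bool) →₀ ℕ) : (ℕ × Bool) →₀ ℕ :=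
  Finsupp.onFinset
    (((m.support.image fun p => p.1 - 1) ∪ m.support.image fun p => p.1 / 2 - 1) ×ˢ Finset.univ)
    (lval m) <| by
      rintro ⟨s, j⟩ hp
      rw [Finset.mem_product]
      refine ⟨Finset.mem_union.mpr ?_, Finset.mem_univ _⟩
      cases j
      · right
        simp only [lval] at hp
        have hv : vv m s ≠ 0 := fun h0 => hp (by rw [h0, mul_zero])
        have hm : m (2 * (s + 1), false) ≠ 0 := fun h0 => hv (by simp [vv, h0])
        exact Finset.mem_image.mpr
          ⟨(2 * (s + 1), false), Finsupp.mem_support_iff.mpr hm, by dsimp; omega⟩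
      · left
        simp only [lval] at hp
        have hm : m (s + 1, true) ≠ 0 := by
          intro h0
          apply hp
          rw [uu]
          split_ifs <;> simp [h0]
        exact Finset.mem_image.mpr
          ⟨(s + 1, true), Finsupp.mem_support_iff.mpr hm, by dsimp⟩

theorem toL_apply (m : (ℕ × Bool) →₀ ℕ) (p : ℕ × Bool) : toL m p = lval m p :=
  Finsupp.onFinset_apply

def UU (l : (ℕ × Bool) →₀ ℕ) (s : ℕ) : ℕ := l (s, true) / (s + 1)

def VV (l : (ℕ × Bool) →₀ ℕ) (s : ℕ) : ℕ := l (s, false) / (2 * (s + 1))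

def mval (l : (ℕ × Bool) →₀ ℕ) : ℕ × Bool → ℕ
  | (ℓ, true) => if ℓ = 0 then 0 else if Odd ℓ then UU l (ℓ - 1) else 2 * UU l (ℓ - 1)
  | (ℓ, false) => if ℓ = 0 then 0 else if Odd ℓ then UU l (ℓ - 1) else 2 * VV l (ℓ / 2 - 1)

def toM (l : (ℕ × Bool) →₀ ℕ) : (ℕ × Bool) →₀ ℕ :=
  Finsupp.onFinset
    (((l.support.image fun p => p.1 + 1) ∪ l.support.image fun p => 2 * (p.1 + 1)) ×ˢ Finset.univ)
    (mval l) <| by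
      rintro ⟨ℓ, b⟩ hp
      rw [Finset.mem_product]
      refine ⟨Finset.mem_union.mpr ?_, Finset.mem_univ _⟩
      have hℓ : ℓ ≠ 0 := by
        intro h
        subst h
        cases b <;> simp [mval] at hp
      by_cases ho : Odd ℓ
      · left
        have hU : UU l (ℓ - 1) ≠ 0 := by
          intro h0
          apply hp
          cases b <;> simp [mval, if_neg hℓ, if_pos ho, h0]
        have hl' : l (ℓ - 1, true) ≠ 0 := fun h0 => hU (by simp [UU, h0])
        exact Finset.mem_image.mpr
          ⟨(ℓ - 1, true), Finsupp.mem_support_iff.mpr hl', by dsimp; omega⟩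
      · have hev : ℓ % 2 = 0 := Nat.even_iff.mp (Nat.not_odd_iff_even.mp ho)
        cases b
        · right
          simp only [mval, if_neg hℓ, if_neg ho] at hp
          have hV : VV l (ℓ / 2 - 1) ≠ 0 := fun h0 => hp (by rw [h0, mul_zero])
          have hl' : l (ℓ / 2 - 1, false) ≠ 0 := fun h0 => hV (by simp [VV, h0])
          exact Finset.mem_image.mpr
            ⟨(ℓ / 2 - 1, false), Finsupp.mem_support_iff.mpr hl', by dsimp; omega⟩
        · left
          simp only [mval, if_neg hℓ, if_neg ho] at hp
          have hU : UU l (ℓ - 1) ≠ 0 := fun h0 => hp (by rw [h0, mul_zero])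
          have hl' : l (ℓ - 1, true) ≠ 0 := fun h0 => hU (by simp [UU, h0])
          exact Finset.mem_image.mpr
            ⟨(ℓ - 1, true), Finsupp.mem_support_iff.mpr hl', by dsimp; omega⟩

theorem toM_apply (l : (ℕ × Bool) →₀ ℕ) (p : ℕ × Bool) : toM l p = mval l p :=
  Finsupp.onFinset_apply

theorem toM_toL {m : (ℕ × Bool) →₀ ℕ} (hS : IsSYD m)
    (hodd : ∀ ℓ, Odd ℓ → m (ℓ, true) = m (ℓ, false))
    (heven : ∀ ℓ, Even ℓ → Even (m (ℓ, true)) ∧ Even (m (ℓ, false))) :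
    toM (toL m) = m := by
  refine Finsupp.ext fun p => ?_
  rcases p with ⟨ℓ, b⟩
  rw [toM_apply]
  rcases eq_or_ne ℓ 0 with rfl | hℓ
  · cases b <;> simp [mval, hS true, hS false]
  have hUU : UU (toL m) (ℓ - 1) = if Odd ℓ then m (ℓ, true) else m (ℓ, true) / 2 := by
    rw [UU, toL_apply]
    simp only [lval]
    have h1 : ℓ - 1 + 1 = ℓ := by omega
    rw [uu, h1]
    exact Nat.mul_div_cancel_left _ (by omega)
  by_cases ho : Odd ℓ
  · cases b
    · simp only [mval, if_neg hℓ, if_pos ho, hUU]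
      exact hodd ℓ ho
    · simp only [mval, if_neg hℓ, if_pos ho, hUU]
  · have he : Even ℓ := Nat.not_odd_iff_even.mp ho
    have hev2 : ℓ % 2 = 0 := Nat.even_iff.mp he
    cases b
    · simp only [mval, if_neg hℓ, if_neg ho]
      have h1 : ℓ / 2 - 1 + 1 = ℓ / 2 := by omega
      have h2 : 2 * (ℓ / 2) = ℓ := by omega
      rw [VV, toL_apply]
      simp only [lval]
      rw [vv, h1, h2]
      rw [Nat.mul_div_cancel_left _ (by omega : 0 < ℓ)]
      rcases (heven ℓ he).2 with ⟨w, hw⟩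
      omega
    · simp only [mval, if_neg hℓ, if_neg ho, hUU]
      rcases (heven ℓ he).1 with ⟨w, hw⟩
      omega

theorem toL_toM {n : ℕ} {l : (ℕ × Bool) →₀ ℕ}
    (hsupp : l.support ⊆ range (n + 1) ×ˢ Finset.univ)
    (hdvd : ∀ s, s < n + 1 → (s + 1) ∣ l (s, true) ∧ 2 * (s + 1) ∣ l (s, false)) :
    toL (toM l) = l := by
  have hout : ∀ q : ℕ × Bool, ¬ q.1 < n + 1 → l q = 0 := by
    intro q hq
    by_contra h0
    have := hsupp (Finsupp.mem_support_iff.mpr h0)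
    rw [Finset.mem_product, Finset.mem_range] at this
    exact hq this.1
  refine Finsupp.ext fun p => ?_
  rcases p with ⟨s, j⟩
  rw [toL_apply]
  cases j
  · simp only [lval]
    have h1 : vv (toM l) s = VV l s := by
      rw [vv, toM_apply]
      simp only [mval]
      have hno : ¬ Odd (2 * (s + 1)) := by rw [Nat.odd_iff]; omega
      rw [if_neg (by omega : ¬ (2 * (s + 1) = 0)), if_neg hno]
      have h2 : 2 * (s + 1) / 2 - 1 = s := by omega
      rw [h2]
      omega
    rw [h1, VV]
    by_cases hs : s < n + 1
    · exact Nat.mul_div_cancel' (hdvd s hs).2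
    · rw [hout (s, false) hs]
      simp
  · simp only [lval]
    have h1 : uu (toM l) s = UU l s := by
      rw [uu, toM_apply]
      simp only [mval]
      rw [if_neg (by omega : ¬ (s + 1 = 0))]
      have h2 : s + 1 - 1 = s := by omega
      by_cases ho : Odd (s + 1)
      · rw [if_pos ho, if_pos ho, h2]
      · rw [if_neg ho, if_neg ho, h2]
        omega
    rw [h1, UU]
    by_cases hs : s < n + 1
    · exact Nat.mul_div_cancel' (hdvd s hs).1
    · rw [hout (s, true) hs]
      simp

/-! ### Assembling the count. -/

def cset : ℕ × Bool → Set ℕ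
  | (s, true) => {k | (s + 1) ∣ k}
  | (s, false) => {k | 2 * (s + 1) ∣ k}

theorem prod_indicator (n : ℕ) :
    ∏ i ∈ range (n + 1) ×ˢ (Finset.univ : Finset Bool), indicatorSeries ℚ (cset i) =
      ∏ k ∈ range (n + 1), (1 + X ^ (k + 1)) * ((1 - (X : PowerSeries ℚ) ^ (2 * (k + 1)))⁻¹) ^ 2 := by
  rw [Finset.prod_product]
  refine Finset.prod_congr rfl fun s _ => ?_
  rw [Fintype.prod_bool, factor]
  rfl

theorem toL_sum (n : ℕ) (m : (ℕ × Bool) →₀ ℕ) :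
    ∑ p ∈ range (n + 1) ×ˢ (Finset.univ : Finset Bool), toL m p =
      ∑ s ∈ range (n + 1), ((s + 1) * uu m s + 2 * (s + 1) * vv m s) := by
  rw [Finset.sum_product]
  refine Finset.sum_congr rfl fun s _ => ?_
  rw [Fintype.sum_bool, toL_apply, toL_apply]
  rfl

set_option maxHeartbeats 2000000 in
theorem stmt9 (n : ℕ) :
    ∃ g : PowerSeries ℚ,
      CoeffwiseProd (fun s : ℕ =>
        (1 + X ^ (s + 1)) * ((1 - X ^ (2 * (s + 1)))⁻¹) ^ 2) g ∧
      ((Nat.card {m : (ℕ × Bool) →₀ ℕ //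
          IsSYD m ∧ (∀ ℓ, Odd ℓ → m (ℓ, true) = m (ℓ, false)) ∧
          (∀ ℓ, Even ℓ → Even (m (ℓ, true)) ∧ Even (m (ℓ, false))) ∧
          sigPlus m + sigMinus m = 2 * n} : ℕ) : ℚ) = PowerSeries.coeff n g := by
  refine ⟨PowerSeries.mk fun d => coeff d (∏ k ∈ range (d + 1),
      (1 + X ^ (k + 1)) * ((1 - X ^ (2 * (k + 1)))⁻¹) ^ 2), ?_, ?_⟩
  · intro d
    filter_upwards [Filter.eventually_ge_atTop (d + 1)] with N hN
    simpa only [coeff_mk] using coeff_stable hN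
  · rw [coeff_mk]
    rw [← prod_indicator n]
    rw [coeff_prod_indicator]
    norm_cast
    set F : Finset (ℕ × Bool) := range (n + 1) ×ˢ (Finset.univ : Finset Bool) with hF
    have e : {m : (ℕ × Bool) →₀ ℕ //
          IsSYD m ∧ (∀ ℓ, Odd ℓ → m (ℓ, true) = m (ℓ, false)) ∧
          (∀ ℓ, Even ℓ → Even (m (ℓ, true)) ∧ Even (m (ℓ, false))) ∧
          sigPlus m + sigMinus m = 2 * n} ≃
        {l : (ℕ × Bool) →₀ ℕ // l ∈ (F.finsuppAntidiag n).filter fun l => ∀ i ∈ F, l i ∈ cset i} := by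
      refine ⟨fun x => ⟨toL x.1, ?_⟩, fun y => ⟨toM y.1, ?_⟩, ?_, ?_⟩
      · obtain ⟨m, hS, hodd, heven, hsum⟩ := x
        dsimp only
        have hsmall := small_of m hodd heven hsum
        rw [Finset.mem_filter, Finset.mem_finsuppAntidiag]
        refine ⟨⟨?_, ?_⟩, ?_⟩
        · have h2 : (m.sum fun p k => k * p.1) = 2 * n := by rw [← sig_sum]; exact hsum
          rw [sum_eq m hodd heven hsmall] at h2
          have h3 := toL_sum n m
          rw [hF]
          show (∑ p ∈ range (n + 1) ×ˢ (Finset.univ : Finset Bool), toL m p) = n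
          omega
        · rintro ⟨s, j⟩ hp
          have hp' : lval m (s, j) ≠ 0 := by
            rwa [Finsupp.mem_support_iff, toL_apply] at hp
          rw [hF, Finset.mem_product, Finset.mem_range]
          refine ⟨?_, Finset.mem_univ _⟩
          cases j
          · simp only [lval] at hp'
            have hv : vv m s ≠ 0 := fun h0 => hp' (by rw [h0, mul_zero])
            have hm : m (2 * (s + 1), false) ≠ 0 := fun h0 => hv (by simp [vv, h0])
            have := hsmall _ hm
            dsimp at this
            omega
          · simp only [lval] at hp'
            have hm : m (s + 1, true) ≠ 0 := by
              intro h0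
              apply hp'
              rw [uu]
              split_ifs <;> simp [h0]
            have := hsmall _ hm
            dsimp at this
            omega
        · rintro ⟨s, j⟩ hij
          cases j
          · show toL m (s, false) ∈ cset (s, false)
            rw [toL_apply]
            exact dvd_mul_right _ _
          · show toL m (s, true) ∈ cset (s, true)
            rw [toL_apply]
            exact dvd_mul_right _ _
      · obtain ⟨l, hl⟩ := y
        dsimp only
        rw [Finset.mem_filter, Finset.mem_finsuppAntidiag] at hl
        obtain ⟨⟨hsum, hsupp⟩, hc⟩ := hl
        have hdvd : ∀ s, s < n + 1 → (s + 1) ∣ l (s, true) ∧ 2 * (s + 1) ∣ l (s, false) := by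
          intro s hs
          constructor
          · exact hc (s, true) (by
              rw [hF, Finset.mem_product, Finset.mem_range]
              exact ⟨hs, Finset.mem_univ _⟩)
          · exact hc (s, false) (by
              rw [hF, Finset.mem_product, Finset.mem_range]
              exact ⟨hs, Finset.mem_univ _⟩)
        have hS' : IsSYD (toM l) := by
          intro b
          rw [toM_apply]
          cases b <;> simp [mval]
        have hodd' : ∀ ℓ, Odd ℓ → (toM l) (ℓ, true) = (toM l) (ℓ, false) := by
          intro ℓ ho
          have hℓ : ℓ ≠ 0 := by
            rintro rfl
            rw [Nat.odd_iff] at ho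
            omega
          rw [toM_apply, toM_apply]
          simp only [mval, if_neg hℓ, if_pos ho]
        have heven' : ∀ ℓ, Even ℓ → Even ((toM l) (ℓ, true)) ∧ Even ((toM l) (ℓ, false)) := by
          intro ℓ he
          rcases eq_or_ne ℓ 0 with rfl | hℓ
          · rw [toM_apply, toM_apply]
            simp [mval]
          · have ho : ¬ Odd ℓ := Nat.not_odd_iff_even.mpr he
            rw [toM_apply, toM_apply]
            simp only [mval, if_neg hℓ, if_neg ho]
            exact ⟨⟨_, two_mul _⟩, ⟨_, two_mul _⟩⟩
        have hval : ∀ q ∈ F, l q ≤ n := by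
          intro q hq
          calc l q ≤ ∑ p ∈ F, l p := Finset.single_le_sum (fun i _ => Nat.zero_le _) hq
          _ = n := hsum
        have hsmall' : ∀ p, (toM l) p ≠ 0 → p.1 ≤ n := by
          rintro ⟨ℓ, b⟩ hp
          rw [toM_apply] at hp
          have hℓ0 : ℓ ≠ 0 := by
            rintro rfl
            cases b <;> simp [mval] at hp
          have haux : ∀ t : ℕ, l (t, true) ≠ 0 → UU l t ≠ 0 → ℓ = t + 1 → ℓ ≤ n := by
            intro t hl' _ hrfl
            have hmem := hsupp (Finsupp.mem_support_iff.mpr hl')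
            rw [hF, Finset.mem_product, Finset.mem_range] at hmem
            have hdl := (hdvd t hmem.1).1
            have h4 : t + 1 ≤ l (t, true) := Nat.le_of_dvd (Nat.pos_of_ne_zero hl') hdl
            have hle := hval (t, true) (by
              rw [hF, Finset.mem_product, Finset.mem_range]
              exact ⟨hmem.1, Finset.mem_univ _⟩)
            omega
          by_cases ho : Odd ℓ
          · have hU : UU l (ℓ - 1) ≠ 0 := by
              cases b <;> simp only [mval, if_neg hℓ0, if_pos ho] at hp <;> exact hp
            have hl' : l (ℓ - 1, true) ≠ 0 := fun h0 => hU (by simp [UU, h0])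
            exact haux (ℓ - 1) hl' hU (by omega)
          · cases b
            · simp only [mval, if_neg hℓ0, if_neg ho] at hp
              have hV : VV l (ℓ / 2 - 1) ≠ 0 := fun h0 => hp (by rw [h0, mul_zero])
              have hl' : l (ℓ / 2 - 1, false) ≠ 0 := fun h0 => hV (by simp [VV, h0])
              have hmem := hsupp (Finsupp.mem_support_iff.mpr hl')
              rw [hF, Finset.mem_product, Finset.mem_range] at hmem
              have hdl := (hdvd (ℓ / 2 - 1) hmem.1).2
              have h4 : 2 * (ℓ / 2 - 1 + 1) ≤ l (ℓ / 2 - 1, false) :=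
                Nat.le_of_dvd (Nat.pos_of_ne_zero hl') hdl
              have hle := hval (ℓ / 2 - 1, false) (by
                rw [hF, Finset.mem_product, Finset.mem_range]
                exact ⟨hmem.1, Finset.mem_univ _⟩)
              have hev : ℓ % 2 = 0 := Nat.even_iff.mp (Nat.not_odd_iff_even.mp ho)
              omega
            · simp only [mval, if_neg hℓ0, if_neg ho] at hp
              have hU : UU l (ℓ - 1) ≠ 0 := fun h0 => hp (by rw [h0, mul_zero])
              have hl' : l (ℓ - 1, true) ≠ 0 := fun h0 => hU (by simp [UU, h0])
              exact haux (ℓ - 1) hl' hU (by omega)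
        refine ⟨hS', hodd', heven', ?_⟩
        have hrt : toL (toM l) = l := toL_toM hsupp hdvd
        have hkey : (2 : ℕ) * ∑ s ∈ range (n + 1),
            ((s + 1) * uu (toM l) s + 2 * (s + 1) * vv (toM l) s) = 2 * n := by
          have h5 : ∑ p ∈ range (n + 1) ×ˢ (Finset.univ : Finset Bool), toL (toM l) p
              = ∑ p ∈ range (n + 1) ×ˢ (Finset.univ : Finset Bool), l p :=
            Finset.sum_congr rfl fun p _ => DFunLike.congr_fun hrt p
          rw [hF] at hsum
          have h6 : (∑ p ∈ range (n + 1) ×ˢ (Finset.univ : Finset Bool), l p) = n := hsum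
          have h7 := toL_sum n (toM l)
          omega
        rw [sig_sum, sum_eq (toM l) hodd' heven' hsmall', hkey]
      · rintro ⟨m, hS, hodd, heven, hsum⟩
        exact Subtype.ext (toM_toL hS hodd heven)
      · rintro ⟨l, hl⟩
        rw [Finset.mem_filter, Finset.mem_finsuppAntidiag] at hl
        obtain ⟨⟨hsum, hsupp⟩, hc⟩ := hl
        have hdvd : ∀ s, s < n + 1 → (s + 1) ∣ l (s, true) ∧ 2 * (s + 1) ∣ l (s, false) := by
          intro s hs
          constructor
          · exact hc (s, true) (by
              rw [hF, Finset.mem_product, Finset.mem_range]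
              exact ⟨hs, Finset.mem_univ _⟩)
          · exact hc (s, false) (by
              rw [hF, Finset.mem_product, Finset.mem_range]
              exact ⟨hs, Finset.mem_univ _⟩)
        exact Subtype.ext (toL_toM hsupp hdvd)
    rw [Nat.card_congr e, Nat.card_eq_finsetCard]


end

end Stmt9
end

section
/- For every integer m ≥ 0 the following identity holds in ℤ⟦u,v⟧, where h_r(u,v) = ∑_{i=0}^r u^i v^{r−i} for r ≥ 0 and h_{−1} = 0: 1 + 2∑_{r≥1} (uv)^{mr}·( h_r(u,v) + uv·h_{r−2}(u,v) ) = (1 + u^{m+1} v^m)(1 + u^m v^{m+1})(1 − u^{m+1} v^m)^{−1}(1 − u^m v^{m+1})^{−1}. The left-hand sum converges coefficientwise since its r-th term has total degree at least r. -/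
/-!
Statement 10: for every m ≥ 0, in ℤ⟦u,v⟧:
1 + 2∑_{r≥1} (uv)^{mr}·(h_r(u,v) + uv·h_{r−2}(u,v))
  = (1+u^{m+1}v^m)(1+u^m v^{m+1})(1−u^{m+1}v^m)^{−1}(1−u^m v^{m+1})^{−1},
where h_r(u,v) = ∑_{i=0}^r u^i v^{r−i} and h_{−1} = 0.
-/

namespace Stmt10

noncomputable def u : MvPowerSeries (Fin 2) ℤ := MvPowerSeries.X 0
noncomputable def v : MvPowerSeries (Fin 2) ℤ := MvPowerSeries.X 1

/-- The complete homogeneous symmetric polynomial `h_r(u,v) = ∑_{i=0}^r u^i v^{r-i}`. -/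
noncomputable def hpoly (r : ℕ) : MvPowerSeries (Fin 2) ℤ :=
  ∑ i ∈ Finset.range (r + 1), u ^ i * v ^ (r - i)

/-- The `r`-th term `(uv)^{mr}·(h_r + uv·h_{r−2})` of the left-hand sum (with the
convention `h_{−1} = 0`, relevant for `r = 1`). -/
noncomputable def term (m r : ℕ) : MvPowerSeries (Fin 2) ℤ :=
  (u * v) ^ (m * r) * (hpoly r + u * v * (if 2 ≤ r then hpoly (r - 2) else 0))

/-- Coefficientwise convergence of an infinite series of two-variable formal power
series. -/
def CoeffwiseSum (f : ℕ → MvPowerSeries (Fin 2) ℤ) (g : MvPowerSeries (Fin 2) ℤ) : Prop :=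
  ∀ d : Fin 2 →₀ ℕ, ∀ᶠ N in Filter.atTop,
    MvPowerSeries.coeff d (∑ k ∈ Finset.range N, f k) = MvPowerSeries.coeff d g

/-! ### Auxiliary definitions -/

noncomputable def A (m : ℕ) : MvPowerSeries (Fin 2) ℤ := u ^ (m+1) * v ^ m
noncomputable def B (m : ℕ) : MvPowerSeries (Fin 2) ℤ := u ^ m * v ^ (m+1)

/-- `K A B r = h_r(A, B)`. -/
noncomputable def K (A B : MvPowerSeries (Fin 2) ℤ) (r : ℕ) : MvPowerSeries (Fin 2) ℤ :=
  ∑ i ∈ Finset.range (r + 1), A ^ i * B ^ (r - i)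

/-- Partial sums of the series written in terms of `K`. -/
noncomputable def PS (A B : MvPowerSeries (Fin 2) ℤ) (N : ℕ) : MvPowerSeries (Fin 2) ℤ :=
  ∑ k ∈ Finset.range N, (K A B (k+1) + (if 2 ≤ k + 1 then A*B*K A B (k-1) else 0))

/-! ### Generic algebraic lemmas about `K` and `PS` -/

lemma K_succ_left (A B : MvPowerSeries (Fin 2) ℤ) (r : ℕ) :
    K A B (r+1) = A * K A B r + B ^ (r+1) := by
  rw [K, K, Finset.sum_range_succ', Finset.mul_sum]
  simp only [Nat.succ_sub_succ, pow_zero, one_mul, Nat.sub_zero]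
  congr 1
  exact Finset.sum_congr rfl fun i _ => by ring

lemma K_succ_right (A B : MvPowerSeries (Fin 2) ℤ) (r : ℕ) :
    K A B (r+1) = B * K A B r + A ^ (r+1) := by
  rw [K, K, Finset.sum_range_succ, Finset.mul_sum]
  simp only [Nat.sub_self, pow_zero, mul_one]
  congr 1
  refine Finset.sum_congr rfl fun i hi => ?_
  rw [Finset.mem_range, Nat.lt_succ_iff] at hi
  rw [show r + 1 - i = (r - i) + 1 by omega, pow_succ]
  ring

lemma K_rec (A B : MvPowerSeries (Fin 2) ℤ) (r : ℕ) :
    K A B (r+2) = (A+B) * K A B (r+1) - A*B*K A B r := by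
  have h2 := K_succ_right A B (r+1)
  have h3 := K_succ_right A B r
  linear_combination h2 - A * h3

lemma PS_formula (A B : MvPowerSeries (Fin 2) ℤ) (n : ℕ) :
    (1-A)*(1-B) * PS A B (n+2) =
      (A+B) - (K A B (n+3) - A*B*K A B (n+2) + A*B*K A B (n+1) - (A*B)^2 * K A B n) := by
  induction n with
  | zero =>
      simp only [PS, K, Finset.sum_range_succ, Finset.sum_range_zero]
      norm_num
      ring
  | succ n ih =>
      rw [PS, Finset.sum_range_succ, ← PS, if_pos (by omega : 2 ≤ n + 2 + 1),
        show n + 2 - 1 = n + 1 by omega]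
      have r2 := K_rec A B (n+2)
      have r0 := K_rec A B n
      linear_combination ih + r2 + (A*B) * r0

/-! ### Translating `term` into `K` -/

lemma L1 (m r : ℕ) : (u * v) ^ (m * r) * hpoly r = K (A m) (B m) r := by
  rw [hpoly, K, Finset.mul_sum]
  refine Finset.sum_congr rfl fun i hi => ?_
  rw [Finset.mem_range, Nat.lt_succ_iff] at hi
  obtain ⟨j, rfl⟩ := Nat.exists_eq_add_of_le hi
  rw [A, B, Nat.add_sub_cancel_left]
  ring

lemma L2 (m r : ℕ) :
    (u * v) ^ (m * (r + 2)) * (u * v) * hpoly r = A m * B m * K (A m) (B m) r := by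
  rw [hpoly, K, Finset.mul_sum, Finset.mul_sum]
  refine Finset.sum_congr rfl fun i hi => ?_
  rw [Finset.mem_range, Nat.lt_succ_iff] at hi
  obtain ⟨j, rfl⟩ := Nat.exists_eq_add_of_le hi
  rw [A, B, Nat.add_sub_cancel_left]
  ring

lemma term_eq (m k : ℕ) :
    term m (k+1) = K (A m) (B m) (k+1)
      + (if 2 ≤ k + 1 then A m * B m * K (A m) (B m) (k-1) else 0) := by
  rcases Nat.eq_zero_or_pos k with rfl | hk
  · rw [term, if_neg (by omega), if_neg (by omega), mul_zero, add_zero, add_zero, L1]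
  · rw [term, if_pos (by omega), if_pos (by omega), mul_add, L1,
      show k + 1 - 2 = k - 1 by omega, show k + 1 = (k - 1) + 2 by omega,
      ← mul_assoc, L2]

/-! ### Coefficient vanishing lemmas -/

lemma coeff_uv_mul (d : Fin 2 →₀ ℕ) (a b : ℕ) (g : MvPowerSeries (Fin 2) ℤ)
    (h : d 0 < a ∨ d 1 < b) :
    MvPowerSeries.coeff d (u ^ a * v ^ b * g) = 0 := by
  rw [u, v, MvPowerSeries.X_pow_eq, MvPowerSeries.X_pow_eq,
    MvPowerSeries.monomial_mul_monomial, one_mul, MvPowerSeries.coeff_monomial_mul]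
  rw [if_neg]
  intro hle
  rcases h with h | h
  · have := hle 0
    simp [Finsupp.single_apply] at this
    omega
  · have := hle 1
    simp [Finsupp.single_apply] at this
    omega

lemma coeff_K_mul (m : ℕ) (d : Fin 2 →₀ ℕ) (r : ℕ) (g : MvPowerSeries (Fin 2) ℤ)
    (hr : d 0 + d 1 < r) :
    MvPowerSeries.coeff d (K (A m) (B m) r * g) = 0 := by
  rw [K, Finset.sum_mul, map_sum]
  refine Finset.sum_eq_zero fun i hi => ?_
  rw [Finset.mem_range, Nat.lt_succ_iff] at hi
  obtain ⟨j, rfl⟩ := Nat.exists_eq_add_of_le hi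
  have he : A m ^ i * B m ^ (i + j - i) * g
      = u ^ ((m+1)*i + m*j) * v ^ (m*i + (m+1)*j) * g := by
    rw [A, B, Nat.add_sub_cancel_left]; ring
  rw [he]
  apply coeff_uv_mul
  have h1 : i ≤ (m+1)*i + m*j :=
    le_trans (Nat.le_mul_of_pos_left i m.succ_pos) (Nat.le_add_right _ _)
  have h2 : j ≤ m*i + (m+1)*j :=
    le_trans (Nat.le_mul_of_pos_left j m.succ_pos) (Nat.le_add_left _ _)
  rcases Nat.lt_or_ge (d 0) ((m+1)*i + m*j) with h | h
  · exact Or.inl h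
  · refine Or.inr (lt_of_lt_of_le ?_ h2)
    have : i ≤ d 0 := le_trans h1 h
    omega

/-! ### Units -/

lemma isUnit_one_sub_A (m : ℕ) : IsUnit (1 - A m) := by
  rw [MvPowerSeries.isUnit_iff_constantCoeff]
  rw [A, u, v]
  simp [zero_pow (Nat.succ_ne_zero m)]

lemma isUnit_one_sub_B (m : ℕ) : IsUnit (1 - B m) := by
  rw [MvPowerSeries.isUnit_iff_constantCoeff]
  rw [B, u, v]
  simp [zero_pow (Nat.succ_ne_zero m)]

theorem stmt10 (m : ℕ) :
    ∃ S : MvPowerSeries (Fin 2) ℤ,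
      CoeffwiseSum (fun r : ℕ => term m (r + 1)) S ∧
      1 + 2 * S =
        (1 + u ^ (m + 1) * v ^ m) * (1 + u ^ m * v ^ (m + 1)) *
          Ring.inverse (1 - u ^ (m + 1) * v ^ m) *
          Ring.inverse (1 - u ^ m * v ^ (m + 1)) := by
  have hAdef : u ^ (m+1) * v ^ m = A m := rfl
  have hBdef : u ^ m * v ^ (m+1) = B m := rfl
  set IA := Ring.inverse (1 - A m) with hIA
  set IB := Ring.inverse (1 - B m) with hIB
  have hA : (1 - A m) * IA = 1 := Ring.mul_inverse_cancel _ (isUnit_one_sub_A m)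
  have hB : (1 - B m) * IB = 1 := Ring.mul_inverse_cancel _ (isUnit_one_sub_B m)
  refine ⟨(A m + B m) * IA * IB, ?_, ?_⟩
  · intro d
    rw [Filter.eventually_atTop]
    refine ⟨d 0 + d 1 + 3, fun N hN => ?_⟩
    obtain ⟨n, rfl⟩ : ∃ n, N = n + 2 := ⟨N - 2, by omega⟩
    have hsum : ∑ k ∈ Finset.range (n+2), term m (k+1) = PS (A m) (B m) (n+2) :=
      Finset.sum_congr rfl fun k _ => term_eq m k
    rw [hsum]
    have hps := PS_formula (A m) (B m) n
    have key : PS (A m) (B m) (n+2) =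
        ((A m + B m) - (K (A m) (B m) (n+3) - A m*B m*K (A m) (B m) (n+2)
          + A m*B m*K (A m) (B m) (n+1) - (A m*B m)^2 * K (A m) (B m) n)) * (IA * IB) := by
      calc PS (A m) (B m) (n+2)
          = ((1 - A m) * IA) * ((1 - B m) * IB) * PS (A m) (B m) (n+2) := by
            rw [hA, hB]; ring
        _ = ((1 - A m)*(1 - B m) * PS (A m) (B m) (n+2)) * (IA * IB) := by ring
        _ = _ := by rw [hps]
    have hzero : MvPowerSeries.coeff d
        ((K (A m) (B m) (n+3) - A m*B m*K (A m) (B m) (n+2)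
          + A m*B m*K (A m) (B m) (n+1) - (A m*B m)^2 * K (A m) (B m) n) * (IA * IB)) = 0 := by
      have e1 : (K (A m) (B m) (n+3) - A m*B m*K (A m) (B m) (n+2)
          + A m*B m*K (A m) (B m) (n+1) - (A m*B m)^2 * K (A m) (B m) n) * (IA * IB)
          = K (A m) (B m) (n+3) * (IA * IB)
            - K (A m) (B m) (n+2) * (A m*B m*(IA * IB))
            + K (A m) (B m) (n+1) * (A m*B m*(IA * IB))
            - K (A m) (B m) n * ((A m*B m)^2*(IA * IB)) := by ring
      rw [e1, map_sub, map_add, map_sub,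
        coeff_K_mul m d (n+3) _ (by omega), coeff_K_mul m d (n+2) _ (by omega),
        coeff_K_mul m d (n+1) _ (by omega), coeff_K_mul m d n _ (by omega)]
      ring
    rw [key, sub_mul, map_sub, hzero, sub_zero, ← mul_assoc]
  · rw [hAdef, hBdef]
    have hinv : (1 - A m)*(1 - B m)*(IA*IB) = 1 := by
      calc (1 - A m)*(1 - B m)*(IA*IB) = ((1 - A m) * IA) * ((1 - B m) * IB) := by ring
        _ = 1 := by rw [hA, hB, mul_one]
    linear_combination -hinv

end Stmt10
end

section
/- For every integer k ≥ 0, the generating function of weighted partitions into odd parts with exactly 2k+1 parts satisfies, in ℚ⟦q⟧: ∑_{λ} wt_λ·q^{|λ|} = q^{2k+1}(1 − q^{4k+2})^{−1} · ∏_{i=1}^{k}(1 − q^{4i})^{−1} · ∏_{j=1}^{k}(1 + q^{4j−2})²(1 − q^{4j−2})^{−1}, where the sum on the left runs over all partitions λ into odd parts having exactly 2k+1 parts and |λ| denotes the number being partitioned. -/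
/-!
Statement 11.
-/

open scoped Classical
open PowerSeries

namespace Stmt11
/-- The weight `wt_λ = 3^a · 4^b` of a partition into odd parts (parts listed in weakly
decreasing order as `2μ₁+1 ≥ 2μ₂+1 ≥ …`; pairing pattern depends on the parity of the
number `s` of parts). -/
noncomputable def wtOdd {N : ℕ} (c : Nat.Partition N) : ℕ :=
  let l := (Multiset.sort c.parts (· ≤ ·)).reverse
  let s := l.length
  if s % 2 = 1 then
    3 ^ ((Finset.range ((s - 1) / 2)).filter
          (fun j => l.getD (2 * j) 0 = l.getD (2 * j + 1) 0 + 2)).card *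
      4 ^ ((Finset.range ((s - 1) / 2)).filter
          (fun j => l.getD (2 * j + 1) 0 + 4 ≤ l.getD (2 * j) 0)).card
  else
    3 ^ ((Finset.range (s / 2 - 1)).filter
          (fun j => l.getD (2 * j + 1) 0 = l.getD (2 * j + 2) 0 + 2)).card *
      4 ^ ((Finset.range (s / 2 - 1)).filter
          (fun j => l.getD (2 * j + 2) 0 + 4 ≤ l.getD (2 * j + 1) 0)).card

/-- The generating function `∑_λ wt_λ q^{|λ|}`, the sum over partitions λ into odd
parts having exactly `2k+1` parts. -/
noncomputable def lhs (k : ℕ) : PowerSeries ℚ :=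
  PowerSeries.mk fun N =>
    ((∑ c ∈ Finset.univ.filter
        (fun c : Nat.Partition N =>
          (∀ p ∈ c.parts, Odd p) ∧ Multiset.card c.parts = 2 * k + 1),
        wtOdd c : ℕ) : ℚ)



/-- weight of a single difference -/
def w (d : ℕ) : ℕ := if d = 0 then 1 else if d = 1 then 3 else 4

noncomputable def geom (m : ℕ) : PowerSeries ℚ :=
  PowerSeries.mk fun n => if m ∣ n then 1 else 0

noncomputable def wser (m : ℕ) : PowerSeries ℚ :=
  PowerSeries.mk fun n => if m ∣ n then (w (n / m) : ℚ) else 0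

noncomputable def pser (k : ℕ) : PowerSeries ℚ :=
  PowerSeries.mk fun n => if n % (4 * k + 2) = 2 * k + 1 then 1 else 0

lemma geom_mul (m : ℕ) (hm : 0 < m) : geom m * (1 - X ^ m) = 1 := by
  ext n
  rw [mul_sub, mul_one, map_sub, coeff_mul_X_pow']
  simp only [geom, coeff_mk, coeff_one]
  rcases eq_or_ne n 0 with rfl | hn
  · simp [Nat.not_le_of_lt hm, dvd_zero]
  · by_cases h : m ∣ n
    · obtain ⟨q, rfl⟩ := h
      have hq : q ≠ 0 := by rintro rfl; simp at hn
      have h1 : m ≤ m * q := Nat.le_mul_of_pos_right m (Nat.pos_of_ne_zero hq)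
      have h2 : m ∣ m * q - m := ⟨q - 1, by
        rw [Nat.mul_sub]; omega⟩
      simp [Nat.dvd_mul_right, h1, h2, hn]
    · have h2 : ¬ (m ≤ n ∧ m ∣ n - m) := by
        rintro ⟨h3, h4⟩
        obtain ⟨q, hq⟩ := h4
        exact h ⟨q + 1, by rw [Nat.mul_succ]; omega⟩
      simp only [h, if_false, hn, if_false]
      split_ifs with h5 h6
      · exact absurd ⟨h5, h6⟩ h2
      · ring
      · ring

lemma inv_one_sub_X_pow (m : ℕ) (hm : 0 < m) : (1 - X ^ m : PowerSeries ℚ)⁻¹ = geom m := by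
  symm
  rw [PowerSeries.eq_inv_iff_mul_eq_one]
  · exact geom_mul m hm
  · simp [hm.ne']

lemma wser_eq (m : ℕ) (hm : 0 < m) :
    (1 + X ^ m) ^ 2 * (1 - X ^ m : PowerSeries ℚ)⁻¹ = wser m := by
  rw [inv_one_sub_X_pow m hm]
  have hring : ((1 + X ^ m) ^ 2 * geom m : PowerSeries ℚ)
      = geom m + (X ^ m * geom m + X ^ m * geom m) + X ^ m * (X ^ m * geom m) := by ring
  rw [hring]
  ext n
  simp only [map_add, coeff_X_pow_mul']
  simp only [geom, wser, coeff_mk]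
  by_cases h : m ∣ n
  · obtain ⟨q, rfl⟩ := h
    rcases Nat.lt_or_ge q 2 with hq | hq
    · interval_cases q
      · simp [hm.ne', Nat.not_le_of_lt hm, w]
      · have h1 : m ≤ m * 1 := by omega
        have h2 : m * 1 - m = 0 := by omega
        simp [h1, h2, Nat.not_le_of_lt hm, hm.ne', w, Nat.mul_div_cancel_left, hm]
        norm_num
    · have h1 : m ≤ m * q := Nat.le_mul_of_pos_right m (by omega)
      have e1 : m * q - m = m * (q - 1) := by rw [Nat.mul_sub]; omega
      have h2 : m ≤ m * q - m := by rw [e1]; exact Nat.le_mul_of_pos_right m (by omega)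
      have e2 : m * q - m - m = m * (q - 2) := by
        rw [e1, Nat.mul_sub, Nat.mul_sub]; omega
      have hd : m ∣ m * q := Dvd.intro q rfl
      have hd1 : m ∣ m * q - m := e1 ▸ Dvd.intro _ rfl
      have hd2 : m ∣ m * q - m - m := e2 ▸ Dvd.intro _ rfl
      have hq' : m * q / m = q := Nat.mul_div_cancel_left q hm
      simp only [hd, if_true, h1, if_true, hd1, h2, hd2, hq']
      simp only [w]
      have : ¬ q = 0 := by omega
      have : ¬ q = 1 := by omega
      simp only [‹¬ q = 0›, ‹¬ q = 1›, if_false]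
      norm_num
  · have h1 : ¬ (m ≤ n ∧ m ∣ n - m) := by
      rintro ⟨h3, ⟨q, hq⟩⟩
      exact h ⟨q + 1, by rw [Nat.mul_succ]; omega⟩
    have h2 : ¬ (m ≤ n - m ∧ m ∣ n - m - m) := by
      rintro ⟨h3, ⟨q, hq⟩⟩
      have h4 : m ≤ n := le_trans (by omega) (Nat.sub_le n m)
      exact h ⟨q + 2, by rw [Nat.mul_add, Nat.mul_succ]; omega⟩
    simp only [h, if_false]
    split_ifs with h3 h4 h5 h5 <;> first
      | (exfalso; exact h1 ⟨h3, h4⟩)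
      | (exfalso; exact h2 ⟨h5.1, h5.2⟩)
      | ring
      | skip
    all_goals try (exfalso; omega)
    all_goals ring

lemma pser_eq (k : ℕ) :
    X ^ (2 * k + 1) * (1 - X ^ (4 * k + 2) : PowerSeries ℚ)⁻¹ = pser k := by
  rw [inv_one_sub_X_pow _ (by omega)]
  ext n
  rw [coeff_X_pow_mul']
  simp only [geom, pser, coeff_mk]
  have hdm := Nat.div_add_mod n (4 * k + 2)
  split_ifs with h1 h2 h3 h3
  · rfl
  · obtain ⟨q, hq⟩ := h2
    refine absurd ?_ h3
    rw [show n = 2 * k + 1 + (4 * k + 2) * q by omega, Nat.add_mul_mod_self_left,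
      Nat.mod_eq_of_lt (by omega)]
  · exact absurd ⟨n / (4 * k + 2), by omega⟩ h2
  · rfl
  · exfalso; omega
  · rfl
noncomputable def P (k : ℕ) (i : ℕ) : PowerSeries ℚ :=
  if i = 0 then pser k else if i % 2 = 1 then wser (2 * i) else geom (2 * i)

lemma P_zero (k : ℕ) : P k 0 = pser k := by simp [P]

lemma P_odd (k j : ℕ) : P k (2 * j + 1) = wser (4 * j + 2) := by
  unfold P
  rw [if_neg (by omega : ¬ (2 * j + 1 = 0)), if_pos (by omega : (2 * j + 1) % 2 = 1),
    show 2 * (2 * j + 1) = 4 * j + 2 by ring]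

lemma P_even (k j : ℕ) : P k (2 * j + 2) = geom (4 * j + 4) := by
  unfold P
  rw [if_neg (by omega : ¬ (2 * j + 2 = 0)), if_neg (by omega : ¬ (2 * j + 2) % 2 = 1),
    show 2 * (2 * j + 2) = 4 * j + 4 by ring]

lemma prod_split {M : Type*} [CommMonoid M] (F : ℕ → M) (k : ℕ) :
    ∏ i ∈ Finset.range (2 * k + 1), F i
      = F 0 * ∏ j ∈ Finset.range k, (F (2 * j + 1) * F (2 * j + 2)) := by
  induction k with
  | zero => simp
  | succ k ih =>
    rw [show 2 * (k + 1) + 1 = (2 * k + 1) + 1 + 1 by ring, Finset.prod_range_succ,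
      Finset.prod_range_succ, ih, Finset.prod_range_succ]
    rw [show (2 * k + 1) + 1 = 2 * k + 2 by ring]
    rw [mul_assoc, mul_assoc]

lemma rhs_eq (k : ℕ) :
    X ^ (2 * k + 1) * (1 - X ^ (4 * k + 2) : PowerSeries ℚ)⁻¹ *
        (∏ i ∈ Finset.Icc 1 k, (1 - X ^ (4 * i) : PowerSeries ℚ)⁻¹) *
        (∏ j ∈ Finset.Icc 1 k,
          (1 + X ^ (4 * j - 2)) ^ 2 * (1 - X ^ (4 * j - 2) : PowerSeries ℚ)⁻¹)
      = ∏ i ∈ Finset.range (2 * k + 1), P k i := by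
  rw [pser_eq]
  have c1 : (∏ i ∈ Finset.Icc 1 k, (1 - X ^ (4 * i) : PowerSeries ℚ)⁻¹)
      = ∏ i ∈ Finset.Icc 1 k, geom (4 * i) := by
    refine Finset.prod_congr rfl fun i hi => ?_
    exact inv_one_sub_X_pow (4 * i) (by have := (Finset.mem_Icc.mp hi).1; omega)
  have c2 : (∏ j ∈ Finset.Icc 1 k,
        (1 + X ^ (4 * j - 2)) ^ 2 * (1 - X ^ (4 * j - 2) : PowerSeries ℚ)⁻¹)
      = ∏ j ∈ Finset.Icc 1 k, wser (4 * j - 2) := by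
    refine Finset.prod_congr rfl fun j hj => ?_
    exact wser_eq (4 * j - 2) (by have := (Finset.mem_Icc.mp hj).1; omega)
  rw [c1, c2]
  rw [prod_split (P k) k, P_zero]
  have c3 : (∏ j ∈ Finset.range k, (P k (2 * j + 1) * P k (2 * j + 2)))
      = ∏ j ∈ Finset.range k, (wser (4 * j + 2) * geom (4 * j + 4)) :=
    Finset.prod_congr rfl fun j _ => by rw [P_odd, P_even]
  rw [c3]
  have hIcc : (Finset.Icc 1 k) = Finset.Ico 1 (k + 1) := by
    rw [Finset.Ico_add_one_right_eq_Icc]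
  rw [hIcc, Finset.prod_Ico_eq_prod_range, Finset.prod_Ico_eq_prod_range]
  rw [Finset.prod_mul_distrib]
  have e3 : (∏ i ∈ Finset.range (k + 1 - 1), geom (4 * (1 + i)))
      = ∏ j ∈ Finset.range k, geom (4 * j + 4) := by
    rw [show k + 1 - 1 = k by omega]
    exact Finset.prod_congr rfl fun j _ => by rw [show 4 * (1 + j) = 4 * j + 4 by ring]
  have e4 : (∏ i ∈ Finset.range (k + 1 - 1), wser (4 * (1 + i) - 2))
      = ∏ j ∈ Finset.range k, wser (4 * j + 2) := by
    rw [show k + 1 - 1 = k by omega]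
    exact Finset.prod_congr rfl fun j _ => by rw [show 4 * (1 + j) - 2 = 4 * j + 2 by omega]
  rw [e3, e4]
  ring



/-- every list equals the map of `getD` over `range length` -/
lemma list_eq_map_getD (L : List ℕ) :
    L = (List.range L.length).map (fun i => L.getD i 0) := by
  apply List.ext_getElem
  · simp
  · intro i h1 h2
    rw [List.getElem_map, List.getElem_range, List.getD_eq_getElem _ _ h1]

/-- telescoping: forward direction -/
lemma tele1 (v : ℕ → ℕ) (m : ℕ) (hv : ∀ i, i < m → v (i + 1) ≤ v i) :
    (∑ i ∈ Finset.range m, (i + 1) * (v i - v (i + 1))) + (m + 1) * v m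
      = ∑ i ∈ Finset.range (m + 1), v i := by
  induction m with
  | zero => simp
  | succ m ih =>
    rw [Finset.sum_range_succ, Finset.sum_range_succ (f := v)]
    rw [← ih (fun i hi => hv i (by omega))]
    have h1 : v (m + 1) ≤ v m := hv m (by omega)
    have h2 : (m + 1) * (v m - v (m + 1)) = (m + 1) * v m - (m + 1) * v (m + 1) := by
      rw [Nat.mul_sub]
    have h3 : (m + 1) * v (m + 1) ≤ (m + 1) * v m := Nat.mul_le_mul_left _ h1
    have h4 : (m + 1 + 1) * v (m + 1) = (m + 1) * v (m + 1) + v (m + 1) := by ring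
    omega

/-- telescoping: backward direction -/
lemma tele2 (v : ℕ → ℕ) (m : ℕ) (hv : ∀ i, i < m → v (i + 1) ≤ v i) :
    ∀ i, i ≤ m → v i = v m + ∑ t ∈ Finset.Ioc i m, (v (t - 1) - v t) := by
  induction m with
  | zero => intro i hi; interval_cases i; simp
  | succ m ih =>
    intro i hi
    rcases Nat.eq_or_lt_of_le hi with rfl | hlt
    · simp
    · have hi' : i ≤ m := by omega
      rw [Finset.sum_Ioc_succ_top hi']
      have h1 : v (m + 1) ≤ v m := hv m (by omega)
      have h2 : v i = v m + ∑ t ∈ Finset.Ioc i m, (v (t - 1) - v t) :=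
        ih (fun t ht => hv t (by omega)) i hi'
      have h3 : (m + 1 : ℕ) - 1 = m := by omega
      rw [h3]
      omega

/-- double sum swap -/
lemma tele3 (s : ℕ → ℕ) (m : ℕ) :
    ∑ i ∈ Finset.range (m + 1), ∑ t ∈ Finset.Ioc i m, s t
      = ∑ t ∈ Finset.Icc 1 m, t * s t := by
  induction m with
  | zero => simp
  | succ m ih =>
    rw [Finset.sum_range_succ]
    have e0 : Finset.Ioc (m + 1) (m + 1) = ∅ := by simp
    rw [e0, Finset.sum_empty, add_zero]
    have e1 : ∀ i ∈ Finset.range (m + 1),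
        (∑ t ∈ Finset.Ioc i (m + 1), s t) = (∑ t ∈ Finset.Ioc i m, s t) + s (m + 1) := by
      intro i hi
      exact Finset.sum_Ioc_succ_top (by
        have := Finset.mem_range.mp hi; omega) s
    rw [Finset.sum_congr rfl e1, Finset.sum_add_distrib, ih, Finset.sum_const,
      Finset.card_range, Finset.sum_Icc_succ_top (by omega)]
    simp [mul_comm]

/-- splitting Ioc at the bottom -/
lemma Ioc_insert (i m : ℕ) (h1 : 1 ≤ i) (h2 : i ≤ m) :
    Finset.Ioc (i - 1) m = insert i (Finset.Ioc i m) := by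
  ext t
  simp only [Finset.mem_Ioc, Finset.mem_insert]
  omega

lemma range_eq_insert_Icc (m : ℕ) :
    Finset.range (m + 1) = insert 0 (Finset.Icc 1 m) := by
  ext t
  simp only [Finset.mem_range, Finset.mem_insert, Finset.mem_Icc]
  omega


lemma prod_w (s : Finset ℕ) (v : ℕ → ℕ) :
    (∏ j ∈ s, w (v j))
      = 3 ^ (s.filter (fun j => v j = 1)).card * 4 ^ (s.filter (fun j => 2 ≤ v j)).card := by
  have e1 : ∀ j ∈ s, w (v j)
      = 3 ^ (if v j = 1 then 1 else 0) * 4 ^ (if 2 ≤ v j then 1 else 0) := by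
    intro j _
    rcases Nat.lt_or_ge (v j) 2 with h | h
    · interval_cases h : (v j) <;> simp [w]
    · have h1 : ¬ v j = 0 := by omega
      have h2 : ¬ v j = 1 := by omega
      simp [w, h1, h2, h]
  rw [Finset.prod_congr rfl e1, Finset.prod_mul_distrib, Finset.prod_pow_eq_pow_sum,
    Finset.prod_pow_eq_pow_sum, Finset.card_filter, Finset.card_filter]



noncomputable section

def Lc {N : ℕ} (c : Nat.Partition N) : List ℕ := (Multiset.sort c.parts (· ≤ ·)).reverse

def u {N : ℕ} (c : Nat.Partition N) (i : ℕ) : ℕ := (Lc c).getD i 0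

lemma Lc_coe {N : ℕ} (c : Nat.Partition N) : (↑(Lc c) : Multiset ℕ) = c.parts := by
  rw [Lc, Multiset.coe_reverse, Multiset.sort_eq]

lemma Lc_length {N : ℕ} (c : Nat.Partition N) :
    (Lc c).length = Multiset.card c.parts := by
  rw [Lc, List.length_reverse, Multiset.length_sort]

lemma Lc_sorted {N : ℕ} (c : Nat.Partition N) : (Lc c).Pairwise (· ≥ ·) := by
  rw [Lc, List.pairwise_reverse]
  exact List.Pairwise.imp (fun {a b} h => h) (Multiset.pairwise_sort c.parts (· ≤ ·))

lemma u_mono {N : ℕ} (c : Nat.Partition N) {i j : ℕ} (hij : i ≤ j)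
    (hj : j < (Lc c).length) : u c j ≤ u c i := by
  rcases Nat.eq_or_lt_of_le hij with rfl | hlt
  · exact le_rfl
  · have hi : i < (Lc c).length := lt_trans hlt hj
    rw [u, u, List.getD_eq_getElem _ _ hi, List.getD_eq_getElem _ _ hj]
    exact List.pairwise_iff_getElem.mp (Lc_sorted c) i j hi hj hlt

lemma u_mem {N : ℕ} (c : Nat.Partition N) {i : ℕ} (hi : i < (Lc c).length) :
    u c i ∈ c.parts := by
  rw [← Lc_coe, Multiset.mem_coe, u, List.getD_eq_getElem _ _ hi]
  exact List.getElem_mem hi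

lemma parts_eq_map {N : ℕ} (c : Nat.Partition N) :
    c.parts = Multiset.map (u c) (Multiset.range (Lc c).length) := by
  conv_lhs => rw [← Lc_coe c]
  conv_lhs => rw [list_eq_map_getD (Lc c)]
  rfl

lemma sum_u {N : ℕ} (c : Nat.Partition N) :
    ∑ i ∈ Finset.range (Lc c).length, u c i = N := by
  have h2 : ∑ i ∈ Finset.range (Lc c).length, u c i
      = (Multiset.map (u c) (Multiset.range (Lc c).length)).sum := by
    rw [Finset.sum, Finset.range_val]
  rw [h2, ← parts_eq_map c]
  exact c.parts_sum

/-- the forward function -/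
def g (k : ℕ) {N : ℕ} (c : Nat.Partition N) : ℕ → ℕ := fun i =>
  if i = 0 then (2 * k + 1) * u c (2 * k)
  else if i ≤ 2 * k then i * (u c (i - 1) - u c i) else 0

def Phi (k : ℕ) {N : ℕ} (c : Nat.Partition N) : ℕ →₀ ℕ :=
  Finsupp.onFinset (Finset.range (2 * k + 1)) (g k c) (fun i hi => by
    rw [Finset.mem_range]
    by_contra h
    exact hi (by rw [g, if_neg (by omega), if_neg (by omega)]))

lemma Phi_apply (k : ℕ) {N : ℕ} (c : Nat.Partition N) (i : ℕ) : Phi k c i = g k c i :=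
  Finsupp.onFinset_apply

/-- the backward function giving parts -/
def pF (k : ℕ) (l : ℕ →₀ ℕ) (i : ℕ) : ℕ :=
  l 0 / (2 * k + 1) + ∑ t ∈ Finset.Ioc i (2 * k), l t / t

def Cond (k : ℕ) (l : ℕ →₀ ℕ) : Prop :=
  l 0 % (4 * k + 2) = 2 * k + 1 ∧
    ∀ j, j < k → (4 * j + 2) ∣ l (2 * j + 1) ∧ (4 * j + 4) ∣ l (2 * j + 2)

lemma cond_l0 {k : ℕ} {l : ℕ →₀ ℕ} (h : Cond k l) :
    ∃ Q, l 0 = (2 * k + 1) * (2 * Q + 1) := by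
  refine ⟨l 0 / (4 * k + 2), ?_⟩
  have hd := Nat.div_add_mod (l 0) (4 * k + 2)
  rw [h.1] at hd
  rw [show (2 * k + 1) * (2 * (l 0 / (4 * k + 2)) + 1)
    = (4 * k + 2) * (l 0 / (4 * k + 2)) + (2 * k + 1) by ring]
  omega

lemma cond_div0 {k : ℕ} {l : ℕ →₀ ℕ} (h : Cond k l) :
    ∃ Q, l 0 / (2 * k + 1) = 2 * Q + 1 ∧ l 0 = (2 * k + 1) * (2 * Q + 1) := by
  obtain ⟨Q, hQ⟩ := cond_l0 h
  exact ⟨Q, by rw [hQ, Nat.mul_div_cancel_left _ (by omega)], hQ⟩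

lemma cond_dvd2t {k : ℕ} {l : ℕ →₀ ℕ} (h : Cond k l) :
    ∀ t, 1 ≤ t → t ≤ 2 * k → 2 * t ∣ l t := by
  intro t h1 h2
  rcases Nat.even_or_odd t with ⟨j, hj⟩ | ⟨j, hj⟩
  · have hj1 : 1 ≤ j := by omega
    have hj2 : j - 1 < k := by omega
    have := (h.2 (j - 1) hj2).2
    have e : 2 * (j - 1) + 2 = t := by omega
    have e2 : 4 * (j - 1) + 4 = 2 * t := by omega
    rw [e, e2] at this
    exact this
  · have hj2 : j < k := by omega
    have := (h.2 j hj2).1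
    have e : 2 * j + 1 = t := by omega
    have e2 : 4 * j + 2 = 2 * t := by omega
    rw [e, e2] at this
    exact this

lemma pF_mono (k : ℕ) (l : ℕ →₀ ℕ) {i j : ℕ} (hij : i ≤ j) : pF k l j ≤ pF k l i := by
  unfold pF
  have : Finset.Ioc j (2 * k) ⊆ Finset.Ioc i (2 * k) := by
    intro t ht
    simp only [Finset.mem_Ioc] at *
    omega
  exact Nat.add_le_add_left (Finset.sum_le_sum_of_subset this) _

lemma pF_step (k : ℕ) (l : ℕ →₀ ℕ) {i : ℕ} (h1 : 1 ≤ i) (h2 : i ≤ 2 * k) :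
    pF k l (i - 1) = pF k l i + l i / i := by
  unfold pF
  rw [Ioc_insert i (2 * k) h1 h2, Finset.sum_insert (by simp)]
  ring

/-- sum of the backward parts is `N` -/
lemma pF_sum {k N : ℕ} {l : ℕ →₀ ℕ}
    (hsum : ∑ t ∈ Finset.range (2 * k + 1), l t = N) (hc : Cond k l) :
    ∑ i ∈ Finset.range (2 * k + 1), pF k l i = N := by
  unfold pF
  rw [Finset.sum_add_distrib, Finset.sum_const, Finset.card_range, tele3, smul_eq_mul]
  obtain ⟨Q, hQ1, hQ2⟩ := cond_div0 hc
  have e1 : (2 * k + 1) * (l 0 / (2 * k + 1)) = l 0 := by rw [hQ1, ← hQ2]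
  have e2 : ∀ t ∈ Finset.Icc 1 (2 * k), t * (l t / t) = l t := by
    intro t ht
    obtain ⟨h1, h2⟩ := Finset.mem_Icc.mp ht
    exact Nat.mul_div_cancel' (dvd_trans (Dvd.intro_left 2 rfl) (cond_dvd2t hc t h1 h2))
  rw [e1, Finset.sum_congr rfl e2]
  rw [range_eq_insert_Icc, Finset.sum_insert (by simp)] at hsum
  exact hsum

end



noncomputable section

def Psi (k N : ℕ) (l : ℕ →₀ ℕ)
    (hsum : ∑ t ∈ Finset.range (2 * k + 1), l t = N) (hc : Cond k l) :
    Nat.Partition N where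
  parts := Multiset.map (pF k l) (Multiset.range (2 * k + 1))
  parts_pos := by
    intro p hp
    rw [Multiset.mem_map] at hp
    obtain ⟨i, hi, rfl⟩ := hp
    obtain ⟨Q, hQ1, hQ2⟩ := cond_div0 hc
    have h3 : 0 < l 0 / (2 * k + 1) := by omega
    exact lt_of_lt_of_le h3 (Nat.le_add_right _ _)
  parts_sum := by
    have h : (Multiset.map (pF k l) (Multiset.range (2 * k + 1))).sum
        = ∑ i ∈ Finset.range (2 * k + 1), pF k l i := by
      rw [Finset.sum, Finset.range_val]
    rw [h]
    exact pF_sum hsum hc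

lemma Psi_parts (k N : ℕ) (l : ℕ →₀ ℕ) (hsum : ∑ t ∈ Finset.range (2 * k + 1), l t = N)
    (hc : Cond k l) :
    (Psi k N l hsum hc).parts = ↑((List.range (2 * k + 1)).map (pF k l)) := rfl

lemma backList_eq (k N : ℕ) (l : ℕ →₀ ℕ) (hsum : ∑ t ∈ Finset.range (2 * k + 1), l t = N)
    (hc : Cond k l) :
    Lc (Psi k N l hsum hc) = (List.range (2 * k + 1)).map (pF k l) := by
  set M := (List.range (2 * k + 1)).map (pF k l) with hM
  have hMsorted : M.Pairwise (· ≥ ·) := by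
    rw [hM, List.pairwise_map]
    exact (List.pairwise_lt_range).imp (fun {a b} h => pF_mono k l (le_of_lt h))
  have hrev : (M.reverse).Pairwise (· ≤ ·) := by
    rw [List.pairwise_reverse]
    exact hMsorted
  have hperm : (Multiset.sort ((M : Multiset ℕ)) (· ≤ ·)).Perm M.reverse := by
    have h2 : ((Multiset.sort ((M : Multiset ℕ)) (· ≤ ·) : List ℕ) : Multiset ℕ)
        = ↑M.reverse := by
      rw [Multiset.sort_eq, Multiset.coe_reverse]
    exact Multiset.coe_eq_coe.mp h2
  have h3 : Multiset.sort ((M : Multiset ℕ)) (· ≤ ·) = M.reverse :=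
    List.Perm.eq_of_pairwise' (Multiset.pairwise_sort _ _) hrev hperm
  rw [Lc, Psi_parts, h3, List.reverse_reverse]

lemma u_Psi (k N : ℕ) (l : ℕ →₀ ℕ) (hsum : ∑ t ∈ Finset.range (2 * k + 1), l t = N)
    (hc : Cond k l) (i : ℕ) (hi : i < 2 * k + 1) :
    u (Psi k N l hsum hc) i = pF k l i := by
  rw [u, backList_eq]
  have hlen : i < ((List.range (2 * k + 1)).map (pF k l)).length := by
    simpa using hi
  rw [List.getD_eq_getElem _ _ hlen, List.getElem_map, List.getElem_range]

lemma Phi_Psi (k N : ℕ) (l : ℕ →₀ ℕ) (hsum : ∑ t ∈ Finset.range (2 * k + 1), l t = N)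
    (hc : Cond k l) (hsupp : l.support ⊆ Finset.range (2 * k + 1)) :
    Phi k (Psi k N l hsum hc) = l := by
  ext i
  rw [Phi_apply]
  unfold g
  by_cases h0 : i = 0
  · subst h0
    rw [if_pos rfl, u_Psi k N l hsum hc (2 * k) (by omega)]
    have he : Finset.Ioc (2 * k) (2 * k) = ∅ := by simp
    unfold pF
    rw [he, Finset.sum_empty, add_zero]
    obtain ⟨Q, hQ1, hQ2⟩ := cond_div0 hc
    rw [hQ1]
    exact hQ2.symm
  · by_cases h1 : i ≤ 2 * k
    · rw [if_neg h0, if_pos h1, u_Psi k N l hsum hc (i - 1) (by omega),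
        u_Psi k N l hsum hc i (by omega), pF_step k l (by omega) h1,
        Nat.add_sub_cancel_left]
      have h2 : 2 * i ∣ l i := cond_dvd2t hc i (by omega) h1
      exact Nat.mul_div_cancel' (dvd_trans (Dvd.intro_left 2 rfl) h2)
    · rw [if_neg h0, if_neg h1]
      by_contra h
      have hm := hsupp (Finsupp.mem_support_iff.mpr (fun he => h he.symm))
      rw [Finset.mem_range] at hm
      omega

lemma Psi_Phi (k N : ℕ) (c : Nat.Partition N) (hc2 : Multiset.card c.parts = 2 * k + 1)
    (hsum : ∑ t ∈ Finset.range (2 * k + 1), (Phi k c) t = N) (hc : Cond k (Phi k c)) :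
    Psi k N (Phi k c) hsum hc = c := by
  have hlen : (Lc c).length = 2 * k + 1 := by rw [Lc_length, hc2]
  apply Nat.Partition.ext
  show Multiset.map (pF k (Phi k c)) (Multiset.range (2 * k + 1)) = c.parts
  rw [parts_eq_map c, hlen]
  apply Multiset.map_congr rfl
  intro i hi
  rw [Multiset.mem_range] at hi
  unfold pF
  have e0 : Phi k c 0 / (2 * k + 1) = u c (2 * k) := by
    rw [Phi_apply]
    unfold g
    rw [if_pos rfl]
    exact Nat.mul_div_cancel_left _ (by omega)
  have e1 : ∀ t ∈ Finset.Ioc i (2 * k), Phi k c t / t = u c (t - 1) - u c t := by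
    intro t ht
    obtain ⟨ht1, ht2⟩ := Finset.mem_Ioc.mp ht
    rw [Phi_apply]
    unfold g
    rw [if_neg (by omega), if_pos ht2]
    exact Nat.mul_div_cancel_left _ (by omega)
  rw [e0, Finset.sum_congr rfl e1]
  exact (tele2 (u c) (2 * k)
    (fun t ht => u_mono c (by omega) (by omega)) i (by omega)).symm

lemma Phi_sum (k N : ℕ) (c : Nat.Partition N) (hc2 : Multiset.card c.parts = 2 * k + 1) :
    ∑ t ∈ Finset.range (2 * k + 1), (Phi k c) t = N := by
  have hlen : (Lc c).length = 2 * k + 1 := by rw [Lc_length, hc2]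
  have e : ∀ t, (Phi k c) t = g k c t := fun t => Phi_apply k c t
  rw [Finset.sum_congr rfl (fun t _ => e t), Finset.sum_range_succ']
  have e2 : ∀ i ∈ Finset.range (2 * k), g k c (i + 1) = (i + 1) * (u c i - u c (i + 1)) := by
    intro i hi
    rw [Finset.mem_range] at hi
    unfold g
    rw [if_neg (by omega), if_pos (by omega)]
    simp
  have e3 : g k c 0 = (2 * k + 1) * u c (2 * k) := by unfold g; rw [if_pos rfl]
  rw [Finset.sum_congr rfl e2, e3,
    tele1 (u c) (2 * k) (fun i hi => u_mono c (by omega) (by rw [hlen]; omega))]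
  rw [← hlen]
  exact sum_u c

lemma Phi_cond (k N : ℕ) (c : Nat.Partition N) (hc1 : ∀ p ∈ c.parts, Odd p)
    (hc2 : Multiset.card c.parts = 2 * k + 1) : Cond k (Phi k c) := by
  have hlen : (Lc c).length = 2 * k + 1 := by rw [Lc_length, hc2]
  constructor
  · rw [Phi_apply]
    unfold g
    rw [if_pos rfl]
    obtain ⟨f, hf⟩ := hc1 _ (u_mem c (by omega : 2 * k < (Lc c).length))
    rw [hf, show (2 * k + 1) * (2 * f + 1) = 2 * k + 1 + (4 * k + 2) * f by ring,
      Nat.add_mul_mod_self_left, Nat.mod_eq_of_lt (by omega)]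
  · intro j hj
    obtain ⟨a, ha⟩ := hc1 _ (u_mem c (by omega : 2 * j < (Lc c).length))
    obtain ⟨b, hb⟩ := hc1 _ (u_mem c (by omega : 2 * j + 1 < (Lc c).length))
    obtain ⟨e, he⟩ := hc1 _ (u_mem c (by omega : 2 * j + 2 < (Lc c).length))
    have m1 : u c (2 * j + 1) ≤ u c (2 * j) := u_mono c (by omega) (by omega)
    have m2 : u c (2 * j + 2) ≤ u c (2 * j + 1) := u_mono c (by omega) (by omega)
    constructor
    · rw [Phi_apply]
      unfold g
      rw [if_neg (by omega), if_pos (by omega)]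
      refine ⟨a - b, ?_⟩
      rw [show 2 * j + 1 - 1 = 2 * j by omega,
        show (4 * j + 2) * (a - b) = (2 * j + 1) * (2 * (a - b)) by ring]
      have h5 : u c (2 * j) - u c (2 * j + 1) = 2 * (a - b) := by omega
      rw [h5]
    · rw [Phi_apply]
      unfold g
      rw [if_neg (by omega), if_pos (by omega)]
      refine ⟨b - e, ?_⟩
      rw [show 2 * j + 2 - 1 = 2 * j + 1 by omega,
        show (4 * j + 4) * (b - e) = (2 * j + 2) * (2 * (b - e)) by ring]
      have h5 : u c (2 * j + 1) - u c (2 * j + 2) = 2 * (b - e) := by omega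
      rw [h5]

end


lemma pF_odd {k : ℕ} {l : ℕ →₀ ℕ} (hc : Cond k l) (i : ℕ) : Odd (pF k l i) := by
  obtain ⟨Q, hQ1, hQ2⟩ := cond_div0 hc
  have h2 : 2 ∣ ∑ t ∈ Finset.Ioc i (2 * k), l t / t := by
    refine Finset.dvd_sum ?_
    intro t ht
    obtain ⟨ht1, ht2⟩ := Finset.mem_Ioc.mp ht
    obtain ⟨d, hd⟩ := cond_dvd2t hc t (by omega) ht2
    refine ⟨d, ?_⟩
    rw [show 2 * t * d = t * (2 * d) by ring] at hd
    rw [hd, Nat.mul_div_cancel_left _ (by omega)]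
  obtain ⟨m, hm⟩ := h2
  refine ⟨Q + m, ?_⟩
  unfold pF
  rw [hQ1]
  omega

lemma weight_eq (k N : ℕ) (c : Nat.Partition N) (hc1 : ∀ p ∈ c.parts, Odd p)
    (hc2 : Multiset.card c.parts = 2 * k + 1) :
    (wtOdd c : ℚ) = ∏ i ∈ Finset.range (2 * k + 1),
      PowerSeries.coeff ((Phi k c) i) (P k i) := by
  have hlen : (Lc c).length = 2 * k + 1 := by rw [Lc_length, hc2]
  have hcond := Phi_cond k N c hc1 hc2
  rw [prod_split (fun i => PowerSeries.coeff ((Phi k c) i) (P k i)) k]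
  have c0 : PowerSeries.coeff ((Phi k c) 0) (P k 0) = 1 := by
    rw [P_zero]
    simp [pser, PowerSeries.coeff_mk, hcond.1]
  have cpair : ∀ j ∈ Finset.range k,
      (PowerSeries.coeff ((Phi k c) (2 * j + 1)) (P k (2 * j + 1)) *
        PowerSeries.coeff ((Phi k c) (2 * j + 2)) (P k (2 * j + 2)))
      = ((w ((Phi k c) (2 * j + 1) / (4 * j + 2)) : ℕ) : ℚ) := by
    intro j hj
    have hj' := Finset.mem_range.mp hj
    rw [P_odd, P_even]
    have d1 := (hcond.2 j hj').1
    have d2 := (hcond.2 j hj').2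
    simp [wser, geom, PowerSeries.coeff_mk, d1, d2]
  rw [c0, one_mul, Finset.prod_congr rfl cpair, ← Nat.cast_prod, Nat.cast_inj]
  -- now a ℕ identity
  have hE : ∀ j, j < k → ∀ a b : ℕ, u c (2 * j) = 2 * a + 1 → u c (2 * j + 1) = 2 * b + 1 →
      (Phi k c) (2 * j + 1) / (4 * j + 2) = a - b := by
    intro j hj a b ha hb
    have m1 : u c (2 * j + 1) ≤ u c (2 * j) := u_mono c (by omega) (by rw [hlen]; omega)
    rw [Phi_apply]
    unfold g
    rw [if_neg (by omega), if_pos (by omega), show 2 * j + 1 - 1 = 2 * j by omega]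
    have h5 : u c (2 * j) - u c (2 * j + 1) = 2 * (a - b) := by omega
    rw [h5, show (2 * j + 1) * (2 * (a - b)) = (4 * j + 2) * (a - b) by ring,
      Nat.mul_div_cancel_left _ (by omega)]
  have hwt0 : wtOdd c = if (Lc c).length % 2 = 1 then
      3 ^ ((Finset.range (((Lc c).length - 1) / 2)).filter
            (fun j => (Lc c).getD (2 * j) 0 = (Lc c).getD (2 * j + 1) 0 + 2)).card *
        4 ^ ((Finset.range (((Lc c).length - 1) / 2)).filter
            (fun j => (Lc c).getD (2 * j + 1) 0 + 4 ≤ (Lc c).getD (2 * j) 0)).card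
    else
      3 ^ ((Finset.range ((Lc c).length / 2 - 1)).filter
            (fun j => (Lc c).getD (2 * j + 1) 0 = (Lc c).getD (2 * j + 2) 0 + 2)).card *
        4 ^ ((Finset.range ((Lc c).length / 2 - 1)).filter
            (fun j => (Lc c).getD (2 * j + 2) 0 + 4 ≤ (Lc c).getD (2 * j + 1) 0)).card := rfl
  rw [hwt0, hlen, if_pos (by omega : (2 * k + 1) % 2 = 1),
    show (2 * k + 1 - 1) / 2 = k by omega]
  rw [prod_w (Finset.range k) (fun j => (Phi k c) (2 * j + 1) / (4 * j + 2))]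
  have hfa : (Finset.range k).filter
        (fun j => (Lc c).getD (2 * j) 0 = (Lc c).getD (2 * j + 1) 0 + 2)
      = (Finset.range k).filter
        (fun j => (Phi k c) (2 * j + 1) / (4 * j + 2) = 1) := by
    refine Finset.filter_congr ?_
    intro j hj
    have hj' := Finset.mem_range.mp hj
    obtain ⟨a, ha⟩ := hc1 _ (u_mem c (by rw [hlen]; omega : 2 * j < (Lc c).length))
    obtain ⟨b, hb⟩ := hc1 _ (u_mem c (by rw [hlen]; omega : 2 * j + 1 < (Lc c).length))
    rw [hE j hj' a b ha hb]
    show u c (2 * j) = u c (2 * j + 1) + 2 ↔ a - b = 1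
    rw [ha, hb]
    have m1 : u c (2 * j + 1) ≤ u c (2 * j) := u_mono c (by omega) (by rw [hlen]; omega)
    rw [ha, hb] at m1
    omega
  have hfb : (Finset.range k).filter
        (fun j => (Lc c).getD (2 * j + 1) 0 + 4 ≤ (Lc c).getD (2 * j) 0)
      = (Finset.range k).filter
        (fun j => 2 ≤ (Phi k c) (2 * j + 1) / (4 * j + 2)) := by
    refine Finset.filter_congr ?_
    intro j hj
    have hj' := Finset.mem_range.mp hj
    obtain ⟨a, ha⟩ := hc1 _ (u_mem c (by rw [hlen]; omega : 2 * j < (Lc c).length))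
    obtain ⟨b, hb⟩ := hc1 _ (u_mem c (by rw [hlen]; omega : 2 * j + 1 < (Lc c).length))
    rw [hE j hj' a b ha hb]
    show u c (2 * j + 1) + 4 ≤ u c (2 * j) ↔ 2 ≤ a - b
    rw [ha, hb]
    omega
  rw [hfa, hfb]

lemma main (k N : ℕ) :
    ((∑ c ∈ Finset.univ.filter
        (fun c : Nat.Partition N =>
          (∀ p ∈ c.parts, Odd p) ∧ Multiset.card c.parts = 2 * k + 1),
        wtOdd c : ℕ) : ℚ)
      = ∑ l ∈ (Finset.range (2 * k + 1)).finsuppAntidiag N,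
          ∏ i ∈ Finset.range (2 * k + 1), PowerSeries.coeff (l i) (P k i) := by
  have hvanish : ∀ l ∈ (Finset.range (2 * k + 1)).finsuppAntidiag N,
      (∏ i ∈ Finset.range (2 * k + 1), PowerSeries.coeff (l i) (P k i)) ≠ 0 →
      Cond k l := by
    intro l _ hne
    constructor
    · by_contra h
      apply hne
      refine Finset.prod_eq_zero (Finset.mem_range.mpr (by omega : 0 < 2 * k + 1)) ?_
      rw [P_zero]
      simp [pser, PowerSeries.coeff_mk, h]
    · intro j hj
      constructor
      · by_contra h
        apply hne
        refine Finset.prod_eq_zero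
          (Finset.mem_range.mpr (by omega : 2 * j + 1 < 2 * k + 1)) ?_
        rw [P_odd]
        simp [wser, PowerSeries.coeff_mk, h]
      · by_contra h
        apply hne
        refine Finset.prod_eq_zero
          (Finset.mem_range.mpr (by omega : 2 * j + 2 < 2 * k + 1)) ?_
        rw [P_even]
        simp [geom, PowerSeries.coeff_mk, h]
  rw [← Finset.sum_filter_of_ne hvanish, Nat.cast_sum]
  refine Finset.sum_bij' (fun c _ => Phi k c)
    (fun l hl => Psi k N l (Finset.mem_finsuppAntidiag.mp (Finset.mem_filter.mp hl).1).1
      (Finset.mem_filter.mp hl).2) ?_ ?_ ?_ ?_ ?_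
  · intro c hc
    obtain ⟨-, hc1, hc2⟩ := Finset.mem_filter.mp hc
    refine Finset.mem_filter.mpr ⟨Finset.mem_finsuppAntidiag.mpr
      ⟨Phi_sum k N c hc2, ?_⟩, Phi_cond k N c hc1 hc2⟩
    exact Finsupp.support_onFinset_subset
  · intro l hl
    refine Finset.mem_filter.mpr ⟨Finset.mem_univ _, ?_, ?_⟩
    · intro p hp
      rw [Psi_parts] at hp
      rw [Multiset.mem_coe, List.mem_map] at hp
      obtain ⟨i, _, rfl⟩ := hp
      exact pF_odd (Finset.mem_filter.mp hl).2 i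
    · rw [Psi_parts]
      simp
  · intro c hc
    obtain ⟨-, hc1, hc2⟩ := Finset.mem_filter.mp hc
    exact Psi_Phi k N c hc2 _ _
  · intro l hl
    exact Phi_Psi k N l _ _
      (Finset.mem_finsuppAntidiag.mp (Finset.mem_filter.mp hl).1).2
  · intro c hc
    obtain ⟨-, hc1, hc2⟩ := Finset.mem_filter.mp hc
    exact weight_eq k N c hc1 hc2

theorem stmt11 (k : ℕ) :
    lhs k =
      X ^ (2 * k + 1) * (1 - X ^ (4 * k + 2) : PowerSeries ℚ)⁻¹ *
        (∏ i ∈ Finset.Icc 1 k, (1 - X ^ (4 * i) : PowerSeries ℚ)⁻¹) *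
        ∏ j ∈ Finset.Icc 1 k,
          (1 + X ^ (4 * j - 2)) ^ 2 * (1 - X ^ (4 * j - 2) : PowerSeries ℚ)⁻¹ := by
  rw [rhs_eq k]
  ext N
  rw [PowerSeries.coeff_prod]
  simp only [lhs, PowerSeries.coeff_mk]
  exact main k N

end Stmt11
end
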